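/- arXiv:2512.23828 — 3 statements merged into one kernel-verified Lean document; each statement's English description precedes it below -/
import Mathlib

section
/- Let H be a target graph, possibly with loops. Suppose there is an ordering H^1, …, H^k of the automorphic similarity classes of H such that the associated automorphic similarity matrix M has the increasing columns property. Then H is Hoffman-London; that is, for every n ≥ 1 and every tree T on n vertices, hom(P_n, H) ≤ hom(T, H). -/
open Finset

/-! ### Generic helpers -/

lemma natCard_subtype_eq_sum {α : Type*} [Fintype α] (P : α → Prop) [DecidablePred P] :
    Nat.card {x : α // P x} = ∑ x : α, if P x then 1 else 0 := by
  rw [Nat.card_eq_fintype_card, Fintype.card_subtype, Finset.card_filter]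

/-- Abel-summation comparison: if all "tail sums" of `A` are dominated by those of `B`,
and `g` is monotone, then `∑ A j * g j ≤ ∑ B j * g j`. -/
lemma abel_compare (k : ℕ) (A B : ℕ → ℕ) (g : ℕ → ℕ) (hg : Monotone g)
    (hT : ∀ c : ℕ, ∑ j ∈ Finset.range k, (if c ≤ j then A j else 0)
        ≤ ∑ j ∈ Finset.range k, (if c ≤ j then B j else 0)) :
    ∑ j ∈ Finset.range k, A j * g j ≤ ∑ j ∈ Finset.range k, B j * g j := by
  set δ : ℕ → ℕ := fun c => Nat.rec (g 0) (fun c _ => g (c+1) - g c) c with hδdef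
  have hδ : ∀ j, g j = ∑ c ∈ Finset.range (j+1), δ c := by
    intro j
    induction j with
    | zero => simp [hδdef]
    | succ j ih =>
        have h2 : g j ≤ g (j+1) := hg (Nat.le_succ j)
        have h1 : δ (j+1) = g (j+1) - g j := rfl
        rw [Finset.sum_range_succ, ← ih, h1]
        omega
  have key : ∀ C : ℕ → ℕ, ∑ j ∈ Finset.range k, C j * g j
      = ∑ c ∈ Finset.range k, δ c * ∑ j ∈ Finset.range k, (if c ≤ j then C j else 0) := by
    intro C
    have h1 : ∀ j ∈ Finset.range k, C j * g j
        = ∑ c ∈ Finset.range k, (if c ≤ j then C j * δ c else 0) := by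
      intro j hj
      rw [Finset.mem_range] at hj
      have hst : (Finset.range k).filter (fun c => c ≤ j) = Finset.range (j+1) := by
        ext c
        simp only [Finset.mem_filter, Finset.mem_range]
        omega
      calc C j * g j = ∑ c ∈ Finset.range (j+1), C j * δ c := by
            rw [hδ j, Finset.mul_sum]
        _ = ∑ c ∈ (Finset.range k).filter (fun c => c ≤ j), C j * δ c := by rw [hst]
        _ = ∑ c ∈ Finset.range k, if c ≤ j then C j * δ c else 0 :=
            Finset.sum_filter _ _
    rw [Finset.sum_congr rfl h1, Finset.sum_comm]
    apply Finset.sum_congr rfl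
    intro c _
    rw [Finset.mul_sum]
    apply Finset.sum_congr rfl
    intro j _
    split <;> ring
  rw [key A, key B]
  apply Finset.sum_le_sum
  intro c _
  exact Nat.mul_le_mul_left _ (hT c)

/-! ### Rooted forests (first-child / next-sibling encoding) -/

/-- A forest: `nil` is the empty forest, `cons c rest` is the forest whose first tree
has children-forest `c`, followed by the forest `rest`. -/
inductive Fo : Type
  | nil : Fo
  | cons (c : Fo) (rest : Fo) : Fo
  deriving DecidableEq

namespace HL
open Classical

variable {VH : Type} [Fintype VH] (HAdj : VH → VH → Prop)

open Classical in
/-- Sum of `h` over the `HAdj`-neighbours of `v`. -/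
noncomputable def nbrSum (h : VH → ℕ) (v : VH) : ℕ := ∑ w : VH, if HAdj v w then h w else 0

/-- The number of homomorphisms of the tree with children-forest `t`, with the root
fixed at `v`. -/
noncomputable def hv : Fo → VH → ℕ
  | .nil => fun _ => 1
  | .cons c r => fun v => nbrSum HAdj (hv c) v * hv r v

/-- Total number of homomorphisms of the tree whose root has children-forest `t`. -/
noncomputable def homF (t : Fo) : ℕ := ∑ v : VH, hv HAdj t v

/-- Number of non-root vertices. -/
def sizeF : Fo → ℕ
  | .nil => 0
  | .cons c r => (1 + sizeF c) + sizeF r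

/-- children-forest of a path with `m+1` vertices. -/
def pathC : ℕ → Fo
  | 0 => .nil
  | (m+1) => .cons (pathC m) .nil

/-- Number of walks of length `m` in `H` starting at `v`. -/
noncomputable def W : ℕ → VH → ℕ
  | 0 => fun _ => 1
  | (m+1) => fun v => nbrSum HAdj (W m) v

lemma hv_pathC (m : ℕ) : hv HAdj (pathC m) = W HAdj m := by
  induction m with
  | zero => rfl
  | succ m ih =>
      funext v
      show nbrSum HAdj (hv HAdj (pathC m)) v * 1 = nbrSum HAdj (W HAdj m) v
      rw [ih, mul_one]

lemma sizeF_pathC (m : ℕ) : sizeF (pathC m) = m := by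
  induction m with
  | zero => rfl
  | succ m ih => show (1 + sizeF (pathC m)) + 0 = m + 1; omega

section Mono

variable {k : ℕ} {cls : VH → Fin k} (hsurj : Function.Surjective cls)
  {m : Fin k → Fin k → ℕ}
  (hm : ∀ (i j : Fin k) (v : VH), cls v = i →
      Nat.card {w : VH // HAdj v w ∧ cls w = j} = m i j)
  (hinc : ∀ (c i : Fin k) (hi : i.val + 1 < k),
      ∑ j : Fin k, (if c ≤ j then m i j else 0) ≤
      ∑ j : Fin k, (if c ≤ j then m ⟨i.val + 1, hi⟩ j else 0))

include hinc in
/-- Tail sums of the rows of `m` are monotone in the row index. -/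
lemma tail_mono (c : Fin k) : ∀ (d : ℕ) (i i' : Fin k), i'.val = i.val + d →
    ∑ j : Fin k, (if c ≤ j then m i j else 0) ≤
    ∑ j : Fin k, (if c ≤ j then m i' j else 0) := by
  intro d
  induction d with
  | zero =>
      intro i i' h
      have : i = i' := Fin.ext (by omega)
      rw [this]
  | succ d ih =>
      intro i i' h
      have hlt : i.val + d < k := by have := i'.isLt; omega
      have hlt2 : (⟨i.val + d, hlt⟩ : Fin k).val + 1 < k := by have := i'.isLt; simp; omega
      have step := hinc c ⟨i.val + d, hlt⟩ hlt2
      have : i' = ⟨(⟨i.val + d, hlt⟩ : Fin k).val + 1, hlt2⟩ := Fin.ext (by simp; omega)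
      rw [this]
      exact le_trans (ih i ⟨i.val + d, hlt⟩ rfl) step
include hsurj hm hinc in
/-- Key step: summing a class-monotone function over neighbourhoods is class-monotone. -/
lemma nbrSum_mono (h : VH → ℕ) (hmono : ∀ v u : VH, cls v ≤ cls u → h v ≤ h u) :
    ∀ v u : VH, cls v ≤ cls u → nbrSum HAdj h v ≤ nbrSum HAdj h u := by
  classical
  intro v u hle
  rcases Nat.eq_zero_or_pos k with hk | hk
  · exact ((hk ▸ cls v).elim0)
  set rep : Fin k → VH := Function.surjInv hsurj with hrepdef
  have hrep : ∀ j, cls (rep j) = j := fun j => Function.surjInv_eq hsurj j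
  have hinv : ∀ x y : VH, cls x = cls y → h x = h y := fun x y hxy =>
    le_antisymm (hmono _ _ hxy.le) (hmono _ _ hxy.ge)
  set g : ℕ → ℕ := fun j => h (rep ⟨min j (k-1), by omega⟩) with hgdef
  have hgmono : Monotone g := by
    intro a b hab
    apply hmono
    rw [hrep, hrep]
    exact Fin.mk_le_mk.mpr (by omega)
  have hgval : ∀ w : VH, h w = g (cls w).val := by
    intro w
    apply hinv
    rw [hrep]
    exact Fin.ext (by have := (cls w).isLt; simp; omega)
  have decomp : ∀ x : VH, nbrSum HAdj h x
      = ∑ j ∈ Finset.range k, (if hj : j < k then m (cls x) ⟨j, hj⟩ else 0) * g j := by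
    intro x
    rw [nbrSum]
    calc ∑ w : VH, ite (HAdj x w) (h w) 0
        = ∑ w : VH, ite (HAdj x w) (g (cls w).val) 0 :=
          Finset.sum_congr rfl (fun w _ => by rw [hgval w])
      _ = ∑ j ∈ Finset.range k, ∑ w ∈ Finset.univ.filter (fun w => (cls w).val = j),
            ite (HAdj x w) (g (cls w).val) 0 :=
          (Finset.sum_fiberwise_of_maps_to (fun w _ => Finset.mem_range.mpr (cls w).isLt) _).symm
      _ = ∑ j ∈ Finset.range k, (if hj : j < k then m (cls x) ⟨j, hj⟩ else 0) * g j := by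
          apply Finset.sum_congr rfl
          intro j hj
          rw [Finset.mem_range] at hj
          rw [dif_pos hj]
          calc ∑ w ∈ Finset.univ.filter (fun w => (cls w).val = j),
                ite (HAdj x w) (g (cls w).val) 0
              = ∑ w ∈ Finset.univ.filter (fun w => (cls w).val = j),
                (ite (HAdj x w) 1 0) * g j := by
                apply Finset.sum_congr rfl
                intro w hw
                simp only [Finset.mem_filter, Finset.mem_univ, true_and] at hw
                rw [hw]
                split <;> simp
            _ = (∑ w ∈ Finset.univ.filter (fun w => (cls w).val = j),
                  ite (HAdj x w) 1 0) * g j := by rw [Finset.sum_mul]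
            _ = m (cls x) ⟨j, hj⟩ * g j := by
                congr 1
                rw [Finset.sum_filter]
                have : ∀ w : VH, (if (cls w).val = j then (ite (HAdj x w) 1 0 : ℕ) else 0)
                    = ite (HAdj x w ∧ cls w = ⟨j, hj⟩) 1 0 := by
                  intro w
                  by_cases hq : HAdj x w <;> by_cases hp : (cls w).val = j <;>
                    simp [hq, hp, Fin.ext_iff]
                rw [Finset.sum_congr rfl (fun w _ => this w), ← natCard_subtype_eq_sum]
                exact hm _ _ x rfl
  rw [decomp v, decomp u]
  apply abel_compare k _ _ g hgmono
  intro c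
  by_cases hc : c < k
  · have t1 : ∀ (i : Fin k), (∑ j ∈ Finset.range k,
        if c ≤ j then (if hj : j < k then m i ⟨j, hj⟩ else 0) else 0)
        = ∑ j : Fin k, (if (⟨c, hc⟩ : Fin k) ≤ j then m i j else 0) := by
      intro i
      rw [← Fin.sum_univ_eq_sum_range
        (fun j => if c ≤ j then (if hj : j < k then m i ⟨j, hj⟩ else 0) else 0) k]
      apply Finset.sum_congr rfl
      intro j _
      rw [dif_pos j.isLt]
      by_cases hcj : c ≤ j.val
      · rw [if_pos hcj, if_pos (by exact hcj)]
      · rw [if_neg hcj, if_neg (by exact hcj)]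
    rw [t1, t1]
    exact tail_mono hinc ⟨c, hc⟩ ((cls u).val - (cls v).val) (cls v) (cls u)
      (by have := (Fin.le_def.mp hle); omega)
  · have z : ∀ (i : Fin k), (∑ j ∈ Finset.range k,
        if c ≤ j then (if hj : j < k then m i ⟨j, hj⟩ else 0) else 0) = 0 := by
      intro i
      apply Finset.sum_eq_zero
      intro j hj
      rw [Finset.mem_range] at hj
      rw [if_neg (by omega)]
    rw [z, z]

include hsurj hm hinc in
/-- Root-counts of trees are monotone along the class ordering. -/
lemma hv_mono : ∀ (t : Fo) (v u : VH), cls v ≤ cls u → hv HAdj t v ≤ hv HAdj t u := by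
  intro t
  induction t with
  | nil => intro v u _; exact le_refl 1
  | cons c r ihc ihr =>
      intro v u hle
      exact Nat.mul_le_mul (nbrSum_mono HAdj hsurj hm hinc _ ihc v u hle) (ihr v u hle)

end Mono

section Slide

open Classical in
/-- Number of walks of length `a` from `v` to `u`. -/
noncomputable def wc : ℕ → VH → VH → ℕ
  | 0 => fun v u => if v = u then 1 else 0
  | (a+1) => fun v u => nbrSum HAdj (fun w => wc a w u) v

lemma nbrSum_boole (h : VH → ℕ) (v : VH) :
    nbrSum HAdj h v = ∑ w : VH, (if HAdj v w then 1 else 0) * h w := by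
  classical
  rw [nbrSum]
  exact Finset.sum_congr rfl fun w _ => by split <;> simp

variable {HAdj} (hsymm : Symmetric HAdj)

include hsymm in
lemma wc_succ_right : ∀ (a : ℕ) (v u : VH),
    wc HAdj (a+1) v u = ∑ w : VH, (if HAdj u w then 1 else 0) * wc HAdj a v w := by
  classical
  intro a
  induction a with
  | zero =>
      intro v u
      show nbrSum HAdj (fun w => wc HAdj 0 w u) v = _
      rw [nbrSum_boole]
      have l : ∀ w, ((if HAdj v w then 1 else 0) : ℕ) * wc HAdj 0 w u
          = if w = u then (if HAdj v w then 1 else 0) else 0 := by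
        intro w
        show ((if HAdj v w then 1 else 0) : ℕ) * (if w = u then 1 else 0) = _
        split <;> simp
      rw [Finset.sum_congr rfl fun w _ => l w, Finset.sum_ite_eq' Finset.univ u
        (fun w => if HAdj v w then 1 else 0)]
      have r : ∀ w, ((if HAdj u w then 1 else 0) : ℕ) * wc HAdj 0 v w
          = if w = v then (if HAdj u w then 1 else 0) else 0 := by
        intro w
        show ((if HAdj u w then 1 else 0) : ℕ) * (if v = w then 1 else 0) = _
        by_cases h : v = w <;> simp [h, eq_comm]
      rw [Finset.sum_congr rfl fun w _ => r w, Finset.sum_ite_eq' Finset.univ v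
        (fun w => if HAdj u w then 1 else 0)]
      simp only [Finset.mem_univ, if_true]
      have : HAdj v u ↔ HAdj u v := ⟨fun h => hsymm h, fun h => hsymm h⟩
      simp [this]
  | succ a ih =>
      intro v u
      show nbrSum HAdj (fun w => wc HAdj (a+1) w u) v = _
      rw [nbrSum_boole]
      calc ∑ w : VH, (if HAdj v w then 1 else 0) * wc HAdj (a+1) w u
          = ∑ w : VH, ∑ x : VH, (if HAdj v w then 1 else 0) *
              ((if HAdj u x then 1 else 0) * wc HAdj a w x) := by
            apply Finset.sum_congr rfl
            intro w _
            rw [ih w u, Finset.mul_sum]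
        _ = ∑ x : VH, (if HAdj u x then 1 else 0) *
              ∑ w : VH, (if HAdj v w then 1 else 0) * wc HAdj a w x := by
            rw [Finset.sum_comm]
            apply Finset.sum_congr rfl
            intro x _
            rw [Finset.mul_sum]
            apply Finset.sum_congr rfl
            intro w _
            ring
        _ = ∑ x : VH, (if HAdj u x then 1 else 0) * wc HAdj (a+1) v x := by
            apply Finset.sum_congr rfl
            intro x _
            congr 1
            show _ = nbrSum HAdj (fun w => wc HAdj a w x) v
            rw [nbrSum_boole]

include hsymm in
lemma wc_symm : ∀ (a : ℕ) (v u : VH), wc HAdj a v u = wc HAdj a u v := by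
  classical
  intro a
  induction a with
  | zero => intro v u; show (if v = u then 1 else 0) = (if u = v then 1 else 0); simp [eq_comm]
  | succ a ih =>
      intro v u
      rw [wc_succ_right hsymm a u v]
      show nbrSum HAdj (fun w => wc HAdj a w u) v = _
      rw [nbrSum_boole]
      apply Finset.sum_congr rfl
      intro w _
      rw [ih w u]

lemma W_decomp : ∀ (a b : ℕ) (v : VH), W HAdj (a+b) v = ∑ u : VH, wc HAdj a v u * W HAdj b u := by
  classical
  intro a
  induction a with
  | zero =>
      intro b v
      have : ∀ u : VH, wc HAdj 0 v u * W HAdj b u = if u = v then W HAdj b u else 0 := by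
        intro u
        show (if v = u then (1:ℕ) else 0) * W HAdj b u = _
        by_cases h : v = u <;> simp [h, eq_comm]
      rw [Finset.sum_congr rfl fun u _ => this u, Finset.sum_ite_eq' Finset.univ v (W HAdj b)]
      simp [Nat.zero_add]
  | succ a ih =>
      intro b v
      have h1 : (a+1)+b = (a+b)+1 := by omega
      rw [h1]
      show nbrSum HAdj (W HAdj (a+b)) v = _
      rw [nbrSum_boole]
      calc ∑ w : VH, (if HAdj v w then 1 else 0) * W HAdj (a+b) w
          = ∑ w : VH, ∑ u : VH, (if HAdj v w then 1 else 0) * (wc HAdj a w u * W HAdj b u) := by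
            apply Finset.sum_congr rfl
            intro w _
            rw [ih b w, Finset.mul_sum]
        _ = ∑ u : VH, (∑ w : VH, (if HAdj v w then 1 else 0) * wc HAdj a w u) * W HAdj b u := by
            rw [Finset.sum_comm]
            apply Finset.sum_congr rfl
            intro u _
            rw [Finset.sum_mul]
            apply Finset.sum_congr rfl
            intro w _
            ring
        _ = ∑ u : VH, wc HAdj (a+1) v u * W HAdj b u := by
            apply Finset.sum_congr rfl
            intro u _
            congr 1
            show _ = nbrSum HAdj (fun w => wc HAdj a w u) v
            rw [nbrSum_boole]

lemma W_eq_sum_wc (a : ℕ) (v : VH) : W HAdj a v = ∑ u : VH, wc HAdj a v u := by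
  have := W_decomp (HAdj := HAdj) a 0 v
  rw [Nat.add_zero] at this
  rw [this]
  apply Finset.sum_congr rfl
  intro u _
  show wc HAdj a v u * W HAdj 0 u = _
  show wc HAdj a v u * 1 = _
  rw [mul_one]

include hsymm in
lemma slide_sum (m1 m2 : ℕ) (x : VH → ℕ)
    (hco : ∀ v u : VH, (x v ≤ x u ∧ W HAdj m2 v ≤ W HAdj m2 u)
      ∨ (x u ≤ x v ∧ W HAdj m2 u ≤ W HAdj m2 v)) :
    ∑ v : VH, W HAdj (m1+m2) v * x v ≤ ∑ v : VH, W HAdj m1 v * (W HAdj m2 v * x v) := by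
  classical
  set q : VH → VH → ℕ := wc HAdj m1 with hq
  have LHSeq : ∑ v : VH, W HAdj (m1+m2) v * x v
      = ∑ v : VH, ∑ u : VH, q v u * (W HAdj m2 u * x v) := by
    apply Finset.sum_congr rfl
    intro v _
    rw [W_decomp m1 m2 v, Finset.sum_mul]
    apply Finset.sum_congr rfl
    intro u _
    ring
  have RHSeq : ∑ v : VH, W HAdj m1 v * (W HAdj m2 v * x v)
      = ∑ v : VH, ∑ u : VH, q v u * (W HAdj m2 v * x v) := by
    apply Finset.sum_congr rfl
    intro v _
    rw [W_eq_sum_wc m1 v, Finset.sum_mul]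
  have swapL : ∑ v : VH, ∑ u : VH, q v u * (W HAdj m2 u * x v)
      = ∑ v : VH, ∑ u : VH, q v u * (W HAdj m2 v * x u) := by
    rw [Finset.sum_comm]
    apply Finset.sum_congr rfl
    intro v _
    apply Finset.sum_congr rfl
    intro u _
    rw [show q u v = q v u from wc_symm hsymm m1 u v]
  have swapR : ∑ v : VH, ∑ u : VH, q v u * (W HAdj m2 v * x v)
      = ∑ v : VH, ∑ u : VH, q v u * (W HAdj m2 u * x u) := by
    rw [Finset.sum_comm]
    apply Finset.sum_congr rfl
    intro v _
    apply Finset.sum_congr rfl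
    intro u _
    rw [show q u v = q v u from wc_symm hsymm m1 u v]
  have double : (∑ v : VH, ∑ u : VH, q v u * (W HAdj m2 u * x v))
      + (∑ v : VH, ∑ u : VH, q v u * (W HAdj m2 u * x v))
      ≤ (∑ v : VH, ∑ u : VH, q v u * (W HAdj m2 v * x v))
      + (∑ v : VH, ∑ u : VH, q v u * (W HAdj m2 v * x v)) := by
    nth_rewrite 2 [swapL]
    nth_rewrite 2 [swapR]
    rw [← Finset.sum_add_distrib, ← Finset.sum_add_distrib]
    apply Finset.sum_le_sum
    intro v _
    rw [← Finset.sum_add_distrib, ← Finset.sum_add_distrib]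
    apply Finset.sum_le_sum
    intro u _
    rw [← Nat.mul_add, ← Nat.mul_add]
    apply Nat.mul_le_mul_left
    rcases hco v u with ⟨hx, hw⟩ | ⟨hx, hw⟩
    · have := mul_add_mul_le_mul_add_mul hw hx
      -- a = W m2 v, b = W m2 u, c = x v, d = x u : a*d + b*c ≤ a*c + b*d
      omega
    · have := mul_add_mul_le_mul_add_mul hw hx
      omega
  rw [LHSeq, RHSeq]
  omega

end Slide

/-! ### Forest surgery -/

def app : Fo → Fo → Fo
  | .nil, b => b
  | .cons c r, b => .cons c (app r b)

def ntrees : Fo → ℕ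
  | .nil => 0
  | .cons _ r => 1 + ntrees r

def Lf : Fo → ℕ
  | .nil => 0
  | .cons c r => (if c = Fo.nil then 1 else Lf c) + Lf r

def Ltop (t : Fo) : ℕ := Lf t + (if ntrees t ≤ 1 then 1 else 0)

def TP (t : Fo) : Prop := t = pathC (sizeF t)

def AllP : Fo → Prop
  | .nil => True
  | .cons c r => TP c ∧ AllP r

lemma TP_nil : TP Fo.nil := rfl

lemma hv_app (x y : Fo) (v : VH) : hv HAdj (app x y) v = hv HAdj x v * hv HAdj y v := by
  induction x generalizing v with
  | nil => simp [app, hv]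
  | cons c r _ ihr => simp [app, hv, ihr]; ring

lemma sizeF_app (x y : Fo) : sizeF (app x y) = sizeF x + sizeF y := by
  induction x with
  | nil => simp [app, sizeF]
  | cons c r _ ihr => simp [app, sizeF, ihr]; ring

lemma Lf_app (x y : Fo) : Lf (app x y) = Lf x + Lf y := by
  induction x with
  | nil => simp [app, Lf]
  | cons c r _ ihr => simp [app, Lf, ihr]; ring

lemma ntrees_app (x y : Fo) : ntrees (app x y) = ntrees x + ntrees y := by
  induction x with
  | nil => simp [app, ntrees]
  | cons c r _ ihr => simp [app, ntrees, ihr]; ring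

lemma Lf_pos (t : Fo) (h : t ≠ Fo.nil) : 1 ≤ Lf t := by
  induction t with
  | nil => exact absurd rfl h
  | cons c r ihc _ =>
      show 1 ≤ (if c = Fo.nil then 1 else Lf c) + Lf r
      by_cases hc : c = Fo.nil
      · simp [hc]
      · have := ihc hc
        simp [hc]
        omega

lemma ntrees_eq_zero (t : Fo) : ntrees t = 0 ↔ t = Fo.nil := by
  cases t <;> simp [ntrees]

lemma find_nonpath (t : Fo) : AllP t ∨ ∃ x d y, t = app x (.cons d y) ∧ ¬ TP d := by
  induction t with
  | nil => left; trivial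
  | cons c r _ ihr =>
      by_cases hc : TP c
      · rcases ihr with hall | ⟨x, d, y, hxy, hd⟩
        · left; exact ⟨hc, hall⟩
        · right
          exact ⟨.cons c x, d, y, by rw [hxy]; rfl, hd⟩
      · right
        exact ⟨.nil, c, r, rfl, hc⟩

section Reroot
variable {HAdj} (hsymm : Symmetric HAdj)

include hsymm in
lemma reroot (c us : Fo) : homF HAdj (.cons c us) = homF HAdj (.cons us c) := by
  classical
  show ∑ v : VH, nbrSum HAdj (hv HAdj c) v * hv HAdj us v
    = ∑ v : VH, nbrSum HAdj (hv HAdj us) v * hv HAdj c v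
  calc ∑ v : VH, nbrSum HAdj (hv HAdj c) v * hv HAdj us v
      = ∑ v : VH, ∑ w : VH, ((if HAdj v w then 1 else 0) * hv HAdj c w) * hv HAdj us v := by
        apply Finset.sum_congr rfl
        intro v _
        rw [nbrSum_boole, Finset.sum_mul]
    _ = ∑ w : VH, ∑ v : VH, ((if HAdj w v then 1 else 0) * hv HAdj us v) * hv HAdj c w := by
        rw [Finset.sum_comm]
        apply Finset.sum_congr rfl
        intro w _
        apply Finset.sum_congr rfl
        intro v _
        have : HAdj v w ↔ HAdj w v := ⟨fun h => hsymm h, fun h => hsymm h⟩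
        simp only [this]
        ring
    _ = ∑ w : VH, nbrSum HAdj (hv HAdj us) w * hv HAdj c w := by
        apply Finset.sum_congr rfl
        intro w _
        rw [nbrSum_boole, Finset.sum_mul]

end Reroot

lemma Ltop_reroot (c us : Fo) : Ltop (.cons c us) = Ltop (.cons us c) := by
  show Lf (.cons c us) + _ = Lf (.cons us c) + _
  show ((if c = Fo.nil then 1 else Lf c) + Lf us) + (if ntrees (Fo.cons c us) ≤ 1 then 1 else 0)
    = ((if us = Fo.nil then 1 else Lf us) + Lf c) + (if ntrees (Fo.cons us c) ≤ 1 then 1 else 0)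
  have h1 : ntrees (Fo.cons c us) = 1 + ntrees us := rfl
  have h2 : ntrees (Fo.cons us c) = 1 + ntrees c := rfl
  rw [h1, h2]
  by_cases hc : c = Fo.nil <;> by_cases hus : us = Fo.nil
  · simp [hc, hus]
  · have := Lf_pos us hus
    have hn : ¬ (ntrees us = 0) := by rw [ntrees_eq_zero]; exact hus
    simp [hc, hus, Lf, ntrees]
    split_ifs <;> omega
  · have := Lf_pos c hc
    have hn : ¬ (ntrees c = 0) := by rw [ntrees_eq_zero]; exact hc
    simp [hc, hus, Lf, ntrees]
    split_ifs <;> omega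
  · have hnc : ¬ (ntrees c = 0) := by rw [ntrees_eq_zero]; exact hc
    have hnus : ¬ (ntrees us = 0) := by rw [ntrees_eq_zero]; exact hus
    split_ifs <;> omega

lemma sizeF_reroot (c us : Fo) : sizeF (.cons c us) = sizeF (.cons us c) := by
  show (1 + sizeF c) + sizeF us = (1 + sizeF us) + sizeF c
  ring

lemma hv_extract (x e y z : Fo) (v : VH) :
    hv HAdj (.cons z (app x (.cons e y))) v = hv HAdj (.cons e (app x (.cons z y))) v := by
  simp [hv, hv_app]
  ring

lemma sizeF_extract (x e y z : Fo) :
    sizeF (.cons z (app x (.cons e y))) = sizeF (.cons e (app x (.cons z y))) := by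
  simp [sizeF, sizeF_app]
  ring

lemma Lf_extract (x e y z : Fo) :
    Lf (.cons z (app x (.cons e y))) = Lf (.cons e (app x (.cons z y))) := by
  simp only [Lf, Lf_app]
  split_ifs <;> first | rfl | omega

lemma ntrees_extract (x e y z : Fo) :
    ntrees (.cons z (app x (.cons e y))) = ntrees (.cons e (app x (.cons z y))) := by
  simp only [ntrees, ntrees_app]
  try omega

lemma Ltop_extract (x e y z : Fo) :
    Ltop (.cons z (app x (.cons e y))) = Ltop (.cons e (app x (.cons z y))) := by
  rw [Ltop, Ltop, Lf_extract, ntrees_extract]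

lemma TP_cons_nil {c : Fo} (h : TP c) : TP (Fo.cons c Fo.nil) := by
  show Fo.cons c Fo.nil = pathC (sizeF (Fo.cons c Fo.nil))
  have hs : sizeF (Fo.cons c Fo.nil) = sizeF c + 1 := by
    show (1 + sizeF c) + 0 = _
    omega
  rw [hs]
  show Fo.cons c Fo.nil = Fo.cons (pathC (sizeF c)) Fo.nil
  rw [← h]

lemma tval_pathC (mm : ℕ) : (if pathC mm = Fo.nil then 1 else Lf (pathC mm)) = 1 := by
  induction mm with
  | zero => simp [pathC]
  | succ mm ih =>
      have hne : pathC (mm+1) ≠ Fo.nil := by simp [pathC]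
      rw [if_neg hne]
      show (if pathC mm = Fo.nil then 1 else Lf (pathC mm)) + Lf Fo.nil = 1
      rw [ih]
      rfl

lemma hv_extract0 (x e y : Fo) (v : VH) :
    hv HAdj (app x (.cons e y)) v = hv HAdj (.cons e (app x y)) v := by
  simp [hv, hv_app]
  ring

lemma sizeF_extract0 (x e y : Fo) :
    sizeF (app x (.cons e y)) = sizeF (.cons e (app x y)) := by
  simp only [sizeF, sizeF_app]
  ring

lemma Lf_extract0 (x e y : Fo) : Lf (app x (.cons e y)) = Lf (.cons e (app x y)) := by
  simp only [Lf, Lf_app]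
  split_ifs <;> first | rfl | omega

lemma ntrees_extract0 (x e y : Fo) : ntrees (app x (.cons e y)) = ntrees (.cons e (app x y)) := by
  simp only [ntrees, ntrees_app]
  try omega

lemma Ltop_extract0 (x e y : Fo) : Ltop (app x (.cons e y)) = Ltop (.cons e (app x y)) := by
  rw [Ltop, Ltop, Lf_extract0, ntrees_extract0]

section Main
variable {HAdj} (hsymm : Symmetric HAdj)
variable {k : ℕ} {cls : VH → Fin k} (hsurj : Function.Surjective cls)
  {m : Fin k → Fin k → ℕ}
  (hm : ∀ (i j : Fin k) (v : VH), cls v = i →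
      Nat.card {w : VH // HAdj v w ∧ cls w = j} = m i j)
  (hinc : ∀ (c i : Fin k) (hi : i.val + 1 < k),
      ∑ j : Fin k, (if c ≤ j then m i j else 0) ≤
      ∑ j : Fin k, (if c ≤ j then m ⟨i.val + 1, hi⟩ j else 0))

include hsymm hsurj hm hinc in
lemma slide_homF (a b : ℕ) (rest : Fo) :
    homF HAdj (.cons (pathC (a+b+1)) rest) ≤ homF HAdj (.cons (pathC a) (.cons (pathC b) rest)) := by
  have key := slide_sum hsymm (a+1) (b+1) (fun v => hv HAdj rest v) ?_
  · have e1 : ∀ v : VH, hv HAdj (.cons (pathC (a+b+1)) rest) v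
        = W HAdj ((a+1)+(b+1)) v * hv HAdj rest v := by
      intro v
      have h3 : (a+1)+(b+1) = (a+b+1)+1 := by omega
      rw [h3]
      show nbrSum HAdj (hv HAdj (pathC (a+b+1))) v * hv HAdj rest v
        = W HAdj ((a+b+1)+1) v * hv HAdj rest v
      rw [hv_pathC]
      rfl
    have e2 : ∀ v : VH, hv HAdj (.cons (pathC a) (.cons (pathC b) rest)) v
        = W HAdj (a+1) v * (W HAdj (b+1) v * hv HAdj rest v) := by
      intro v
      show nbrSum HAdj (hv HAdj (pathC a)) v
          * (nbrSum HAdj (hv HAdj (pathC b)) v * hv HAdj rest v) = _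
      rw [hv_pathC, hv_pathC]
      rfl
    calc homF HAdj (.cons (pathC (a+b+1)) rest)
        = ∑ v : VH, W HAdj ((a+1)+(b+1)) v * hv HAdj rest v :=
          Finset.sum_congr rfl fun v _ => e1 v
      _ ≤ ∑ v : VH, W HAdj (a+1) v * (W HAdj (b+1) v * hv HAdj rest v) := key
      _ = homF HAdj (.cons (pathC a) (.cons (pathC b) rest)) :=
          (Finset.sum_congr rfl fun v _ => e2 v).symm
  · intro v u
    rcases le_total (cls v) (cls u) with h | h
    · left
      refine ⟨hv_mono HAdj hsurj hm hinc rest v u h, ?_⟩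
      have := hv_mono HAdj hsurj hm hinc (pathC (b+1)) v u h
      rwa [hv_pathC] at this
    · right
      refine ⟨hv_mono HAdj hsurj hm hinc rest u v h, ?_⟩
      have := hv_mono HAdj hsurj hm hinc (pathC (b+1)) u v h
      rwa [hv_pathC] at this

include hsymm in
lemma walk_lemma : ∀ (s : ℕ), ∀ (d z : Fo), sizeF d ≤ s → ¬ TP d →
    ∃ c1 c2 rest : Fo,
      homF HAdj (.cons d z) = homF HAdj (.cons c1 (.cons c2 rest)) ∧ TP c1 ∧ TP c2
      ∧ sizeF (.cons d z) = sizeF (.cons c1 (.cons c2 rest))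
      ∧ Ltop (.cons d z) = Ltop (.cons c1 (.cons c2 rest)) := by
  intro s
  induction s with
  | zero =>
      intro d z hs hnp
      cases d with
      | nil => exact absurd TP_nil hnp
      | cons c r => exact absurd hs (by show ¬ (1 + sizeF c) + sizeF r ≤ 0; omega)
  | succ s ih =>
      intro d z hs hnp
      have e1 : homF HAdj (.cons d z) = homF HAdj (.cons z d) := reroot hsymm d z
      have sz1 : sizeF (Fo.cons d z) = sizeF (Fo.cons z d) := sizeF_reroot d z
      have L1 : Ltop (Fo.cons d z) = Ltop (Fo.cons z d) := Ltop_reroot d z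
      rcases find_nonpath d with hall | ⟨x, e, y, hdec, hnpe⟩
      · cases d with
        | nil => exact absurd TP_nil hnp
        | cons c r =>
          cases r with
          | nil => exact absurd (TP_cons_nil hall.1) hnp
          | cons c' r' =>
              refine ⟨c', c, .cons z r', ?_, hall.2.1, hall.1, ?_, ?_⟩
              · rw [e1]
                have h2 : homF HAdj (Fo.cons z (app (Fo.cons c Fo.nil) (Fo.cons c' r')))
                    = homF HAdj (Fo.cons c' (app (Fo.cons c Fo.nil) (Fo.cons z r'))) :=
                  Finset.sum_congr rfl fun v _ => hv_extract HAdj (Fo.cons c Fo.nil) c' r' z v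
                exact h2
              · rw [sz1]
                exact sizeF_extract (Fo.cons c Fo.nil) c' r' z
              · rw [L1]
                exact Ltop_extract (Fo.cons c Fo.nil) c' r' z
      · have hsz : sizeF e ≤ s := by
          have h4 : sizeF d = sizeF x + ((1 + sizeF e) + sizeF y) := by
            rw [hdec, sizeF_app]
            rfl
          omega
        obtain ⟨c1, c2, rest, heq, h1, h2, hsize, hL⟩ := ih e (app x (.cons z y)) hsz hnpe
        refine ⟨c1, c2, rest, ?_, h1, h2, ?_, ?_⟩
        · rw [e1, hdec]
          have h3 : homF HAdj (Fo.cons z (app x (Fo.cons e y)))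
              = homF HAdj (Fo.cons e (app x (Fo.cons z y))) :=
            Finset.sum_congr rfl fun v _ => hv_extract HAdj x e y z v
          rw [h3, heq]
        · rw [sz1, hdec, sizeF_extract x e y z, hsize]
        · rw [L1, hdec, Ltop_extract x e y z, hL]

include hsymm in
lemma reduce (t : Fo) (hnp : ¬ TP t) :
    ∃ c1 c2 rest : Fo, homF HAdj t = homF HAdj (.cons c1 (.cons c2 rest)) ∧ TP c1 ∧ TP c2
      ∧ sizeF t = sizeF (.cons c1 (.cons c2 rest)) ∧ Ltop t = Ltop (.cons c1 (.cons c2 rest)) := by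
  rcases find_nonpath t with hall | ⟨x, e, y, hdec, hnpe⟩
  · cases t with
    | nil => exact absurd TP_nil hnp
    | cons c r =>
        cases r with
        | nil => exact absurd (TP_cons_nil hall.1) hnp
        | cons c' r' => exact ⟨c, c', r', rfl, hall.1, hall.2.1, rfl, rfl⟩
  · obtain ⟨c1, c2, rest, heq, h1, h2, hsize, hL⟩ :=
      walk_lemma hsymm (sizeF e) e (app x y) le_rfl hnpe
    refine ⟨c1, c2, rest, ?_, h1, h2, ?_, ?_⟩
    · rw [hdec]
      have h3 : homF HAdj (app x (Fo.cons e y)) = homF HAdj (Fo.cons e (app x y)) :=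
        Finset.sum_congr rfl fun v _ => hv_extract0 HAdj x e y v
      rw [h3, heq]
    · rw [hdec, sizeF_extract0 x e y, hsize]
    · rw [hdec, Ltop_extract0 x e y, hL]

include hsymm hsurj hm hinc in
lemma main_r : ∀ (L : ℕ) (t : Fo), Ltop t ≤ L → homF HAdj (pathC (sizeF t)) ≤ homF HAdj t := by
  intro L
  induction L with
  | zero =>
      intro t hL
      by_cases hTP : TP t
      · exact le_of_eq (congrArg (homF HAdj) hTP.symm)
      · exfalso
        have hne : t ≠ Fo.nil := fun h => hTP (h ▸ TP_nil)
        have h5 := Lf_pos t hne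
        have h6 : 1 ≤ Ltop t := by rw [Ltop]; omega
        omega
  | succ L ihL =>
      intro t hL
      by_cases hTP : TP t
      · exact le_of_eq (congrArg (homF HAdj) hTP.symm)
      obtain ⟨c1, c2, rest, heq, h1, h2, hsize, hLt⟩ := reduce hsymm t hTP
      have hslide := slide_homF hsymm hsurj hm hinc (sizeF c1) (sizeF c2) rest
      have hform : homF HAdj (.cons c1 (.cons c2 rest))
          = homF HAdj (.cons (pathC (sizeF c1)) (.cons (pathC (sizeF c2)) rest)) := by
        rw [← h1, ← h2]
      have hs3 : sizeF t = (sizeF c1 + sizeF c2 + 1) + 1 + sizeF rest := by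
        rw [hsize]
        show (1 + sizeF c1) + ((1 + sizeF c2) + sizeF rest) = _
        omega
      by_cases hrest : rest = Fo.nil
      · subst hrest
        have hpt : pathC (sizeF t) = Fo.cons (pathC (sizeF c1 + sizeF c2 + 1)) Fo.nil := by
          have : sizeF t = (sizeF c1 + sizeF c2 + 1) + 1 := by
            rw [hs3]
            show _ + 0 = _
            omega
          rw [this]
          rfl
        calc homF HAdj (pathC (sizeF t))
            = homF HAdj (Fo.cons (pathC (sizeF c1 + sizeF c2 + 1)) Fo.nil) := by rw [hpt]
          _ ≤ homF HAdj (.cons (pathC (sizeF c1)) (.cons (pathC (sizeF c2)) Fo.nil)) := hslide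
          _ = homF HAdj (.cons c1 (.cons c2 Fo.nil)) := hform.symm
          _ = homF HAdj t := heq.symm
      · have hnt : ¬ (ntrees rest = 0) := by rw [ntrees_eq_zero]; exact hrest
        have hL3 : Ltop (Fo.cons (pathC (sizeF c1 + sizeF c2 + 1)) rest) + 1 ≤ Ltop t := by
          rw [hLt]
          have e3 : Ltop (Fo.cons (pathC (sizeF c1 + sizeF c2 + 1)) rest)
              = 1 + Lf rest := by
            rw [Ltop]
            show ((if pathC (sizeF c1 + sizeF c2 + 1) = Fo.nil then 1
                else Lf (pathC (sizeF c1 + sizeF c2 + 1))) + Lf rest)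
              + (if 1 + ntrees rest ≤ 1 then 1 else 0) = _
            rw [tval_pathC]
            rw [if_neg (by omega : ¬ (1 + ntrees rest ≤ 1))]
            omega
          have e4 : Ltop (Fo.cons c1 (Fo.cons c2 rest)) = ((if c1 = Fo.nil then 1 else Lf c1)
              + ((if c2 = Fo.nil then 1 else Lf c2) + Lf rest)) + 0 := by
            rw [Ltop]
            congr 1
            show (if ntrees (Fo.cons c1 (Fo.cons c2 rest)) ≤ 1 then 1 else 0) = 0
            have : ntrees (Fo.cons c1 (Fo.cons c2 rest)) = 1 + (1 + ntrees rest) := rfl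
            rw [this, if_neg (by omega)]
          have e5 : (if c1 = Fo.nil then 1 else Lf c1) = 1 := by
            rw [h1]
            exact tval_pathC (sizeF c1)
          have e6 : (if c2 = Fo.nil then 1 else Lf c2) = 1 := by
            rw [h2]
            exact tval_pathC (sizeF c2)
          rw [e3, e4, e5, e6]
          omega
        have hsz4 : sizeF (Fo.cons (pathC (sizeF c1 + sizeF c2 + 1)) rest) = sizeF t := by
          show (1 + sizeF (pathC (sizeF c1 + sizeF c2 + 1))) + sizeF rest = _
          rw [sizeF_pathC]
          omega
        calc homF HAdj (pathC (sizeF t))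
            = homF HAdj (pathC (sizeF (Fo.cons (pathC (sizeF c1 + sizeF c2 + 1)) rest))) := by
              rw [hsz4]
          _ ≤ homF HAdj (Fo.cons (pathC (sizeF c1 + sizeF c2 + 1)) rest) :=
              ihL _ (by omega)
          _ ≤ homF HAdj (.cons (pathC (sizeF c1)) (.cons (pathC (sizeF c2)) rest)) := hslide
          _ = homF HAdj (.cons c1 (.cons c2 rest)) := hform.symm
          _ = homF HAdj t := heq.symm

include hsymm hsurj hm hinc in
/-- Main combinatorial theorem: among all trees, the path minimises the number of
`H`-colourings. -/
theorem path_min (t : Fo) : homF HAdj (pathC (sizeF t)) ≤ homF HAdj t :=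
  main_r hsymm hsurj hm hinc (Ltop t) t le_rfl

end Main

/-! ### Labelled forests and parent encodings -/

/-- Labelled forests. -/
inductive LF : Type
  | nil : LF
  | cons (l : ℕ) (c : LF) (rest : LF) : LF

def labs : LF → List ℕ
  | .nil => []
  | .cons l c r => l :: (labs c ++ labs r)

def stripL : LF → Fo
  | .nil => .nil
  | .cons _ c r => .cons (stripL c) (stripL r)

/-- Attach a new leaf labelled `newl` as a child of the node labelled `i`. -/
def attachF (i newl : ℕ) : LF → LF
  | .nil => .nil
  | .cons l c r => if l = i then .cons l (.cons newl .nil c) r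
                   else .cons l (attachF i newl c) (attachF i newl r)

/-- Attach a new leaf labelled `newl` as a child of the node labelled `i`,
where `i = 0` denotes the root (whose children are the given forest). -/
def attachAll (i newl : ℕ) (φ : LF) : LF :=
  if i = 0 then .cons newl .nil φ else attachF i newl φ

/-- The labelled forest encoded by the parent function `p` on `{0, …, n-1}`
(children of the root `0`). -/
def mkF (p : ℕ → ℕ) : ℕ → LF
  | 0 => .nil
  | (n+1) => if n = 0 then .nil else attachAll (p n) n (mkF p n)

lemma attachF_not_mem (i newl : ℕ) (φ : LF) (h : i ∉ labs φ) : attachF i newl φ = φ := by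
  induction φ with
  | nil => rfl
  | cons l c r ihc ihr =>
      simp only [labs, List.mem_cons, List.mem_append] at h
      push_neg at h
      show (if l = i then _ else _) = _
      rw [if_neg (fun he => h.1 he.symm), ihc h.2.1, ihr h.2.2]

lemma labs_attachF (i newl : ℕ) (φ : LF) (hmem : i ∈ labs φ) (hnd : (labs φ).Nodup) :
    List.Perm (labs (attachF i newl φ)) (newl :: labs φ) := by
  induction φ with
  | nil => simp [labs] at hmem
  | cons l c r ihc ihr =>
      simp only [labs, List.mem_cons, List.mem_append] at hmem
      simp only [labs, List.nodup_cons, List.nodup_append, List.mem_append] at hnd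
      by_cases hl : l = i
      · simp only [attachF, if_pos hl]
        show List.Perm (l :: ((newl :: ([] ++ labs c)) ++ labs r)) (newl :: (l :: (labs c ++ labs r)))
        simp only [List.nil_append, List.cons_append]
        exact List.Perm.swap newl l _
      · have hi : i ∈ labs c ∨ i ∈ labs r := by
          rcases hmem with h | h | h
          · exact absurd h.symm hl
          · exact Or.inl h
          · exact Or.inr h
        simp only [attachF, if_neg hl]
        show List.Perm (l :: (labs (attachF i newl c) ++ labs (attachF i newl r)))
          (newl :: (l :: (labs c ++ labs r)))
        rcases hi with hi | hi
        · have hir : i ∉ labs r := fun hr => (hnd.2.2.2 i hi i hr rfl)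
          rw [attachF_not_mem i newl r hir]
          refine List.Perm.trans (List.Perm.cons l
            (List.Perm.append_right (labs r) (ihc hi hnd.2.1))) ?_
          show List.Perm (l :: ((newl :: labs c) ++ labs r)) _
          simp only [List.cons_append]
          exact List.Perm.swap newl l _
        · have hic : i ∉ labs c := fun hc => (hnd.2.2.2 i hc i hi rfl)
          rw [attachF_not_mem i newl c hic]
          refine List.Perm.trans (List.Perm.cons l
            (List.Perm.append_left (labs c) (ihr hi hnd.2.2.1))) ?_
          refine List.Perm.trans (List.Perm.cons l List.perm_middle) ?_
          · exact List.Perm.swap newl l _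

lemma labs_attachAll (i newl : ℕ) (φ : LF) (hmem : i = 0 ∨ i ∈ labs φ) (h0 : (0:ℕ) ∉ labs φ)
    (hnd : (labs φ).Nodup) :
    List.Perm (labs (attachAll i newl φ)) (newl :: labs φ) := by
  rw [attachAll]
  by_cases h : i = 0
  · rw [if_pos h]
    show List.Perm (newl :: ([] ++ labs φ)) _
    simp
  · rw [if_neg h]
    exact labs_attachF i newl φ (hmem.resolve_left h) hnd

lemma labs_mkF (p : ℕ → ℕ) : ∀ (n : ℕ), (∀ i, 0 < i → i < n → p i < i) →
    (labs (mkF p n)).Nodup ∧ ∀ l, l ∈ labs (mkF p n) ↔ (1 ≤ l ∧ l < n) := by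
  intro n
  induction n with
  | zero => intro _; exact ⟨List.nodup_nil, by simp [mkF, labs]⟩
  | succ n ih =>
      intro hp
      by_cases hn : n = 0
      · subst hn
        constructor
        · show (labs LF.nil).Nodup
          exact List.nodup_nil
        · intro l
          show l ∈ labs LF.nil ↔ _
          simp [labs]
          omega
      · have hp' : ∀ i, 0 < i → i < n → p i < i := fun i h1 h2 => hp i h1 (by omega)
        obtain ⟨hnd, hmem⟩ := ih hp'
        have hpn : p n < n := hp n (by omega) (by omega)
        have h0 : (0:ℕ) ∉ labs (mkF p n) := fun h => by have := (hmem 0).mp h; omega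
        have hmem' : p n = 0 ∨ p n ∈ labs (mkF p n) := by
          by_cases h : p n = 0
          · exact Or.inl h
          · exact Or.inr ((hmem (p n)).mpr ⟨by omega, hpn⟩)
        have hperm := labs_attachAll (p n) n (mkF p n) hmem' h0 hnd
        have hmk : mkF p (n+1) = attachAll (p n) n (mkF p n) := by
          show (if n = 0 then _ else _) = _
          rw [if_neg hn]
        rw [hmk]
        constructor
        · rw [hperm.nodup_iff]
          refine List.nodup_cons.mpr ⟨fun h => ?_, hnd⟩
          have := (hmem n).mp h
          omega
        · intro l
          rw [hperm.mem_iff, List.mem_cons, hmem l]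
          omega

noncomputable def hvF (F : ℕ → VH → ℕ) : LF → VH → ℕ
  | .nil => fun _ => 1
  | .cons l c r => fun v => nbrSum HAdj (fun w => F l w * hvF F c w) v * hvF F r v

noncomputable def homTop (F : ℕ → VH → ℕ) (φ : LF) : ℕ := ∑ v : VH, F 0 v * hvF HAdj F φ v

lemma nbrSum_congr {h h' : VH → ℕ} (hh : ∀ w, h w = h' w) (v : VH) :
    nbrSum HAdj h v = nbrSum HAdj h' v := by
  rw [show h = h' from funext hh]

lemma hvF_congr (F G : ℕ → VH → ℕ) (φ : LF) (h : ∀ l ∈ labs φ, ∀ v, F l v = G l v) :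
    ∀ v, hvF HAdj F φ v = hvF HAdj G φ v := by
  induction φ with
  | nil => intro v; rfl
  | cons l c r ihc ihr =>
      intro v
      have h1 : ∀ l' ∈ labs c, ∀ v, F l' v = G l' v := fun l' hl' => h l' (by simp [labs, hl'])
      have h2 : ∀ l' ∈ labs r, ∀ v, F l' v = G l' v := fun l' hl' => h l' (by simp [labs, hl'])
      have h3 : ∀ v, F l v = G l v := h l (by simp [labs])
      show nbrSum HAdj (fun w => F l w * hvF HAdj F c w) v * hvF HAdj F r v
        = nbrSum HAdj (fun w => G l w * hvF HAdj G c w) v * hvF HAdj G r v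
      rw [nbrSum_congr HAdj (fun w => by rw [h3 w, ihc h1 w]) v, ihr h2 v]

lemma hvF_one (φ : LF) : ∀ v, hvF HAdj (fun _ _ => (1:ℕ)) φ v = hv HAdj (stripL φ) v := by
  induction φ with
  | nil => intro v; rfl
  | cons l c r ihc ihr =>
      intro v
      show nbrSum HAdj (fun w => 1 * hvF HAdj (fun _ _ => (1:ℕ)) c w) v
          * hvF HAdj (fun _ _ => (1:ℕ)) r v
        = nbrSum HAdj (hv HAdj (stripL c)) v * hv HAdj (stripL r) v
      rw [nbrSum_congr HAdj (fun w => by rw [one_mul, ihc w]) v, ihr v]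

lemma sizeF_stripL (φ : LF) : sizeF (stripL φ) = (labs φ).length := by
  induction φ with
  | nil => rfl
  | cons l c r ihc ihr =>
      show (1 + sizeF (stripL c)) + sizeF (stripL r) = (l :: (labs c ++ labs r)).length
      rw [ihc, ihr]
      simp
      omega

lemma hvF_attachF (F : ℕ → VH → ℕ) (i newl : ℕ) (φ : LF) (hnd : (labs φ).Nodup)
    (hmem : i ∈ labs φ) : ∀ v,
    hvF HAdj F (attachF i newl φ) v
      = hvF HAdj (fun l w => F l w * (if l = i then nbrSum HAdj (F newl) w else 1)) φ v := by
  induction φ with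
  | nil => intro v; simp [labs] at hmem
  | cons l c r ihc ihr =>
      intro v
      simp only [labs, List.nodup_cons, List.nodup_append, List.mem_append] at hnd
      by_cases hl : l = i
      · have hic : i ∉ labs c := fun hc => hnd.1 (Or.inl (hl ▸ hc))
        have hir : i ∉ labs r := fun hr => hnd.1 (Or.inr (hl ▸ hr))
        have hc : ∀ w, hvF HAdj (fun l w => F l w * (if l = i then nbrSum HAdj (F newl) w else 1))
            c w = hvF HAdj F c w := by
          apply hvF_congr
          intro l' hl' w
          rw [if_neg (fun he : l' = i => hic (he ▸ hl')), mul_one]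
        have hr : ∀ w, hvF HAdj (fun l w => F l w * (if l = i then nbrSum HAdj (F newl) w else 1))
            r w = hvF HAdj F r w := by
          apply hvF_congr
          intro l' hl' w
          rw [if_neg (fun he : l' = i => hir (he ▸ hl')), mul_one]
        simp only [attachF, if_pos hl]
        show nbrSum HAdj (fun w => F l w * hvF HAdj F (.cons newl .nil c) w) v * hvF HAdj F r v
          = nbrSum HAdj (fun w => (F l w * (if l = i then nbrSum HAdj (F newl) w else 1))
              * hvF HAdj (fun l w => F l w * (if l = i then nbrSum HAdj (F newl) w else 1)) c w) v
            * hvF HAdj (fun l w => F l w * (if l = i then nbrSum HAdj (F newl) w else 1)) r v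
        rw [hr v]
        congr 1
        apply nbrSum_congr
        intro w
        rw [hc w, if_pos hl]
        show F l w * (nbrSum HAdj (fun x => F newl x * hvF HAdj F .nil x) w * hvF HAdj F c w) = _
        rw [nbrSum_congr HAdj (fun x => by
          show F newl x * 1 = F newl x
          rw [mul_one]) w]
        ring
      · have hi : i ∈ labs c ∨ i ∈ labs r := by
          simp only [labs, List.mem_cons, List.mem_append] at hmem
          rcases hmem with h | h | h
          · exact absurd h.symm hl
          · exact Or.inl h
          · exact Or.inr h
        simp only [attachF, if_neg hl]
        show nbrSum HAdj (fun w => F l w * hvF HAdj F (attachF i newl c) w) v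
            * hvF HAdj F (attachF i newl r) v
          = nbrSum HAdj (fun w => (F l w * (if l = i then nbrSum HAdj (F newl) w else 1))
              * hvF HAdj (fun l w => F l w * (if l = i then nbrSum HAdj (F newl) w else 1)) c w) v
            * hvF HAdj (fun l w => F l w * (if l = i then nbrSum HAdj (F newl) w else 1)) r v
        rcases hi with hi | hi
        · have hir : i ∉ labs r := fun hr => hnd.2.2.2 i hi i hr rfl
          have hr : ∀ w, hvF HAdj (fun l w => F l w *
              (if l = i then nbrSum HAdj (F newl) w else 1)) r w = hvF HAdj F r w := by
            apply hvF_congr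
            intro l' hl' w
            rw [if_neg (fun he : l' = i => hir (he ▸ hl')), mul_one]
          rw [attachF_not_mem i newl r hir, hr v]
          congr 1
          apply nbrSum_congr
          intro w
          rw [ihc hnd.2.1 hi w, if_neg hl, mul_one]
        · have hic : i ∉ labs c := fun hc => hnd.2.2.2 i hc i hi rfl
          have hc : ∀ w, hvF HAdj (fun l w => F l w *
              (if l = i then nbrSum HAdj (F newl) w else 1)) c w = hvF HAdj F c w := by
            apply hvF_congr
            intro l' hl' w
            rw [if_neg (fun he : l' = i => hic (he ▸ hl')), mul_one]
          rw [attachF_not_mem i newl c hic, ihr hnd.2.2.1 hi v]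
          congr 1
          apply nbrSum_congr
          intro w
          rw [hc w, if_neg hl, mul_one]

lemma homTop_attachAll (F : ℕ → VH → ℕ) (i newl : ℕ) (φ : LF) (hnd : (labs φ).Nodup)
    (hmem : i = 0 ∨ i ∈ labs φ) (h0 : (0:ℕ) ∉ labs φ) :
    homTop HAdj F (attachAll i newl φ)
      = homTop HAdj (fun l w => F l w * (if l = i then nbrSum HAdj (F newl) w else 1)) φ := by
  by_cases h : i = 0
  · rw [attachAll, if_pos h]
    show ∑ v : VH, F 0 v * hvF HAdj F (.cons newl .nil φ) v = _
    apply Finset.sum_congr rfl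
    intro v _
    have hφ : ∀ w, hvF HAdj (fun l w => F l w * (if l = i then nbrSum HAdj (F newl) w else 1))
        φ w = hvF HAdj F φ w := by
      apply hvF_congr
      intro l' hl' w
      rw [if_neg (fun he : l' = i => h0 ((he.trans h) ▸ hl')), mul_one]
    show F 0 v * (nbrSum HAdj (fun w => F newl w * hvF HAdj F .nil w) v * hvF HAdj F φ v)
      = (F 0 v * (if (0:ℕ) = i then nbrSum HAdj (F newl) v else 1)) * _
    rw [hφ v, if_pos h.symm]
    rw [nbrSum_congr HAdj (fun w => by
      show F newl w * 1 = F newl w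
      rw [mul_one]) v]
    ring
  · rw [attachAll, if_neg h]
    show ∑ v : VH, F 0 v * hvF HAdj F (attachF i newl φ) v = _
    apply Finset.sum_congr rfl
    intro v _
    rw [hvF_attachF HAdj F i newl φ hnd (hmem.resolve_left h) v]
    show _ = (F 0 v * (if (0:ℕ) = i then nbrSum HAdj (F newl) v else 1)) * _
    rw [if_neg (fun he : (0:ℕ) = i => h he.symm), mul_one]

def snocEquiv (n : ℕ) : ((Fin n → VH) × VH) ≃ (Fin (n+1) → VH) where
  toFun q := Fin.snoc q.1 q.2
  invFun f := (fun i => f i.castSucc, f (Fin.last n))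
  left_inv q := by
    refine Prod.ext ?_ ?_
    · funext i
      simp
    · simp
  right_inv f := by
    funext i
    induction i using Fin.lastCases with
    | last => simp
    | cast j => simp

open Classical in
/-- The indicator constraint at vertex `i` for the parent function `p`. -/
noncomputable def chi (n : ℕ) (p : ℕ → ℕ) (f : Fin n → VH) (i : Fin n) : ℕ :=
  if h : i.val ≠ 0 ∧ p i.val < n then (if HAdj (f ⟨p i.val, h.2⟩) (f i) then 1 else 0) else 1

/-- The number of `H`-colourings of the graph encoded by the parent function `p`,
weighted by `F`. -/
noncomputable def CNT (n : ℕ) (p : ℕ → ℕ) (F : ℕ → VH → ℕ) : ℕ :=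
  ∑ f : Fin n → VH, ∏ i : Fin n, (F i.val (f i) * chi HAdj n p f i)

theorem cnt_eq : ∀ (n : ℕ), 1 ≤ n → ∀ (p : ℕ → ℕ), (∀ i, 0 < i → i < n → p i < i) →
    ∀ (F : ℕ → VH → ℕ), CNT HAdj n p F = homTop HAdj F (mkF p n) := by
  intro n
  induction n with
  | zero => intro h; omega
  | succ n ih =>
      intro _ p hp F
      by_cases hn : n = 0
      · subst hn
        have hmk : mkF p 1 = .nil := rfl
        rw [hmk, CNT, homTop]
        rw [← Equiv.sum_comp (Equiv.funUnique (Fin 1) VH).symm]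
        apply Finset.sum_congr rfl
        intro v _
        rw [Fin.prod_univ_one]
        have hchi : chi HAdj 1 p ((Equiv.funUnique (Fin 1) VH).symm v) 0 = 1 := by
          rw [chi, dif_neg (by simp)]
        rw [hchi]
        rfl
      · -- n ≥ 1
        have hn1 : 1 ≤ n := by omega
        have hp' : ∀ i, 0 < i → i < n → p i < i := fun i h1 h2 => hp i h1 (by omega)
        have hq : p n < n := hp n (by omega) (by omega)
        set qn : Fin n := ⟨p n, hq⟩ with hqn
        set F' : ℕ → VH → ℕ :=
          fun l w => F l w * (if l = p n then nbrSum HAdj (F n) w else 1) with hF'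
        have key := ih hn1 p hp' F'
        have hterm : ∀ (g : Fin n → VH) (v : VH),
            (∏ i : Fin (n+1), F i.val ((Fin.snoc g v : Fin (n+1) → VH) i)
              * chi HAdj (n+1) p (Fin.snoc g v : Fin (n+1) → VH) i)
            = (∏ i : Fin n, F i.val (g i) * chi HAdj n p g i)
              * (F n v * (if HAdj (g qn) v then 1 else 0)) := by
          intro g v
          rw [Fin.prod_univ_castSucc]
          congr 1
          · apply Finset.prod_congr rfl
            intro i _
            have hsn : (Fin.snoc g v : Fin (n+1) → VH) i.castSucc = g i :=
              Fin.snoc_castSucc _ _ _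
            have hcv : (i.castSucc).val = i.val := rfl
            rw [hsn, hcv]
            congr 1
            by_cases h0 : i.val = 0
            · rw [chi, dif_neg (by simp [h0]), chi, dif_neg (by simp [h0])]
            · have hpi : p i.val < i.val := hp i.val (by omega) (by omega)
              have c1 : (i.castSucc).val ≠ 0 ∧ p (i.castSucc).val < n + 1 := by
                constructor
                · exact h0
                · show p i.val < n + 1
                  have := i.isLt
                  omega
              have c0 : i.val ≠ 0 ∧ p i.val < n := by
                constructor
                · exact h0
                · have := i.isLt; omega
              rw [chi, dif_pos c1, chi, dif_pos c0]
              have e1 : (⟨p (i.castSucc).val, c1.2⟩ : Fin (n+1))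
                  = Fin.castSucc ⟨p i.val, c0.2⟩ := rfl
              rw [e1, Fin.snoc_castSucc, hsn]
          · have hl : (Fin.last n).val = n := rfl
            have hsl : (Fin.snoc g v : Fin (n+1) → VH) (Fin.last n) = v := Fin.snoc_last _ _
            rw [hsl, hl]
            congr 1
            have c1 : (Fin.last n).val ≠ 0 ∧ p (Fin.last n).val < n + 1 := by
              constructor
              · show n ≠ 0; omega
              · show p n < n + 1; omega
            rw [chi, dif_pos c1]
            have e1 : (⟨p (Fin.last n).val, c1.2⟩ : Fin (n+1)) = Fin.castSucc qn := rfl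
            rw [e1, Fin.snoc_castSucc, hsl]
        calc CNT HAdj (n+1) p F
            = ∑ q : (Fin n → VH) × VH, ∏ i : Fin (n+1),
                F i.val (snocEquiv n q i) * chi HAdj (n+1) p (snocEquiv n q) i := by
              rw [CNT, Equiv.sum_comp (snocEquiv n)
                (fun f => ∏ i : Fin (n+1), F i.val (f i) * chi HAdj (n+1) p f i)]
          _ = ∑ g : Fin n → VH, ∑ v : VH,
                (∏ i : Fin n, F i.val (g i) * chi HAdj n p g i)
                * (F n v * (if HAdj (g qn) v then 1 else 0)) := by
              rw [Fintype.sum_prod_type]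
              exact Finset.sum_congr rfl fun g _ => Finset.sum_congr rfl fun v _ => hterm g v
          _ = ∑ g : Fin n → VH,
                (∏ i : Fin n, F i.val (g i) * chi HAdj n p g i) * nbrSum HAdj (F n) (g qn) := by
              apply Finset.sum_congr rfl
              intro g _
              rw [← Finset.mul_sum]
              congr 1
              rw [nbrSum]
              apply Finset.sum_congr rfl
              intro v _
              split <;> simp
          _ = ∑ g : Fin n → VH, ∏ i : Fin n, F' i.val (g i) * chi HAdj n p g i := by
              apply Finset.sum_congr rfl
              intro g _
              have hone : nbrSum HAdj (F n) (g qn)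
                  = ∏ i : Fin n, (if i = qn then nbrSum HAdj (F n) (g i) else 1) := by
                rw [Finset.prod_ite_eq' Finset.univ qn (fun i => nbrSum HAdj (F n) (g i))]
                simp
              rw [hone, ← Finset.prod_mul_distrib]
              apply Finset.prod_congr rfl
              intro i _
              have hiff : (i = qn) ↔ (i.val = p n) := by
                constructor
                · intro h; rw [h]
                · intro h; exact Fin.ext h
              simp only [hF']
              by_cases h : i = qn
              · rw [if_pos h, if_pos (hiff.mp h)]
                ring
              · rw [if_neg h, if_neg (fun hv => h (hiff.mpr hv))]
                ring
          _ = homTop HAdj F (mkF p (n+1)) := by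
              rw [← CNT, key]
              have hmk : mkF p (n+1) = attachAll (p n) n (mkF p n) := by
                show (if n = 0 then _ else _) = _
                rw [if_neg hn]
              rw [hmk]
              obtain ⟨hnd, hmem⟩ := labs_mkF p n hp'
              have h0 : (0:ℕ) ∉ labs (mkF p n) := fun h => by have := (hmem 0).mp h; omega
              have hmem' : p n = 0 ∨ p n ∈ labs (mkF p n) := by
                by_cases h : p n = 0
                · exact Or.inl h
                · exact Or.inr ((hmem (p n)).mpr ⟨by omega, hq⟩)
              rw [homTop_attachAll HAdj F (p n) n (mkF p n) hnd hmem' h0]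

def chainL (s : ℕ) : ℕ → LF
  | 0 => .nil
  | (m+1) => .cons s (chainL (s+1) m) .nil

lemma stripL_chainL : ∀ (mm s : ℕ), stripL (chainL s mm) = pathC mm := by
  intro mm
  induction mm with
  | zero => intro s; rfl
  | succ mm ih =>
      intro s
      show Fo.cons (stripL (chainL (s+1) mm)) (stripL .nil) = Fo.cons (pathC mm) Fo.nil
      rw [ih (s+1)]
      rfl

lemma attachF_chainL : ∀ (mm s : ℕ),
    attachF (s+mm) (s+mm+1) (chainL s (mm+1)) = chainL s (mm+2) := by
  intro mm
  induction mm with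
  | zero =>
      intro s
      show (if s = s + 0 then _ else _) = _
      rw [if_pos (by omega)]
      rfl
  | succ mm ih =>
      intro s
      show (if s = s + (mm+1) then _
        else LF.cons s (attachF (s+(mm+1)) (s+(mm+1)+1) (chainL (s+1) (mm+1)))
          (attachF (s+(mm+1)) (s+(mm+1)+1) .nil)) = LF.cons s (chainL (s+1) (mm+2)) .nil
      rw [if_neg (by omega)]
      have h1 : s + (mm+1) = (s+1) + mm := by omega
      rw [h1, ih (s+1)]
      rfl

lemma mkF_pred : ∀ (n : ℕ), 1 ≤ n → mkF (fun i => i - 1) n = chainL 1 (n-1) := by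
  intro n
  induction n with
  | zero => intro h; omega
  | succ n ih =>
      intro _
      by_cases hn : n = 0
      · subst hn; rfl
      · have hmk : mkF (fun i => i - 1) (n+1)
            = attachAll (n-1) n (mkF (fun i => i - 1) n) := by
          show (if n = 0 then _ else _) = _
          rw [if_neg hn]
        rw [hmk, ih (by omega)]
        by_cases hn1 : n = 1
        · subst hn1; rfl
        · obtain ⟨mmm, rfl⟩ : ∃ mmm, n = mmm + 2 := ⟨n - 2, by omega⟩
          rw [attachAll, if_neg (by omega)]
          have hthis := attachF_chainL mmm 1
          rw [show 1 + mmm = mmm + 1 from by omega] at hthis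
          rw [show mmm + 1 + 1 = mmm + 2 from by omega] at hthis
          have e1 : mmm + 2 - 1 = mmm + 1 := by omega
          have e2 : mmm + 2 + 1 - 1 = mmm + 2 := by omega
          rw [e1, e2]
          exact hthis

lemma homTop_one (φ : LF) : homTop HAdj (fun _ _ => (1:ℕ)) φ = homF HAdj (stripL φ) := by
  rw [homTop, homF]
  apply Finset.sum_congr rfl
  intro v _
  rw [one_mul, hvF_one]

lemma labs_length (L : List ℕ) (n : ℕ) (hnd : L.Nodup) (hmem : ∀ l, l ∈ L ↔ (1 ≤ l ∧ l < n)) :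
    L.length = n - 1 := by
  classical
  have h1 : L.toFinset = Finset.Ico 1 n := by
    ext l
    rw [List.mem_toFinset, hmem l, Finset.mem_Ico]
  have h2 := List.toFinset_card_of_nodup hnd
  rw [h1] at h2
  rw [← h2, Nat.card_Ico]

end HL

/-! ### Graph encoding -/

/-- The parent index of `i` as an element of `Fin n`. -/
def pidx (n : ℕ) (p : ℕ → ℕ) (i : Fin n) : Fin n :=
  if h : p i.val < n then ⟨p i.val, h⟩ else i

open SimpleGraph in
theorem tree_encoding (n : ℕ) (hn : 1 ≤ n) (T : SimpleGraph (Fin n)) (hT : T.IsTree) :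
    ∃ (σ : Equiv.Perm (Fin n)) (p : ℕ → ℕ), (∀ i, 0 < i → i < n → p i < i) ∧
      (∀ u v : Fin n, T.Adj u v ↔ ∃ i : Fin n, i.val ≠ 0 ∧
        ((u = σ i ∧ v = σ (pidx n p i)) ∨ (v = σ i ∧ u = σ (pidx n p i)))) := by
  classical
  haveI : NeZero n := ⟨by omega⟩
  have hconn : T.Connected := hT.isConnected
  set d : Fin n → ℕ := fun v => T.dist 0 v with hd
  have hpar : ∀ v : Fin n, v ≠ 0 → ∃ u, T.Adj u v ∧ d u + 1 = d v := by
    intro v hv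
    obtain ⟨w, hw⟩ := hconn.exists_walk_length_eq_dist 0 v
    have hdpos : 0 < d v := by
      have h1 : T.dist 0 v ≠ 0 := fun h => hv ((hconn.dist_eq_zero_iff.mp h).symm)
      simp only [hd]
      omega
    obtain ⟨u, hadj, q, hq⟩ := SimpleGraph.Walk.exists_eq_cons_of_ne
      (fun (h : v = (0 : Fin n)) => hv h) w.reverse
    refine ⟨u, hadj.symm, ?_⟩
    have h1 : T.dist 0 u ≤ q.length := by
      have h2 := SimpleGraph.dist_le q.reverse
      rw [SimpleGraph.Walk.length_reverse] at h2
      have h3 : T.dist 0 u = T.dist u 0 := SimpleGraph.dist_comm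
      omega
    have h2 : q.length + 1 = w.length := by
      have h3 : w.reverse.length = w.length := SimpleGraph.Walk.length_reverse w
      rw [hq, SimpleGraph.Walk.length_cons] at h3
      omega
    have h3 : d v ≤ d u + 1 := by
      have htri : T.dist 0 v ≤ T.dist 0 u + T.dist u v := hconn.dist_triangle
      have h4 : T.dist u v ≤ 1 := by
        have := SimpleGraph.dist_le (SimpleGraph.Walk.cons hadj.symm SimpleGraph.Walk.nil)
        simpa using this
      simp only [hd]
      omega
    simp only [hd] at *
    omega
  choose! parc hadjc hdc using hpar
  set σ : Equiv.Perm (Fin n) := Tuple.sort d with hσ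
  have hmono : Monotone (d ∘ σ) := Tuple.monotone_sort d
  have hσ0 : σ 0 = 0 := by
    have h1 : d (σ 0) ≤ d (σ (σ.symm 0)) := hmono (Fin.zero_le _)
    rw [Equiv.apply_symm_apply] at h1
    have h2 : d (0 : Fin n) = 0 := by
      simp [hd]
    have h3 : d (σ 0) = 0 := by omega
    have h4 : (0 : Fin n) = σ 0 := hconn.dist_eq_zero_iff.mp h3
    exact h4.symm
  have hpt : ∀ v : Fin n, v ≠ 0 → (T.Adj (parc v) v ∧ d (parc v) + 1 = d v) :=
    fun v hv => ⟨hadjc v hv, hdc v hv⟩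
  set p : ℕ → ℕ := fun i => if h : i < n then (σ.symm (parc (σ ⟨i, h⟩))).val else 0 with hpdef
  have hσne : ∀ i : Fin n, i.val ≠ 0 → σ i ≠ 0 := by
    intro i hi h
    rw [← hσ0] at h
    have h2 : i = 0 := σ.injective h
    apply hi
    rw [h2]
    rfl
  have hp : ∀ i, 0 < i → i < n → p i < i := by
    intro i h0 h1
    simp only [hpdef]
    rw [dif_pos h1]
    set v : Fin n := σ ⟨i, h1⟩ with hv
    have hvne : v ≠ 0 := hσne ⟨i, h1⟩ (by simpa using by omega)
    have hdd : d (parc v) + 1 = d v := (hpt v hvne).2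
    by_contra hcon
    push_neg at hcon
    have hle : (⟨i, h1⟩ : Fin n) ≤ σ.symm (parc v) := by
      rw [Fin.le_def]
      simpa using hcon
    have := hmono hle
    simp only [Function.comp_apply, Equiv.apply_symm_apply] at this
    rw [← hv] at this
    omega
  have hkey : ∀ i : Fin n, i.val ≠ 0 → σ (pidx n p i) = parc (σ i) := by
    intro i hi
    have hlt : i.val < n := i.isLt
    have hpe : p i.val = (σ.symm (parc (σ i))).val := by
      simp only [hpdef]
      rw [dif_pos hlt]
    have hplt : p i.val < n := by
      rw [hpe]
      exact (σ.symm (parc (σ i))).isLt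
    rw [pidx, dif_pos hplt]
    have : (⟨p i.val, hplt⟩ : Fin n) = σ.symm (parc (σ i)) := Fin.ext hpe
    rw [this, Equiv.apply_symm_apply]
  -- the map sending a nonzero vertex to the edge to its parent
  have hmemE : ∀ (v : {v : Fin n // v ≠ 0}), s(parc v.1, v.1) ∈ T.edgeFinset := by
    intro v
    rw [SimpleGraph.mem_edgeFinset, SimpleGraph.mem_edgeSet]
    exact (hpt v.1 v.2).1
  set E : {v : Fin n // v ≠ 0} → {e // e ∈ T.edgeFinset} :=
    fun v => ⟨s(parc v.1, v.1), hmemE v⟩ with hE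
  have hinj : Function.Injective E := by
    intro ⟨v, hv⟩ ⟨w, hw⟩ h
    have h1 : s(parc v, v) = s(parc w, w) := congrArg Subtype.val h
    rw [Sym2.eq_iff] at h1
    rcases h1 with ⟨_, h2⟩ | ⟨h2, h3⟩
    · exact Subtype.ext h2
    · exfalso
      have d1 := (hpt v hv).2
      have d2 := (hpt w hw).2
      rw [h2] at d1
      rw [← h3] at d2
      omega
  have hcard : Fintype.card {v : Fin n // v ≠ 0} = Fintype.card {e // e ∈ T.edgeFinset} := by
    have h1 : Fintype.card {v : Fin n // v ≠ 0} = n - 1 := by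
      have h2 : Fintype.card {v : Fin n // ¬ (v = 0)} = Fintype.card (Fin n)
          - Fintype.card {v : Fin n // v = 0} := Fintype.card_subtype_compl _
      rw [Fintype.card_subtype_eq (0 : Fin n), Fintype.card_fin] at h2
      exact h2
    have h3 : Fintype.card {e // e ∈ T.edgeFinset} = n - 1 := by
      have h4 := hT.card_edgeFinset
      rw [Fintype.card_fin] at h4
      have h5 : Fintype.card {e // e ∈ T.edgeFinset} = T.edgeFinset.card :=
        Fintype.card_coe _
      omega
    omega
  have hsurj : Function.Surjective E :=
    ((Fintype.bijective_iff_injective_and_card E).mpr ⟨hinj, hcard⟩).surjective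
  refine ⟨σ, p, hp, ?_⟩
  intro u v
  constructor
  · intro hadj
    have hmem : s(u, v) ∈ T.edgeFinset := by
      rw [SimpleGraph.mem_edgeFinset, SimpleGraph.mem_edgeSet]
      exact hadj
    obtain ⟨⟨w, hw⟩, hEw⟩ := hsurj ⟨s(u, v), hmem⟩
    have h1 : s(parc w, w) = s(u, v) := congrArg Subtype.val hEw
    refine ⟨σ.symm w, ?_, ?_⟩
    · intro h0
      have : σ.symm w = 0 := Fin.ext h0
      have : w = σ 0 := by
        rw [← this, Equiv.apply_symm_apply]
      rw [hσ0] at this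
      exact hw this
    · have hi0 : (σ.symm w).val ≠ 0 := by
        intro h0
        have h2 : σ.symm w = 0 := Fin.ext h0
        have h3 : w = σ 0 := by rw [← h2, Equiv.apply_symm_apply]
        rw [hσ0] at h3
        exact hw h3
      have h2 : σ (pidx n p (σ.symm w)) = parc w := by
        have := hkey (σ.symm w) hi0
        rwa [Equiv.apply_symm_apply] at this
      have h3 : σ (σ.symm w) = w := Equiv.apply_symm_apply σ w
      rw [Sym2.eq_iff] at h1
      rcases h1 with ⟨ha, hb⟩ | ⟨ha, hb⟩
      · exact Or.inr ⟨by rw [h3, ← hb], by rw [h2, ← ha]⟩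
      · exact Or.inl ⟨by rw [h3, ← hb], by rw [h2, ← ha]⟩
  · rintro ⟨i, hi0, hcase⟩
    have h2 : σ (pidx n p i) = parc (σ i) := hkey i hi0
    have hvne : σ i ≠ 0 := hσne i hi0
    have hadj : T.Adj (parc (σ i)) (σ i) := (hpt (σ i) hvne).1
    rcases hcase with ⟨ha, hb⟩ | ⟨ha, hb⟩
    · rw [ha, hb, h2]
      exact hadj.symm
    · rw [ha, hb, h2]
      exact hadj

/-- The number of `H`-colorings of a simple graph `G`, where the target graph `H`
is given by a (possibly reflexive) adjacency relation `HAdj` on a finite vertex set. -/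
noncomputable def homCount {VG VH : Type} [Fintype VG] [Fintype VH]
    (G : SimpleGraph VG) (HAdj : VH → VH → Prop) : ℕ :=
  Nat.card {f : VG → VH // ∀ u v : VG, G.Adj u v → HAdj (f u) (f v)}

namespace HL

variable {VH : Type} [Fintype VH] (HAdj : VH → VH → Prop)

open Classical in
lemma chi_eq (n : ℕ) (p : ℕ → ℕ) (f : Fin n → VH) (i : Fin n) : chi HAdj n p f i
    = if ((i.val ≠ 0 ∧ p i.val < n) → HAdj (f (pidx n p i)) (f i)) then 1 else 0 := by
  rw [chi]
  by_cases h : i.val ≠ 0 ∧ p i.val < n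
  · rw [dif_pos h]
    have he : (⟨p i.val, h.2⟩ : Fin n) = pidx n p i := by rw [pidx, dif_pos h.2]
    rw [he]
    by_cases hh : HAdj (f (pidx n p i)) (f i)
    · rw [if_pos hh, if_pos (fun _ => hh)]
    · rw [if_neg hh, if_neg (fun hc => hh (hc h))]
  · rw [dif_neg h, if_pos (fun hc => absurd hc h)]

lemma homCount_eq_CNT (n : ℕ) (T : SimpleGraph (Fin n)) (hsymm : Symmetric HAdj)
    (σ : Equiv.Perm (Fin n)) (p : ℕ → ℕ) (hp : ∀ i, 0 < i → i < n → p i < i)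
    (hedge : ∀ u v : Fin n, T.Adj u v ↔ ∃ i : Fin n, i.val ≠ 0 ∧
      ((u = σ i ∧ v = σ (pidx n p i)) ∨ (v = σ i ∧ u = σ (pidx n p i)))) :
    homCount T HAdj = CNT HAdj n p (fun _ _ => 1) := by
  classical
  rw [homCount, natCard_subtype_eq_sum, CNT]
  rw [← Equiv.sum_comp (Equiv.arrowCongr σ.symm (Equiv.refl VH))
      (fun f : Fin n → VH => ∏ i : Fin n, ((1:ℕ) * chi HAdj n p f i))]
  apply Finset.sum_congr rfl
  intro g _
  have hge : ∀ x : Fin n, (Equiv.arrowCongr σ.symm (Equiv.refl VH)) g x = g (σ x) := by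
    intro x
    simp [Equiv.arrowCongr]
  have hprod : (∏ i : Fin n, ((1:ℕ)
        * chi HAdj n p ((Equiv.arrowCongr σ.symm (Equiv.refl VH)) g) i))
      = if (∀ i : Fin n, ((i.val ≠ 0 ∧ p i.val < n) →
          HAdj (g (σ (pidx n p i))) (g (σ i)))) then 1 else 0 := by
    have h1 : (∏ i : Fin n, ((1:ℕ)
          * chi HAdj n p ((Equiv.arrowCongr σ.symm (Equiv.refl VH)) g) i))
        = ∏ i : Fin n, (if ((i.val ≠ 0 ∧ p i.val < n) →
            HAdj (g (σ (pidx n p i))) (g (σ i))) then 1 else 0) :=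
      Finset.prod_congr rfl (fun i _ => by rw [one_mul, chi_eq, hge, hge])
    rw [h1, Fintype.prod_boole]
    split_ifs with h2 <;> rfl
  rw [hprod]
  congr 1
  apply propext
  constructor
  · intro hhom i hC
    apply hhom
    rw [hedge]
    exact ⟨i, hC.1, Or.inr ⟨rfl, rfl⟩⟩
  · intro hconstr u v hadj
    rw [hedge] at hadj
    obtain ⟨i, hi0, hcase⟩ := hadj
    have hC : i.val ≠ 0 ∧ p i.val < n := by
      refine ⟨hi0, ?_⟩
      have := hp i.val (by omega) i.isLt
      have := i.isLt
      omega
    have h1 : HAdj (g (σ (pidx n p i))) (g (σ i)) := hconstr i hC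
    rcases hcase with ⟨ha, hb⟩ | ⟨ha, hb⟩
    · rw [ha, hb]
      exact hsymm h1
    · rw [ha, hb]
      exact h1

lemma pathGraph_edge (n : ℕ) :
    ∀ u v : Fin n, (SimpleGraph.pathGraph n).Adj u v ↔ ∃ i : Fin n, i.val ≠ 0 ∧
      ((u = (1 : Equiv.Perm (Fin n)) i ∧ v = (1 : Equiv.Perm (Fin n)) (pidx n (fun j => j - 1) i))
      ∨ (v = (1 : Equiv.Perm (Fin n)) i
        ∧ u = (1 : Equiv.Perm (Fin n)) (pidx n (fun j => j - 1) i))) := by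
  intro u v
  rw [SimpleGraph.pathGraph_adj]
  have hpidx : ∀ i : Fin n, (pidx n (fun j => j - 1) i).val = i.val - 1 := by
    intro i
    rw [pidx, dif_pos (by have := i.isLt; omega)]
  simp only [Equiv.Perm.coe_one, id_eq]
  constructor
  · intro h
    rcases h with h | h
    · exact ⟨v, by omega, Or.inr ⟨rfl, Fin.ext (by rw [hpidx]; omega)⟩⟩
    · exact ⟨u, by omega, Or.inl ⟨rfl, Fin.ext (by rw [hpidx]; omega)⟩⟩
  · rintro ⟨i, hi0, hcase⟩
    have := hpidx i
    rcases hcase with ⟨ha, hb⟩ | ⟨ha, hb⟩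
    · subst ha; subst hb
      right
      rw [hpidx]
      omega
    · subst ha; subst hb
      left
      rw [hpidx]
      omega

end HL

/-- **Theorem (orderings).** If the automorphic similarity classes of a target graph `H`
(possibly with loops) can be ordered so that the automorphic similarity matrix has the
increasing columns property, then `H` is Hoffman-London: for every `n ≥ 1` and every tree
`T` on `n` vertices, `hom(P_n, H) ≤ hom(T, H)`. -/
theorem ordering_framework
    {VH : Type} [Fintype VH]
    (HAdj : VH → VH → Prop) (hsymm : Symmetric HAdj)
    (k : ℕ) (cls : VH → Fin k) (hsurj : Function.Surjective cls)
    (hcls : ∀ u v : VH, cls u = cls v ↔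
      ∃ φ : VH ≃ VH, (∀ x y : VH, HAdj x y ↔ HAdj (φ x) (φ y)) ∧ φ u = v)
    (m : Fin k → Fin k → ℕ)
    (hm : ∀ (i j : Fin k) (v : VH), cls v = i →
      Nat.card {w : VH // HAdj v w ∧ cls w = j} = m i j)
    (hinc : ∀ (c i : Fin k) (hi : i.val + 1 < k),
      ∑ j : Fin k, (if c ≤ j then m i j else 0) ≤
      ∑ j : Fin k, (if c ≤ j then m ⟨i.val + 1, hi⟩ j else 0)) :
    ∀ n : ℕ, 1 ≤ n → ∀ T : SimpleGraph (Fin n), T.IsTree →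
      homCount (SimpleGraph.pathGraph n) HAdj ≤ homCount T HAdj := by
  intro n hn T hT
  classical
  have hppath : ∀ i, 0 < i → i < n → (fun j => j - 1) i < i := by
    intro i h1 h2
    show i - 1 < i
    omega
  have e1 : homCount (SimpleGraph.pathGraph n) HAdj
      = HL.CNT HAdj n (fun j => j - 1) (fun _ _ => 1) :=
    HL.homCount_eq_CNT HAdj n (SimpleGraph.pathGraph n) hsymm 1 (fun j => j - 1) hppath
      (HL.pathGraph_edge n)
  have e2 : HL.CNT HAdj n (fun j => j - 1) (fun _ _ => 1)
      = HL.homTop HAdj (fun _ _ => 1) (HL.mkF (fun j => j - 1) n) :=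
    HL.cnt_eq HAdj n hn (fun j => j - 1) hppath _
  have e4 : homCount (SimpleGraph.pathGraph n) HAdj = HL.homF HAdj (HL.pathC (n-1)) := by
    rw [e1, e2, HL.mkF_pred n hn, HL.homTop_one, HL.stripL_chainL]
  obtain ⟨σ, p, hp, hedge⟩ := tree_encoding n hn T hT
  have t1 : homCount T HAdj = HL.CNT HAdj n p (fun _ _ => 1) :=
    HL.homCount_eq_CNT HAdj n T hsymm σ p hp hedge
  have t2 : HL.CNT HAdj n p (fun _ _ => 1)
      = HL.homTop HAdj (fun _ _ => 1) (HL.mkF p n) :=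
    HL.cnt_eq HAdj n hn p hp _
  have t3 : homCount T HAdj = HL.homF HAdj (HL.stripL (HL.mkF p n)) := by
    rw [t1, t2, HL.homTop_one]
  obtain ⟨hnd, hmem⟩ := HL.labs_mkF p n hp
  have hsz : HL.sizeF (HL.stripL (HL.mkF p n)) = n - 1 := by
    rw [HL.sizeF_stripL, HL.labs_length _ n hnd hmem]
  have hmain := HL.path_min hsymm hsurj hm hinc (HL.stripL (HL.mkF p n))
  rw [hsz] at hmain
  rw [e4, t3]
  exact hmain
end

section
/- For all positive integers a and b, the complete bipartite graph K_{a,b} is Hoffman-London. Moreover, when a ≠ b, a tree T on n vertices minimizes hom(T, K_{a,b}) over all trees on n vertices if and only if the (unique) bipartition V(T) = X ∪ Y of T is balanced, i.e. |X| = |Y| if n is even and ||X| − |Y|| = 1 if n is odd. -/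
open SimpleGraph Finset

section HL_aux

/-- core arithmetic -/
def HLF (a b n p : ℕ) : ℕ := a^p * b^(n-p) + a^(n-p) * b^p

lemma HLF_symm {a b n p : ℕ} (hp : p ≤ n) : HLF a b n (n - p) = HLF a b n p := by
  unfold HLF
  rw [Nat.sub_sub_self hp, add_comm]

lemma step_half {a b : ℕ} (hab : a ≤ b) (p d : ℕ) :
    a^(p+1) * b^(p+d+1) + a^(p+d+1) * b^(p+1) ≤ a^p * b^(p+d+2) + a^(p+d+2) * b^p := by
  have h1 : a^(d+1) ≤ b^(d+1) := Nat.pow_le_pow_left hab _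
  have key : a * b^(d+1) + b * a^(d+1) ≤ a * a^(d+1) + b * b^(d+1) :=
    mul_add_mul_le_mul_add_mul hab h1
  calc a^(p+1) * b^(p+d+1) + a^(p+d+1) * b^(p+1)
      = a^p * b^p * (a * b^(d+1) + b * a^(d+1)) := by ring
    _ ≤ a^p * b^p * (a * a^(d+1) + b * b^(d+1)) := Nat.mul_le_mul_left _ key
    _ = a^p * b^(p+d+2) + a^(p+d+2) * b^p := by ring

lemma step_half_lt {a b : ℕ} (ha : 1 ≤ a) (hab : a < b) (p d : ℕ) :
    a^(p+1) * b^(p+d+1) + a^(p+d+1) * b^(p+1) < a^p * b^(p+d+2) + a^(p+d+2) * b^p := by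
  have h1 : a^(d+1) < b^(d+1) := Nat.pow_lt_pow_left hab (by omega)
  have key : a * b^(d+1) + b * a^(d+1) < a * a^(d+1) + b * b^(d+1) :=
    mul_add_mul_lt_mul_add_mul hab h1
  have hb : 1 ≤ b := le_trans ha hab.le
  have hpos : 0 < a^p * b^p := Nat.mul_pos (Nat.pow_pos ha) (Nat.pow_pos hb)
  calc a^(p+1) * b^(p+d+1) + a^(p+d+1) * b^(p+1)
      = a^p * b^p * (a * b^(d+1) + b * a^(d+1)) := by ring
    _ < a^p * b^p * (a * a^(d+1) + b * b^(d+1)) := Nat.mul_lt_mul_of_le_of_lt (le_refl _) key hpos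
    _ = a^p * b^(p+d+2) + a^(p+d+2) * b^p := by ring

lemma HLF_step {a b n p d : ℕ} (hn : n = 2*p + d + 2) :
    HLF a b n (p+1) ≤ HLF a b n p := by
  have h1 : n - (p+1) = p + d + 1 := by omega
  have h2 : n - p = p + d + 2 := by omega
  unfold HLF
  rw [h1, h2]
  rcases le_total a b with h | h
  · exact step_half h p d
  · have := step_half (a := b) (b := a) h p d
    ring_nf at this ⊢
    omega

lemma HLF_step_lt {a b n p d : ℕ} (ha : 1 ≤ a) (hb : 1 ≤ b) (hab : a ≠ b)
    (hn : n = 2*p + d + 2) : HLF a b n (p+1) < HLF a b n p := by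
  have h1 : n - (p+1) = p + d + 1 := by omega
  have h2 : n - p = p + d + 2 := by omega
  unfold HLF
  rw [h1, h2]
  rcases Nat.lt_or_ge a b with h | h
  · exact step_half_lt ha h p d
  · have hlt : b < a := by omega
    have := step_half_lt (a := b) (b := a) hb hlt p d
    ring_nf at this ⊢
    omega

lemma HLF_le_up {a b n p q : ℕ} (h2 : n ≤ 2*p) (hpq : p ≤ q) (hq : q ≤ n) :
    HLF a b n p ≤ HLF a b n q := by
  induction q, hpq using Nat.le_induction with
  | base => exact le_refl _
  | succ m hm ih =>
      have hmn : m ≤ n := by omega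
      have hstep : HLF a b n m ≤ HLF a b n (m+1) := by
        have e1 : HLF a b n m = HLF a b n ((n - m - 1) + 1) := by
          rw [show (n - m - 1) + 1 = n - m by omega, HLF_symm hmn]
        have e2 : HLF a b n (m+1) = HLF a b n (n - m - 1) := by
          rw [show n - m - 1 = n - (m+1) by omega, HLF_symm (by omega)]
        rw [e1, e2]
        exact HLF_step (d := 2*m - n) (by omega)
      exact le_trans (ih hmn) hstep

lemma HLF_lt_up {a b n p q : ℕ} (ha : 1 ≤ a) (hb : 1 ≤ b) (hab : a ≠ b)
    (h2 : n ≤ 2*p) (hpq : p < q) (hq : q ≤ n) :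
    HLF a b n p < HLF a b n q := by
  have hstep : HLF a b n p < HLF a b n (p+1) := by
    have e1 : HLF a b n p = HLF a b n ((n - p - 1) + 1) := by
      rw [show (n - p - 1) + 1 = n - p by omega, HLF_symm (by omega)]
    have e2 : HLF a b n (p+1) = HLF a b n (n - p - 1) := by
      rw [show n - p - 1 = n - (p+1) by omega, HLF_symm (by omega)]
    rw [e1, e2]
    exact HLF_step_lt ha hb hab (d := 2*p - n) (by omega)
  exact lt_of_lt_of_le hstep (HLF_le_up (by omega) (by omega) hq)

lemma HLF_mono {a b n p q : ℕ} (hp : p ≤ n) (hq : q ≤ n)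
    (h : (2*(p:ℤ) - n).natAbs ≤ (2*(q:ℤ) - n).natAbs) :
    HLF a b n p ≤ HLF a b n q := by
  rcases le_total (2*p) n with h1 | h1 <;> rcases le_total (2*q) n with h2 | h2
  · -- both low: replace by complements
    rw [← HLF_symm hp, ← HLF_symm hq]
    exact HLF_le_up (by omega) (by omega) (by omega)
  · rw [← HLF_symm hp]
    exact HLF_le_up (by omega) (by omega) hq
  · rw [← HLF_symm hq]
    exact HLF_le_up (by omega) (by omega) (by omega)
  · exact HLF_le_up h1 (by omega) hq

lemma HLF_strict {a b n p q : ℕ} (ha : 1 ≤ a) (hb : 1 ≤ b) (hab : a ≠ b)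
    (hp : p ≤ n) (hq : q ≤ n)
    (h : (2*(p:ℤ) - n).natAbs < (2*(q:ℤ) - n).natAbs) :
    HLF a b n p < HLF a b n q := by
  rcases le_total (2*p) n with h1 | h1 <;> rcases le_total (2*q) n with h2 | h2
  · rw [← HLF_symm hp, ← HLF_symm hq]
    exact HLF_lt_up ha hb hab (by omega) (by omega) (by omega)
  · rw [← HLF_symm hp]
    exact HLF_lt_up ha hb hab (by omega) (by omega) hq
  · rw [← HLF_symm hq]
    exact HLF_lt_up ha hb hab (by omega) (by omega) (by omega)
  · exact HLF_lt_up ha hb hab h1 (by omega) hq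

section coloring
variable {V : Type} {G : SimpleGraph V}

lemma color_eq_of_walk {c c' : V → Bool}
    (hc : ∀ u v, G.Adj u v → c u ≠ c v) (hc' : ∀ u v, G.Adj u v → c' u ≠ c' v)
    {u v : V} (w : G.Walk u v) : c u = c' u → c v = c' v := by
  induction w with
  | nil => exact id
  | cons hadj p ih =>
      rename_i x y z
      intro h
      apply ih
      have h1 := hc _ _ hadj
      have h2 := hc' _ _ hadj
      revert h1 h2 h
      cases c x <;> cases c y <;> cases c' x <;> cases c' y <;> simp

lemma color_cases [Nonempty V] (hG : G.Connected) {c c' : V → Bool}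
    (hc : ∀ u v, G.Adj u v → c u ≠ c v) (hc' : ∀ u v, G.Adj u v → c' u ≠ c' v) :
    (∀ v, c v = c' v) ∨ (∀ v, c v = !(c' v)) := by
  classical
  obtain ⟨v₀⟩ := ‹Nonempty V›
  by_cases h : c v₀ = c' v₀
  · left
    intro v
    exact color_eq_of_walk hc hc' (hG v₀ v).some h
  · right
    have hc'' : ∀ u v, G.Adj u v → (!(c' u)) ≠ (!(c' v)) := by
      intro u v hadj
      have := hc' u v hadj
      revert this; cases c' u <;> cases c' v <;> simp
    intro v
    exact color_eq_of_walk hc (c' := fun v => !(c' v)) hc'' (hG v₀ v).some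
      (Bool.eq_not_iff.mpr h)

end coloring

lemma adjK {a b : ℕ} (x y : Fin a ⊕ Fin b) :
    (completeBipartiteGraph (Fin a) (Fin b)).Adj x y ↔ x.isLeft ≠ y.isLeft := by
  cases x <;> cases y <;> simp [completeBipartiteGraph]

lemma card_side {a b : ℕ} (t : Bool) :
    Nat.card {x : Fin a ⊕ Fin b // x.isLeft = t} = bif t then a else b := by
  cases t
  · have : Function.Bijective (fun j : Fin b => (⟨Sum.inr j, rfl⟩ : {x : Fin a ⊕ Fin b // x.isLeft = false})) := by
      constructor
      · intro i j h
        simpa [Sum.inr.injEq] using Subtype.ext_iff.mp h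
      · rintro ⟨x, hx⟩
        cases x with
        | inl i => simp at hx
        | inr j => exact ⟨j, rfl⟩
    simpa using (Nat.card_eq_of_bijective _ this).symm
  · have : Function.Bijective (fun i : Fin a => (⟨Sum.inl i, rfl⟩ : {x : Fin a ⊕ Fin b // x.isLeft = true})) := by
      constructor
      · intro i j h
        simpa [Sum.inl.injEq] using Subtype.ext_iff.mp h
      · rintro ⟨x, hx⟩
        cases x with
        | inl i => exact ⟨i, rfl⟩
        | inr j => simp at hx
    simpa using (Nat.card_eq_of_bijective _ this).symm

lemma card_pattern {n a b : ℕ} (c : Fin n → Bool) :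
    Nat.card {f : Fin n → Fin a ⊕ Fin b // ∀ v, (f v).isLeft = c v} =
      a ^ (univ.filter fun v => c v = true).card *
        b ^ (n - (univ.filter fun v => c v = true).card) := by
  classical
  rw [Nat.card_congr (Equiv.subtypePiEquivPi (p := fun v x => Sum.isLeft x = c v)), Nat.card_pi]
  have : ∀ v : Fin n, Nat.card {x : Fin a ⊕ Fin b // x.isLeft = c v}
      = if c v = true then a else b := by
    intro v
    rw [card_side]
    cases c v <;> simp
  rw [Finset.prod_congr rfl (fun v _ => this v), Finset.prod_ite, Finset.prod_const,
    Finset.prod_const]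
  have := Finset.card_filter_add_card_filter_not (s := (univ : Finset (Fin n)))
    (p := fun v => c v = true)
  rw [Finset.card_univ, Fintype.card_fin] at this
  congr 1
  congr 1
  omega


lemma homCount_eq {n a b : ℕ} (hn : 1 ≤ n) (G : SimpleGraph (Fin n)) (hG : G.Connected)
    (c : Fin n → Bool) (hc : ∀ u v, G.Adj u v → c u ≠ c v) :
    homCount G (completeBipartiteGraph (Fin a) (Fin b)).Adj =
      HLF a b n (univ.filter fun v => c v = true).card := by
  classical
  have hne : Nonempty (Fin n) := ⟨⟨0, hn⟩⟩
  set P := (univ.filter fun v => c v = true).card with hP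
  have hPle : P ≤ n := by
    have := Finset.card_filter_le (univ : Finset (Fin n)) (fun v => c v = true)
    simpa using this
  have hiff : ∀ f : Fin n → Fin a ⊕ Fin b,
      (∀ u v, G.Adj u v → (completeBipartiteGraph (Fin a) (Fin b)).Adj (f u) (f v)) ↔
      ((∀ v, (f v).isLeft = c v) ∨ (∀ v, (f v).isLeft = !(c v))) := by
    intro f
    constructor
    · intro hf
      have hf' : ∀ u v, G.Adj u v → (f u).isLeft ≠ (f v).isLeft := by
        intro u v h
        exact (adjK _ _).mp (hf u v h)
      rcases color_cases hG (c := fun v => (f v).isLeft) hf' hc with h | h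
      · exact Or.inl h
      · exact Or.inr h
    · intro h u v hadj
      rw [adjK]
      have hcc := hc u v hadj
      rcases h with h | h <;> rw [h u, h v] <;>
        (revert hcc; cases c u <;> cases c v <;> simp)
  unfold homCount
  rw [Nat.card_congr (Equiv.subtypeEquivRight hiff)]
  have hdisj : Disjoint (fun f : Fin n → Fin a ⊕ Fin b => ∀ v, (f v).isLeft = c v)
      (fun f => ∀ v, (f v).isLeft = !(c v)) := by
    rw [Pi.disjoint_iff]
    intro f
    rw [Prop.disjoint_iff]
    rintro ⟨h1, h2⟩
    obtain ⟨v₀⟩ := hne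
    have := h1 v₀
    have := h2 v₀
    revert this
    cases c v₀ <;> simp_all
  rw [Nat.card_congr (subtypeOrEquiv _ _ hdisj), Nat.card_sum, card_pattern]
  have hneg : (univ.filter fun v => (!(c v)) = true).card = n - P := by
    have h1 : (univ.filter fun v => (!(c v)) = true) = (univ.filter fun v => ¬ (c v = true)) := by
      apply Finset.filter_congr
      intro x _
      cases c x <;> simp
    have := Finset.card_filter_add_card_filter_not (s := (univ : Finset (Fin n)))
      (p := fun v => c v = true)
    rw [Finset.card_univ, Fintype.card_fin] at this
    rw [h1]
    omega
  rw [card_pattern (c := fun v => !(c v)), hneg, Nat.sub_sub_self hPle]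
  rfl

lemma tree_dist_ne {V : Type} {G : SimpleGraph V} (hT : G.IsTree) (r : V) {u v : V}
    (hadj : G.Adj u v) : G.dist r u ≠ G.dist r v := by
  classical
  intro he
  have hconn := hT.isConnected
  obtain ⟨p, hp, hlen⟩ := (hconn r u).exists_path_of_dist
  by_cases hv : v ∈ p.support
  · have hq : (p.takeUntil v hv).IsPath := hp.takeUntil hv
    have hdle : G.dist r v ≤ (p.takeUntil v hv).length := SimpleGraph.dist_le _
    have hle : (p.takeUntil v hv).length ≤ p.length := Walk.length_takeUntil_le p hv
    have hspec := p.take_spec hv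
    have hlena := congrArg Walk.length hspec
    rw [Walk.length_append] at hlena
    have h0 : (p.dropUntil v hv).length = 0 := by omega
    have hvu : v = u := Walk.eq_of_length_eq_zero h0
    exact G.irrefl (hvu ▸ hadj)
  · have hp' : (Walk.cons hadj.symm p.reverse).IsPath := by
      rw [Walk.cons_isPath_iff]
      refine ⟨hp.reverse, ?_⟩
      rw [Walk.support_reverse, List.mem_reverse]
      exact hv
    obtain ⟨q, hq, hqlen⟩ := (hconn r v).exists_path_of_dist
    have huniq := hT.existsUnique_path r v
    have heq : (Walk.cons hadj.symm p.reverse).reverse = q :=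
      (huniq.unique (hp'.reverse) hq)
    have := congrArg Walk.length heq
    rw [Walk.length_reverse, Walk.length_cons, Walk.length_reverse] at this
    omega

lemma tree_coloring {n : ℕ} (hn : 1 ≤ n) {T : SimpleGraph (Fin n)} (hT : T.IsTree) :
    ∃ c : Fin n → Bool, ∀ u v, T.Adj u v → c u ≠ c v := by
  set r : Fin n := ⟨0, hn⟩
  refine ⟨fun v => decide (T.dist r v % 2 = 1), ?_⟩
  intro u v hadj
  have hconn := hT.isConnected
  have h1 : T.dist r u ≤ T.dist r v + 1 := by
    have ht := hconn.dist_triangle (u := r) (v := v) (w := u)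
    have : T.dist v u = 1 := (SimpleGraph.dist_eq_one_iff_adj).mpr hadj.symm
    omega
  have h2 : T.dist r v ≤ T.dist r u + 1 := by
    have ht := hconn.dist_triangle (u := r) (v := u) (w := v)
    have : T.dist u v = 1 := (SimpleGraph.dist_eq_one_iff_adj).mpr hadj
    omega
  have hne := tree_dist_ne hT r hadj
  simp only [ne_eq, decide_eq_decide]
  omega

lemma path_crossing {n i : ℕ} {u v : Fin n} (hu : u.val = i) (hv : v.val = i + 1) :
    ∀ {x y : Fin n} (p : (pathGraph n).Walk x y),
      x.val ≤ i → i < y.val → s(u, v) ∈ p.edges := by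
  intro x y p
  induction p with
  | nil => intro h1 h2; omega
  | cons hadj q ih =>
      rename_i x' z y'
      intro h1 h2
      by_cases hz : z.val ≤ i
      · exact List.mem_cons_of_mem _ (ih hz h2)
      · have hadj' := pathGraph_adj.mp hadj
        have hx : x' = u := Fin.ext (by omega)
        have hzz : z = v := Fin.ext (by omega)
        subst hx; subst hzz
        rw [Walk.edges_cons]
        exact List.mem_cons_self
lemma pathGraph_isTree {n : ℕ} (hn : 1 ≤ n) : (pathGraph n).IsTree := by
  obtain ⟨m, rfl⟩ : ∃ m, n = m + 1 := ⟨n - 1, by omega⟩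
  refine ⟨pathGraph_connected m, ?_⟩
  rw [isAcyclic_iff_forall_adj_isBridge]
  intro x y hadj
  rw [isBridge_iff_adj_and_forall_walk_mem_edges]
  intro p
  rcases pathGraph_adj.mp hadj with h | h
  · exact path_crossing rfl (by omega) p (by omega) (by omega)
  · have : s(y, x) ∈ p.reverse.edges :=
      path_crossing rfl (by omega) p.reverse (by omega) (by omega)
    rw [Walk.edges_reverse, List.mem_reverse] at this
    rwa [Sym2.eq_swap]

lemma path_coloring {n : ℕ} :
    ∀ u v : Fin n, (pathGraph n).Adj u v →
      (fun w : Fin n => decide (w.val % 2 = 0)) u ≠ (fun w : Fin n => decide (w.val % 2 = 0)) v := by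
  intro u v hadj
  have := pathGraph_adj.mp hadj
  simp only [ne_eq, decide_eq_decide]
  omega

lemma sum_range_even (n : ℕ) :
    (∑ i ∈ Finset.range n, if i % 2 = 0 then 1 else 0) = (n + 1) / 2 := by
  induction n with
  | zero => simp
  | succ m ih =>
      rw [Finset.sum_range_succ, ih]
      by_cases h : m % 2 = 0
      · rw [if_pos h]; omega
      · rw [if_neg h]; omega

lemma path_count {n : ℕ} :
    (univ.filter fun v : Fin n => (decide (v.val % 2 = 0)) = true).card = (n + 1) / 2 := by
  have h : (univ.filter fun v : Fin n => (decide (v.val % 2 = 0)) = true).card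
      = ∑ v : Fin n, (if v.val % 2 = 0 then 1 else 0) := by
    rw [Finset.card_filter]
    apply Finset.sum_congr rfl
    intro x _
    cases hx : decide (x.val % 2 = 0) <;> simp_all
  rw [h, Fin.sum_univ_eq_sum_range (fun i => if i % 2 = 0 then 1 else 0) n, sum_range_even]

end HL_aux

/-- **Theorem.** Every complete bipartite graph `K_{a,b}` is Hoffman-London.
Moreover, when `a ≠ b`, a tree `T` on `n` vertices minimizes the number of
`K_{a,b}`-colorings over all trees on `n` vertices if and only if the bipartition
`V(T) = X ∪ Y` of `T` is balanced, i.e. `|2|X| - n| ≤ 1`. -/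
theorem complete_bipartite_hoffman_london (a b : ℕ) (ha : 1 ≤ a) (hb : 1 ≤ b) :
    (∀ n : ℕ, 1 ≤ n → ∀ T : SimpleGraph (Fin n), T.IsTree →
      homCount (SimpleGraph.pathGraph n) (completeBipartiteGraph (Fin a) (Fin b)).Adj ≤
        homCount T (completeBipartiteGraph (Fin a) (Fin b)).Adj) ∧
    (a ≠ b → ∀ n : ℕ, 1 ≤ n → ∀ T : SimpleGraph (Fin n), T.IsTree →
      ((∀ T' : SimpleGraph (Fin n), T'.IsTree →
          homCount T (completeBipartiteGraph (Fin a) (Fin b)).Adj ≤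
            homCount T' (completeBipartiteGraph (Fin a) (Fin b)).Adj) ↔
        (∀ X : Finset (Fin n),
          (∀ u v : Fin n, T.Adj u v → (u ∈ X ↔ v ∉ X)) →
          (2 * (X.card : ℤ) - (n : ℤ)).natAbs ≤ 1))) := by
  constructor
  · -- Part 1: the path minimizes
    intro n hn T hT
    obtain ⟨c, hc⟩ := tree_coloring hn hT
    rw [homCount_eq hn _ (pathGraph_isTree hn).isConnected _ path_coloring,
        homCount_eq hn T hT.isConnected c hc, path_count]
    have hPle : (univ.filter fun v => c v = true).card ≤ n := by
      simpa using Finset.card_filter_le (univ : Finset (Fin n)) (fun v => c v = true)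
    exact HLF_mono (by omega) hPle (by omega)
  · -- Part 2
    intro hab n hn T hT
    obtain ⟨c, hc⟩ := tree_coloring hn hT
    set P := (univ.filter fun v => c v = true).card with hPdef
    have hPle : P ≤ n := by
      simpa [hPdef] using Finset.card_filter_le (univ : Finset (Fin n)) (fun v => c v = true)
    have hTct := homCount_eq (a := a) (b := b) hn T hT.isConnected c hc
    haveI hne : Nonempty (Fin n) := ⟨⟨0, hn⟩⟩
    constructor
    · intro hmin X hX
      -- first: P is balanced, by comparison against the path
      have hp1 := hmin _ (pathGraph_isTree hn)
      rw [hTct, homCount_eq hn _ (pathGraph_isTree hn).isConnected _ path_coloring,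
        path_count] at hp1
      rw [← hPdef] at hp1
      have hPbal : (2 * (P : ℤ) - n).natAbs ≤ 1 := by
        by_contra hcon
        have := HLF_strict (a := a) (b := b) ha hb hab (p := (n+1)/2) (q := P)
          (by omega) hPle (by omega)
        omega
      -- next: any proper bipartition X has the same size as P or n - P
      have hcX : ∀ u v, T.Adj u v →
          (fun w => decide (w ∈ X)) u ≠ (fun w => decide (w ∈ X)) v := by
        intro u v hadj
        have := hX u v hadj
        simp only [ne_eq, decide_eq_decide]
        tauto
      rcases color_cases hT.isConnected hcX hc with h | h
      · have hXeq : X = univ.filter fun v => c v = true := by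
          ext v
          have := h v
          simp only [Finset.mem_filter, Finset.mem_univ, true_and]
          rw [← this]
          simp
        rw [hXeq]
        exact hPbal
      · have hXc : X.card + P = n := by
          have hXeq : X = univ.filter fun v => ¬ (c v = true) := by
            ext v
            have := h v
            simp only [Finset.mem_filter, Finset.mem_univ, true_and]
            revert this
            cases hv : c v <;> simp
          have hsum := Finset.card_filter_add_card_filter_not
            (s := (univ : Finset (Fin n))) (p := fun v => c v = true)
          rw [Finset.card_univ, Fintype.card_fin] at hsum
          rw [hXeq]
          omega
        omega
    · intro hbal T' hT'
      have hPbal : (2 * (P : ℤ) - n).natAbs ≤ 1 := by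
        apply hbal (univ.filter fun v => c v = true)
        intro u v hadj
        have := hc u v hadj
        simp only [Finset.mem_filter, Finset.mem_univ, true_and]
        revert this
        cases hu : c u <;> cases hv : c v <;> simp
      obtain ⟨c', hc'⟩ := tree_coloring hn hT'
      rw [hTct, homCount_eq hn T' hT'.isConnected c' hc']
      have hP'le : (univ.filter fun v => c' v = true).card ≤ n := by
        simpa using Finset.card_filter_le (univ : Finset (Fin n)) (fun v => c' v = true)
      exact HLF_mono hPle hP'le (by omega)
end

section
/- Let H be a target graph that is not regular and has exactly two automorphic similarity classes H^1 and H^2, ordered so that the common degree of the vertices in H^1 is smaller than the common degree of the vertices in H^2 (loops contributing 1 to degree). If m_{1,2} ≤ m_{2,2} (every vertex of H^1 has at most as many neighbors in H^2 as every vertex of H^2 does), then H is Hoffman-London. If, in addition, some vertex of H has a neighbor in H^1 and a neighbor in H^2, then H is strongly Hoffman-London. -/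
set_option linter.unusedSectionVars false

namespace TAC

section Numeric

variable (p q r s : ℕ)

/-- The pair `(α_k, β_k)` of rooted path hom-counts by class. -/
def ab : ℕ → ℕ × ℕ
  | 0 => (1, 1)
  | k + 1 => (p * (ab k).1 + q * (ab k).2, r * (ab k).1 + s * (ab k).2)

@[simp] lemma ab_zero : ab p q r s 0 = (1, 1) := rfl

lemma ab_succ (k : ℕ) : ab p q r s (k + 1) =
    (p * (ab p q r s k).1 + q * (ab p q r s k).2,
     r * (ab p q r s k).1 + s * (ab p q r s k).2) := rfl

variable {p q r s a b : ℕ}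

/-- one-step monotonicity -/
lemma bstep (hqs : q ≤ s) (hd : p + q < r + s) {x y : ℕ} (h : x ≤ y) :
    p * x + q * y ≤ r * x + s * y := by
  rcases le_or_gt p r with h1 | h1
  · gcongr
  · zify
    have c1 : (0:ℤ) ≤ ((s:ℤ) - q) * ((y:ℤ) - x) := by
      apply mul_nonneg <;> simp <;> exact_mod_cast ‹_›
    have c2 : (0:ℤ) ≤ ((r:ℤ) + s - p - q) * (x:ℤ) := by
      apply mul_nonneg
      · have : (p:ℤ) + q < (r:ℤ) + s := by exact_mod_cast hd
        omega
      · positivity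
    nlinarith [c1, c2]

lemma s_pos (hqs : q ≤ s) (hd : p + q < r + s) (hb : 1 ≤ b) (haq : a * q = b * r) :
    1 ≤ s := by
  by_contra h
  have hs : s = 0 := by omega
  have hq : q = 0 := by omega
  have hr : 1 ≤ r := by omega
  have h0 : a * q = 0 := by rw [hq]; ring
  rw [haq] at h0
  rcases Nat.mul_eq_zero.mp h0 with h1 | h1 <;> omega

lemma B_pos (hqs : q ≤ s) (hd : p + q < r + s) (hb : 1 ≤ b) (haq : a * q = b * r) :
    ∀ k, 1 ≤ (ab p q r s k).2 := by
  intro k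
  induction k with
  | zero => simp
  | succ k ih =>
    rw [ab_succ]
    have hs := s_pos hqs hd hb haq
    have h1 : 1 ≤ s * (ab p q r s k).2 := Nat.one_le_iff_ne_zero.2 (by positivity)
    simp only []
    omega

lemma AleB (hqs : q ≤ s) (hd : p + q < r + s) :
    ∀ k, (ab p q r s k).1 ≤ (ab p q r s k).2 := by
  intro k
  induction k with
  | zero => simp
  | succ k ih => rw [ab_succ]; exact bstep hqs hd ih

lemma AltB (hqs : q ≤ s) (hd : p + q < r + s) (hb : 1 ≤ b) (haq : a * q = b * r) :
    ∀ k, 1 ≤ k → (ab p q r s k).1 < (ab p q r s k).2 := by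
  intro k hk
  induction k with
  | zero => omega
  | succ k ih =>
    rcases Nat.eq_zero_or_pos k with hk0 | hk0
    · subst hk0
      rw [ab_succ]; simpa using hd
    · have hAB := AleB hqs hd (p := p) (r := r) k
      have hB := B_pos hqs hd hb haq (p := p) (r := r) k
      have hAB' := ih hk0
      rw [ab_succ]
      simp only []
      set A := (ab p q r s k).1 with hA
      set B := (ab p q r s k).2 with hBdef
      have hA' : A = (ab p q r s k).1 := hA
      have hB' : B = (ab p q r s k).2 := hBdef
      clear_value A B
      rcases lt_or_eq_of_le hqs with hqs' | hqs'
      · clear hA' hB' hA hBdef ih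
        zify
        have e1 : (1:ℤ) ≤ (s:ℤ) - q := by
          have : (q:ℤ) < s := by exact_mod_cast hqs'
          omega
        have e2 : (1:ℤ) ≤ (B:ℤ) := by exact_mod_cast hB
        have e3 : (0:ℤ) ≤ (A:ℤ) := by positivity
        have e4 : (A:ℤ) ≤ B := by exact_mod_cast hAB
        have e5 : (p:ℤ) + q < (r:ℤ) + s := by exact_mod_cast hd
        have c1 : (1:ℤ) ≤ ((s:ℤ) - q) * (B:ℤ) := by nlinarith
        rcases le_or_gt p r with h1 | h1
        · have h1' : (p:ℤ) ≤ r := by exact_mod_cast h1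
          have c4 : (0:ℤ) ≤ ((r:ℤ) - p) * (A:ℤ) := by apply mul_nonneg <;> omega
          nlinarith
        · have h1' : (r:ℤ) < p := by exact_mod_cast h1
          have c2 : (0:ℤ) ≤ ((r:ℤ) + s - p - q) * (B:ℤ) := by apply mul_nonneg <;> omega
          have c3 : (0:ℤ) ≤ ((p:ℤ) - r) * ((B:ℤ) - A) := by apply mul_nonneg <;> omega
          nlinarith
      · -- q = s, so p < r, and A ≥ 1
        have hs1 := s_pos hqs hd hb haq
        have hA1 : 1 ≤ A := by
          have hk' : k = (k - 1) + 1 := by omega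
          obtain ⟨C, D, hCD⟩ : ∃ C D, ab p q r s (k-1) = (C, D) := ⟨_, _, rfl⟩
          have hBk : 1 ≤ D := by
            have := B_pos hqs hd hb haq (p := p) (r := r) (k - 1)
            rw [hCD] at this; exact this
          have hthis : A = p * C + q * D := by
            conv_lhs => rw [hA', hk']
            rw [ab_succ, hCD]
          have hq1 : 1 ≤ q := by omega
          have hqD : 1 ≤ q * D := Nat.one_le_iff_ne_zero.2 (by positivity)
          rw [hthis]
          exact le_trans hqD (Nat.le_add_left _ _)
        have hpr : p < r := by omega
        clear hA' hB' hA hBdef ih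
        zify
        have e2 : (1:ℤ) ≤ (B:ℤ) := by exact_mod_cast hB
        have e4 : (A:ℤ) ≤ B := by exact_mod_cast hAB
        have h1 : (1:ℤ) ≤ (r:ℤ) - p := by
          have : (p:ℤ) < r := by exact_mod_cast hpr
          omega
        have h2 : (1:ℤ) ≤ (A:ℤ) := by exact_mod_cast hA1
        have c1 : (1:ℤ) ≤ ((r:ℤ) - p) * (A:ℤ) := by nlinarith
        have hq' : (q:ℤ) = s := by exact_mod_cast hqs'
        have c1' : (p:ℤ) * A + 1 ≤ (r:ℤ) * A := by nlinarith [c1]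
        rw [hq']
        linarith [c1']

lemma swapkey (haq : a * q = b * r) (x y u v : ℕ) :
    a * (x * (p*u + q*v)) + b * (y * (r*u + s*v))
    = a * ((p*x + q*y) * u) + b * ((r*x + s*y) * v) := by
  have haqZ : (a:ℤ) * q = (b:ℤ) * r := by exact_mod_cast haq
  zify
  linear_combination ((x:ℤ) * v - (y:ℤ) * u) * haqZ

lemma idab (haq : a * q = b * r) : ∀ j i,
    a * ((ab p q r s i).1 * (ab p q r s j).1) + b * ((ab p q r s i).2 * (ab p q r s j).2)
    = a * (ab p q r s (i+j)).1 + b * (ab p q r s (i+j)).2 := by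
  intro j
  induction j with
  | zero => intro i; simp
  | succ j ih =>
    intro i
    have h1 := swapkey (p:=p) (q:=q) (r:=r) (s:=s) haq
      (ab p q r s i).1 (ab p q r s i).2 (ab p q r s j).1 (ab p q r s j).2
    calc a * ((ab p q r s i).1 * (ab p q r s (j+1)).1)
          + b * ((ab p q r s i).2 * (ab p q r s (j+1)).2)
        = a * ((ab p q r s i).1 * (p * (ab p q r s j).1 + q * (ab p q r s j).2))
          + b * ((ab p q r s i).2 * (r * (ab p q r s j).1 + s * (ab p q r s j).2)) := by
          rw [ab_succ]
      _ = a * ((p * (ab p q r s i).1 + q * (ab p q r s i).2) * (ab p q r s j).1)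
          + b * ((r * (ab p q r s i).1 + s * (ab p q r s i).2) * (ab p q r s j).2) := h1
      _ = a * ((ab p q r s (i+1)).1 * (ab p q r s j).1)
          + b * ((ab p q r s (i+1)).2 * (ab p q r s j).2) := by rw [ab_succ]
      _ = a * (ab p q r s (i+1+j)).1 + b * (ab p q r s (i+1+j)).2 := ih (i+1)
      _ = a * (ab p q r s (i+(j+1))).1 + b * (ab p q r s (i+(j+1))).2 := by
          rw [show i+1+j = i+(j+1) by omega]

lemma submult (hqs : q ≤ s) (hd : p + q < r + s) : ∀ i j,
    (ab p q r s (i+j)).1 ≤ (ab p q r s i).1 * (ab p q r s j).2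
    ∧ (ab p q r s (i+j)).2 ≤ (ab p q r s i).2 * (ab p q r s j).2 := by
  intro i
  induction i with
  | zero =>
    intro j
    constructor
    · simpa using AleB hqs hd (p := p) (r := r) j
    · simp
  | succ i ih =>
    intro j
    obtain ⟨h1, h2⟩ := ih j
    constructor
    · rw [show i+1+j = (i+j)+1 by omega, ab_succ, ab_succ]
      calc p * (ab p q r s (i+j)).1 + q * (ab p q r s (i+j)).2
          ≤ p * ((ab p q r s i).1 * (ab p q r s j).2)
            + q * ((ab p q r s i).2 * (ab p q r s j).2) := by gcongr
        _ = (p * (ab p q r s i).1 + q * (ab p q r s i).2) * (ab p q r s j).2 := by ring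
    · rw [show i+1+j = (i+j)+1 by omega, ab_succ, ab_succ]
      calc r * (ab p q r s (i+j)).1 + s * (ab p q r s (i+j)).2
          ≤ r * ((ab p q r s i).1 * (ab p q r s j).2)
            + s * ((ab p q r s i).2 * (ab p q r s j).2) := by gcongr
        _ = (r * (ab p q r s i).1 + s * (ab p q r s i).2) * (ab p q r s j).2 := by ring

lemma submult_strict (hqs : q ≤ s) (hd : p + q < r + s) (hb : 1 ≤ b)
    (haq : a * q = b * r) (hr : 1 ≤ r) : ∀ i j, 1 ≤ i → 1 ≤ j →
    (ab p q r s (i+j)).2 + 1 ≤ (ab p q r s i).2 * (ab p q r s j).2 := by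
  intro i
  induction i with
  | zero => intro j hi _; omega
  | succ i ih =>
    intro j _ hj
    rcases Nat.eq_zero_or_pos i with hi0 | hi0
    · subst hi0
      have hab1 : (ab p q r s 1).2 = r + s := by rw [ab_succ]; simp
      rw [show 0+1+j = j+1 by omega, ab_succ, hab1]
      have hAB := AltB hqs hd hb (a := a) haq j hj
      have key : r * (ab p q r s j).1 + r ≤ r * (ab p q r s j).2 := by
        calc r * (ab p q r s j).1 + r = r * ((ab p q r s j).1 + 1) := by ring
          _ ≤ r * (ab p q r s j).2 := Nat.mul_le_mul_left _ (by omega)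
      have expand : (r + s) * (ab p q r s j).2
          = r * (ab p q r s j).2 + s * (ab p q r s j).2 := by ring
      simp only [expand]
      have : r * (ab p q r s j).1 + 1 ≤ r * (ab p q r s j).1 + r := by omega
      omega
    · have hsub1 := (submult hqs hd (p := p) (r := r) i j).1
      have hstr := ih j hi0 hj
      have hs := s_pos (a := a) hqs hd hb haq
      rw [show i+1+j = (i+j)+1 by omega, ab_succ, ab_succ]
      have k1 : r * (ab p q r s (i+j)).1
          ≤ r * ((ab p q r s i).1 * (ab p q r s j).2) := by gcongr
      have k2 : s * (ab p q r s (i+j)).2 + s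
          ≤ s * ((ab p q r s i).2 * (ab p q r s j).2) := by
        calc s * (ab p q r s (i+j)).2 + s = s * ((ab p q r s (i+j)).2 + 1) := by ring
          _ ≤ s * ((ab p q r s i).2 * (ab p q r s j).2) := Nat.mul_le_mul_left _ hstr
      have expand : (r * (ab p q r s i).1 + s * (ab p q r s i).2) * (ab p q r s j).2
          = r * ((ab p q r s i).1 * (ab p q r s j).2)
            + s * ((ab p q r s i).2 * (ab p q r s j).2) := by ring
      simp only [expand]
      omega

lemma merge (hqs : q ≤ s) (hd : p + q < r + s) (haq : a * q = b * r)
    (i j z0 z1 : ℕ) (hz : z0 ≤ z1) :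
    a * z0 * (ab p q r s (i+j)).1 + b * z1 * (ab p q r s (i+j)).2
    ≤ a * z0 * ((ab p q r s i).1 * (ab p q r s j).1)
      + b * z1 * ((ab p q r s i).2 * (ab p q r s j).2) := by
  obtain ⟨d, rfl⟩ := Nat.exists_eq_add_of_le hz
  have hid := idab (p := p) (s := s) haq j i
  have hsub := (submult hqs hd (p := p) (r := r) i j).2
  calc a * z0 * (ab p q r s (i+j)).1 + b * (z0 + d) * (ab p q r s (i+j)).2
      = z0 * (a * ((ab p q r s (i+j)).1) + b * ((ab p q r s (i+j)).2))
        + d * (b * (ab p q r s (i+j)).2) := by ring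
    _ = z0 * (a * ((ab p q r s i).1 * (ab p q r s j).1)
        + b * ((ab p q r s i).2 * (ab p q r s j).2))
        + d * (b * (ab p q r s (i+j)).2) := by rw [← hid]
    _ ≤ z0 * (a * ((ab p q r s i).1 * (ab p q r s j).1)
        + b * ((ab p q r s i).2 * (ab p q r s j).2))
        + d * (b * ((ab p q r s i).2 * (ab p q r s j).2)) := by gcongr
    _ = a * z0 * ((ab p q r s i).1 * (ab p q r s j).1)
        + b * (z0 + d) * ((ab p q r s i).2 * (ab p q r s j).2) := by ring

lemma merge_strict (hqs : q ≤ s) (hd : p + q < r + s) (hb : 1 ≤ b)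
    (haq : a * q = b * r) (hr : 1 ≤ r)
    (i j z0 z1 : ℕ) (hz : z0 < z1) (hi : 1 ≤ i) (hj : 1 ≤ j) :
    a * z0 * (ab p q r s (i+j)).1 + b * z1 * (ab p q r s (i+j)).2 + 1
    ≤ a * z0 * ((ab p q r s i).1 * (ab p q r s j).1)
      + b * z1 * ((ab p q r s i).2 * (ab p q r s j).2) := by
  obtain ⟨d, hd1, rfl⟩ : ∃ d, 1 ≤ d ∧ z1 = z0 + d := ⟨z1 - z0, by omega, by omega⟩
  have hid := idab (p := p) (s := s) haq j i
  have hstr := submult_strict (a := a) hqs hd hb haq hr i j hi hj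
  have h2 : d * (b * (ab p q r s (i+j)).2) + d * b
      ≤ d * (b * ((ab p q r s i).2 * (ab p q r s j).2)) := by
    calc d * (b * (ab p q r s (i+j)).2) + d * b
        = d * (b * ((ab p q r s (i+j)).2 + 1)) := by ring
      _ ≤ d * (b * ((ab p q r s i).2 * (ab p q r s j).2)) :=
          Nat.mul_le_mul_left _ (Nat.mul_le_mul_left _ hstr)
  have h3 : 1 ≤ d * b := by
    calc 1 = 1 * 1 := by ring
      _ ≤ d * b := Nat.mul_le_mul hd1 hb
  have e1 : a * z0 * (ab p q r s (i+j)).1 + b * (z0 + d) * (ab p q r s (i+j)).2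
      = z0 * (a * ((ab p q r s (i+j)).1) + b * ((ab p q r s (i+j)).2))
        + d * (b * (ab p q r s (i+j)).2) := by ring
  have e2 : a * z0 * ((ab p q r s i).1 * (ab p q r s j).1)
      + b * (z0 + d) * ((ab p q r s i).2 * (ab p q r s j).2)
      = z0 * (a * ((ab p q r s i).1 * (ab p q r s j).1)
        + b * ((ab p q r s i).2 * (ab p q r s j).2))
        + d * (b * ((ab p q r s i).2 * (ab p q r s j).2)) := by ring
  rw [e1, e2, ← hid]
  omega

lemma L1id (haq : a * q = b * r) (u v : ℕ) :
    a * (p*u + q*v) + b * (r*u + s*v) = a * (p+q) * u + b * (r+s) * v := by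
  have haqZ : (a:ℤ) * q = (b:ℤ) * r := by exact_mod_cast haq
  zify
  linear_combination ((v:ℤ) - (u:ℤ)) * haqZ

lemma L2id (haq : a * q = b * r) (u v : ℕ) :
    b * (r*u + s*v) = a * q * u + b * s * v := by
  have haqZ : (a:ℤ) * q = (b:ℤ) * r := by exact_mod_cast haq
  zify
  linear_combination (-(u:ℤ)) * haqZ

lemma splitkey (haq : a * q = b * r) (y0 d u v : ℕ) :
    a * y0 * (p*u + q*v) + b * (y0 + d) * (r*u + s*v)
    = y0 * (a * (p+q) * u + b * (r+s) * v) + d * (a * q * u + b * s * v) := by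
  have haqZ : (a:ℤ) * q = (b:ℤ) * r := by exact_mod_cast haq
  zify
  linear_combination ((y0:ℤ) * v - (y0:ℤ) * u - (d:ℤ) * u) * haqZ

lemma childrep (haq : a * q = b * r) {xi yi x y : ℕ}
    (F1 : a*(p+q)*xi + b*(r+s)*yi ≤ a*(p+q)*x + b*(r+s)*y)
    (F2 : a*q*xi + b*s*yi ≤ a*q*x + b*s*y)
    (y0 y1 : ℕ) (hy : y0 ≤ y1) :
    a*y0*(p*xi+q*yi) + b*y1*(r*xi+s*yi) ≤ a*y0*(p*x+q*y) + b*y1*(r*x+s*y) := by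
  obtain ⟨d, rfl⟩ := Nat.exists_eq_add_of_le hy
  rw [splitkey haq, splitkey haq]
  exact Nat.add_le_add (Nat.mul_le_mul_left _ F1) (Nat.mul_le_mul_left _ F2)

lemma childrep_strict (haq : a * q = b * r) {xi yi x y : ℕ}
    (F1 : a*(p+q)*xi + b*(r+s)*yi + 1 ≤ a*(p+q)*x + b*(r+s)*y)
    (F2 : a*q*xi + b*s*yi ≤ a*q*x + b*s*y)
    (y0 y1 : ℕ) (hy0 : 1 ≤ y0) (hy : y0 ≤ y1) :
    a*y0*(p*xi+q*yi) + b*y1*(r*xi+s*yi) + 1 ≤ a*y0*(p*x+q*y) + b*y1*(r*x+s*y) := by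
  obtain ⟨d, rfl⟩ := Nat.exists_eq_add_of_le hy
  rw [splitkey haq, splitkey haq]
  have h1 : y0 * (a*(p+q)*xi + b*(r+s)*yi) + y0 ≤ y0 * (a*(p+q)*x + b*(r+s)*y) := by
    calc y0 * (a*(p+q)*xi + b*(r+s)*yi) + y0
        = y0 * ((a*(p+q)*xi + b*(r+s)*yi) + 1) := by ring
      _ ≤ y0 * (a*(p+q)*x + b*(r+s)*y) := Nat.mul_le_mul_left _ F1
  have h2 : d * (a*q*xi + b*s*yi) ≤ d * (a*q*x + b*s*y) := Nat.mul_le_mul_left _ F2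
  omega

end Numeric


section Graph

variable {VH : Type} [Fintype VH] (HAdj : VH → VH → Prop)

/-- Rooted hom count. -/
noncomputable def cnt {VG : Type} (G : SimpleGraph VG) (rt : VG) (v : VH) : ℕ :=
  Nat.card {f : VG → VH // (∀ u w : VG, G.Adj u w → HAdj (f u) (f w)) ∧ f rt = v}

variable {HAdj} (cls : VH → Fin 2)

lemma fin2cases (c : Fin 2) : c = 0 ∨ c = 1 := by
  rcases c with ⟨cv, hc⟩
  have h : cv = 0 ∨ cv = 1 := by omega
  rcases h with h | h
  · left; exact Fin.ext (by simp [h])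
  · right; exact Fin.ext (by simp [h])

lemma cnt_congr
    (hauto : ∀ u v : VH, cls u = cls v →
      ∃ φ : VH ≃ VH, (∀ x y : VH, HAdj x y ↔ HAdj (φ x) (φ y)) ∧ φ u = v)
    {VG : Type} (G : SimpleGraph VG) (rt : VG) {u v : VH}
    (h : cls u = cls v) : cnt HAdj G rt u = cnt HAdj G rt v := by
  obtain ⟨φ, hφ, hφu⟩ := hauto u v h
  apply Nat.card_congr
  refine Equiv.subtypeEquiv (Equiv.arrowCongr (Equiv.refl VG) φ) ?_
  intro f
  simp only [Equiv.arrowCongr_apply, Equiv.refl_symm, Equiv.coe_refl, Function.comp_def,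
    Function.comp, id]
  constructor
  · rintro ⟨h1, h2⟩
    exact ⟨fun a b hab => (hφ _ _).1 (h1 a b hab), by rw [h2, hφu]⟩
  · rintro ⟨h1, h2⟩
    refine ⟨fun a b hab => (hφ _ _).2 (h1 a b hab), φ.injective ?_⟩
    rw [h2, hφu]

/-- number of neighbours of `v` in class `j` -/
noncomputable def mcl (j : Fin 2) (v : VH) : ℕ :=
  Nat.card {w : VH // HAdj v w ∧ cls w = j}

lemma mcl_congr
    (hauto : ∀ u v : VH, cls u = cls v →
      ∃ φ : VH ≃ VH, (∀ x y : VH, HAdj x y ↔ HAdj (φ x) (φ y)) ∧ φ u = v)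
    (hfix : ∀ (φ : VH ≃ VH), (∀ x y : VH, HAdj x y ↔ HAdj (φ x) (φ y)) →
      ∀ w, cls (φ w) = cls w)
    (j : Fin 2) {u v : VH} (h : cls u = cls v) :
    mcl (HAdj := HAdj) cls j u = mcl (HAdj := HAdj) cls j v := by
  obtain ⟨φ, hφ, hφu⟩ := hauto u v h
  apply Nat.card_congr
  refine Equiv.subtypeEquiv φ ?_
  intro w
  rw [← hφu]
  constructor
  · rintro ⟨h1, h2⟩; exact ⟨(hφ _ _).1 h1, by rw [hfix φ hφ w]; exact h2⟩
  · rintro ⟨h1, h2⟩; exact ⟨(hφ _ _).2 h1, by rw [← hfix φ hφ w]; exact h2⟩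

lemma card_eq_sum_fibers {X : Type} [Fintype X] (P : X → Prop) (g : X → VH) :
    Nat.card {x : X // P x} = ∑ v : VH, Nat.card {x : X // P x ∧ g x = v} := by
  classical
  have e : {x : X // P x} ≃ Σ v : VH, {x : X // P x ∧ g x = v} :=
    { toFun := fun x => ⟨g x.1, ⟨x.1, x.2, rfl⟩⟩
      invFun := fun y => ⟨y.2.1, y.2.2.1⟩
      left_inv := fun x => rfl
      right_inv := fun y => by
        obtain ⟨v, x, hx, hv⟩ := y
        subst hv
        rfl }
  rw [Nat.card_congr e, Nat.card_eq_fintype_card, Fintype.card_sigma]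
  apply Finset.sum_congr rfl
  intro v _
  rw [Nat.card_eq_fintype_card]

lemma sum_class (F : VH → ℕ) (N0 N1 : ℕ)
    (hF0 : ∀ v, cls v = 0 → F v = N0) (hF1 : ∀ v, cls v = 1 → F v = N1) :
    ∑ v : VH, F v
      = Nat.card {v : VH // cls v = 0} * N0 + Nat.card {v : VH // cls v = 1} * N1 := by
  classical
  rw [Nat.card_eq_fintype_card, Nat.card_eq_fintype_card, Fintype.card_subtype,
    Fintype.card_subtype]
  rw [← Finset.sum_filter_add_sum_filter_not Finset.univ (fun v => cls v = 0)]
  have hne : Finset.univ.filter (fun v => ¬ cls v = 0)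
      = Finset.univ.filter (fun v => cls v = 1) := by
    ext v
    simp only [Finset.mem_filter, Finset.mem_univ, true_and]
    constructor
    · intro h
      rcases fin2cases (cls v) with h0 | h1
      · exact absurd h0 h
      · exact h1
    · intro h; rw [h]; exact one_ne_zero
  rw [hne]
  rw [Finset.sum_congr rfl (fun v hv => hF0 v (by simpa using hv)),
      Finset.sum_congr rfl (fun v hv => hF1 v (by simpa using hv))]
  rw [Finset.sum_const, Finset.sum_const, smul_eq_mul, smul_eq_mul]

lemma sum_class_cond (P : VH → Prop) [DecidablePred P] (F : VH → ℕ) (N0 N1 : ℕ)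
    (hF0 : ∀ v, P v → cls v = 0 → F v = N0) (hF1 : ∀ v, P v → cls v = 1 → F v = N1) :
    (∑ v : VH, if P v then F v else 0)
      = Nat.card {v : VH // P v ∧ cls v = 0} * N0
        + Nat.card {v : VH // P v ∧ cls v = 1} * N1 := by
  classical
  rw [Nat.card_eq_fintype_card, Nat.card_eq_fintype_card, Fintype.card_subtype,
    Fintype.card_subtype]
  rw [Finset.sum_ite, Finset.sum_const_zero, add_zero]
  rw [← Finset.sum_filter_add_sum_filter_not (Finset.univ.filter (fun v => P v))
    (fun v => cls v = 0)]
  have h1 : (Finset.univ.filter (fun v => P v)).filter (fun v => cls v = 0)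
      = Finset.univ.filter (fun v => P v ∧ cls v = 0) := by
    rw [Finset.filter_filter]
  have h2 : (Finset.univ.filter (fun v => P v)).filter (fun v => ¬ cls v = 0)
      = Finset.univ.filter (fun v => P v ∧ cls v = 1) := by
    rw [Finset.filter_filter]
    apply Finset.filter_congr
    intro v _
    constructor
    · rintro ⟨hp, hc⟩
      rcases fin2cases (cls v) with h0 | hone
      · exact absurd h0 hc
      · exact ⟨hp, hone⟩
    · rintro ⟨hp, hc⟩; exact ⟨hp, by rw [hc]; exact one_ne_zero⟩
  rw [h1, h2]
  have e0 : ∑ v ∈ Finset.univ.filter (fun v => P v ∧ cls v = 0), F v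
      = (Finset.univ.filter (fun v => P v ∧ cls v = 0)).card * N0 := by
    rw [Finset.sum_congr rfl (fun v hv => hF0 v (Finset.mem_filter.mp hv).2.1
      (Finset.mem_filter.mp hv).2.2), Finset.sum_const, smul_eq_mul]
  have e1 : ∑ v ∈ Finset.univ.filter (fun v => P v ∧ cls v = 1), F v
      = (Finset.univ.filter (fun v => P v ∧ cls v = 1)).card * N1 := by
    rw [Finset.sum_congr rfl (fun v hv => hF1 v (Finset.mem_filter.mp hv).2.1
      (Finset.mem_filter.mp hv).2.2), Finset.sum_const, smul_eq_mul]
  rw [e0, e1]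

lemma cnt_of_subsingleton {W : Type} (hsub : ∀ u w : W, u = w)
    (G : SimpleGraph W) (rt : W) (v : VH) : cnt HAdj G rt v = 1 := by
  have e : {f : W → VH // (∀ u w : W, G.Adj u w → HAdj (f u) (f w)) ∧ f rt = v} ≃ Unit :=
    { toFun := fun _ => Unit.unit
      invFun := fun _ => ⟨fun _ => v,
        ⟨fun u w h => absurd (hsub u w) (G.ne_of_adj h), rfl⟩⟩
      left_inv := fun f => by
        apply Subtype.ext
        funext w
        show v = f.1 w
        rw [hsub w rt] at *
        exact (f.2.2).symm
      right_inv := fun _ => rfl }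
  unfold cnt
  rw [Nat.card_congr e]
  simp

lemma homCount_eq_cnt {VG : Type} [Fintype VG] (G : SimpleGraph VG) (rt : VG)
    (v0 v1 : VH) (hv0 : cls v0 = 0) (hv1 : cls v1 = 1)
    (hauto : ∀ u v : VH, cls u = cls v →
      ∃ φ : VH ≃ VH, (∀ x y : VH, HAdj x y ↔ HAdj (φ x) (φ y)) ∧ φ u = v) :
    homCount G HAdj = Nat.card {v : VH // cls v = 0} * cnt HAdj G rt v0
      + Nat.card {v : VH // cls v = 1} * cnt HAdj G rt v1 := by
  classical
  rw [homCount]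
  rw [card_eq_sum_fibers (fun f : VG → VH => ∀ u w : VG, G.Adj u w → HAdj (f u) (f w))
    (fun f => f rt)]
  exact sum_class cls (fun v => cnt HAdj G rt v) _ _
    (fun v hv => cnt_congr cls hauto G rt (by rw [hv, hv0]))
    (fun v hv => cnt_congr cls hauto G rt (by rw [hv, hv1]))

lemma card_split_pred {X : Type} [Fintype X] (P Q : X → Prop) :
    Nat.card {x : X // P x} = Nat.card {x : X // P x ∧ Q x}
      + Nat.card {x : X // P x ∧ ¬ Q x} := by
  classical
  rw [← Nat.card_sum]
  apply Nat.card_congr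
  exact
    { toFun := fun x => if h : Q x.1 then Sum.inl ⟨x.1, x.2, h⟩ else Sum.inr ⟨x.1, x.2, h⟩
      invFun := fun y => Sum.elim (fun z => ⟨z.1, z.2.1⟩) (fun z => ⟨z.1, z.2.1⟩) y
      left_inv := by
        intro x
        by_cases h : Q x.1 <;> simp [h]
      right_inv := by
        rintro (y | y)
        · simp [y.2.2]
        · simp [y.2.2] }

lemma sum_ind (c : VH → Prop) [DecidablePred c] (k : ℕ) :
    (∑ v : VH, if c v then k else 0) = Nat.card {v : VH // c v} * k := by
  classical
  rw [Finset.sum_ite, Finset.sum_const_zero, add_zero, Finset.sum_const, smul_eq_mul,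
    Nat.card_eq_fintype_card, Fintype.card_subtype]

end Graph

section Split

open SimpleGraph

variable {VG : Type} [Fintype VG]

variable (T : SimpleGraph VG) (rt x : VG)

/-- `T` with the edge `rt-x` deleted. -/
def Tdel : SimpleGraph VG := T.deleteEdges {s(rt, x)}

/-- the side of `rt` -/
def sideA : Set VG := {w | (Tdel T rt x).Reachable rt w}

/-- the side of `x` -/
def sideB : Set VG := {w | (Tdel T rt x).Reachable x w}

variable {T rt x}

lemma Tdel_le {u w : VG} (h : (Tdel T rt x).Adj u w) : T.Adj u w :=
  (SimpleGraph.deleteEdges_adj.mp h).1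

lemma mem_rtA : rt ∈ sideA T rt x := Reachable.refl rt

lemma mem_xB : x ∈ sideB T rt x := Reachable.refl x

lemma adj_cases {u w : VG} (h : T.Adj u w) :
    (Tdel T rt x).Adj u w ∨ (u = rt ∧ w = x) ∨ (u = x ∧ w = rt) := by
  by_cases he : s(u, w) = s(rt, x)
  · rcases Sym2.eq_iff.mp he with ⟨h1, h2⟩ | ⟨h1, h2⟩
    · right; left; exact ⟨h1, h2⟩
    · right; right; exact ⟨h1, h2⟩
  · left
    rw [Tdel, SimpleGraph.deleteEdges_adj]
    exact ⟨h, by simpa using he⟩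

lemma not_reach (hT : T.IsTree) (hadj : T.Adj rt x) :
    ¬ (Tdel T rt x).Reachable rt x := by
  have hbr := SimpleGraph.isAcyclic_iff_forall_adj_isBridge.mp hT.IsAcyclic hadj
  exact SimpleGraph.isBridge_iff.mp hbr

lemma side_step {u w : VG} (hstep : u ∈ sideA T rt x ∨ u ∈ sideB T rt x)
    (h : T.Adj u w) : w ∈ sideA T rt x ∨ w ∈ sideB T rt x := by
  rcases adj_cases (rt := rt) (x := x) h with h' | ⟨h1, h2⟩ | ⟨h1, h2⟩
  · rcases hstep with hA | hB
    · exact Or.inl (hA.trans h'.reachable)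
    · exact Or.inr (hB.trans h'.reachable)
  · subst h2; exact Or.inr (Reachable.refl _)
  · subst h2; exact Or.inl (Reachable.refl _)

lemma walk_cover {u w : VG} (p : T.Walk u w) :
    (u ∈ sideA T rt x ∨ u ∈ sideB T rt x) → (w ∈ sideA T rt x ∨ w ∈ sideB T rt x) := by
  induction p with
  | nil => exact id
  | cons h p ih => exact fun hu => ih (side_step hu h)

lemma side_cover (hT : T.IsTree) (w : VG) : w ∈ sideA T rt x ∨ w ∈ sideB T rt x := by
  obtain ⟨p⟩ := hT.isConnected.preconnected rt w
  exact walk_cover p (Or.inl mem_rtA)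

lemma sideB_eq_compl (hT : T.IsTree) (hadj : T.Adj rt x) :
    sideB T rt x = (sideA T rt x)ᶜ := by
  ext w
  constructor
  · intro hB hA
    exact not_reach hT hadj (Reachable.trans hA (Reachable.symm hB))
  · intro hA
    rcases side_cover (rt := rt) (x := x) hT w with h | h
    · exact absurd h hA
    · exact h

lemma cross_edge (hT : T.IsTree) (hadj : T.Adj rt x) {u w : VG} (h : T.Adj u w)
    (hu : u ∈ sideA T rt x) (hw : w ∈ sideB T rt x) : u = rt ∧ w = x := by
  rcases adj_cases (rt := rt) (x := x) h with h' | ⟨h1, h2⟩ | ⟨h1, h2⟩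
  · exfalso
    exact not_reach hT hadj ((hu.trans h'.reachable).trans (Reachable.symm hw))
  · exact ⟨h1, h2⟩
  · exfalso
    rw [h1] at hu
    exact not_reach hT hadj hu

lemma reach_induce {S : Set VG}
    (hcl : ∀ u w : VG, u ∈ S → (Tdel T rt x).Adj u w → w ∈ S) :
    ∀ {u w : VG} (p : (Tdel T rt x).Walk u w) (hu : u ∈ S) (hw : w ∈ S),
      (T.induce S).Reachable ⟨u, hu⟩ ⟨w, hw⟩ := by
  intro u w p
  induction p with
  | nil => intro hu hw; exact Reachable.refl _
  | @cons u' v' w' h p ih =>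
    intro hu hw
    have hv : v' ∈ S := hcl _ _ hu h
    have h' : T.Adj u' v' := Tdel_le h
    have hadj2 : (T.induce S).Adj ⟨u', hu⟩ ⟨v', hv⟩ := h'
    exact (hadj2.reachable).trans (ih hv hw)

lemma tree_side (hT : T.IsTree) {S : Set VG} {z : VG} (hz : z ∈ S)
    (hreach : ∀ w, w ∈ S → (Tdel T rt x).Reachable z w)
    (hcl : ∀ u w : VG, u ∈ S → (Tdel T rt x).Adj u w → w ∈ S) :
    (T.induce S).IsTree := by
  constructor
  · rw [SimpleGraph.connected_iff]
    constructor
    · intro c c'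
      have key : ∀ c'' : ↥S, (T.induce S).Reachable ⟨z, hz⟩ c'' := by
        rintro ⟨w, hw⟩
        obtain ⟨p⟩ := hreach w hw
        exact reach_induce hcl p hz hw
      exact (key c).symm.trans (key c')
    · exact ⟨⟨z, hz⟩⟩
  · intro v c hc
    exact hT.IsAcyclic ((c.map (SimpleGraph.Embedding.induce (G := T) S).toHom))
      (hc.map (SimpleGraph.Embedding.induce (G := T) S).injective)

lemma sideA_tree (hT : T.IsTree) (hadj : T.Adj rt x) : (T.induce (sideA T rt x)).IsTree :=
  tree_side hT mem_rtA (fun _ hw => hw) (fun _ _ hu h => hu.trans h.reachable)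

lemma sideB_tree (hT : T.IsTree) (hadj : T.Adj rt x) : (T.induce (sideB T rt x)).IsTree :=
  tree_side hT mem_xB (fun _ hw => hw) (fun _ _ hu h => hu.trans h.reachable)

lemma card_split (hT : T.IsTree) (hadj : T.Adj rt x) :
    Nat.card ↥(sideA T rt x) + Nat.card ↥(sideB T rt x) = Nat.card VG := by
  classical
  rw [sideB_eq_compl hT hadj, ← Nat.card_sum]
  exact Nat.card_congr (Equiv.sumCompl (· ∈ sideA T rt x))

lemma exists_adj (hT : T.IsTree) (h2 : 2 ≤ Nat.card VG) (rt : VG) :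
    ∃ x, T.Adj rt x := by
  classical
  rw [Nat.card_eq_fintype_card] at h2
  have : Nontrivial VG := Fintype.one_lt_card_iff_nontrivial.mp (by omega)
  obtain ⟨y, hy⟩ := exists_ne rt
  obtain ⟨p⟩ := hT.isConnected.preconnected rt y
  cases p with
  | nil => exact absurd rfl hy
  | cons h p => exact ⟨_, h⟩

variable {VH : Type} [Fintype VH] {HAdj : VH → VH → Prop}

set_option maxHeartbeats 1000000 in
lemma cnt_split (hsymm : Symmetric HAdj) (hT : T.IsTree) (hadj : T.Adj rt x) (v : VH) :
    cnt HAdj T rt v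
    = cnt HAdj (T.induce (sideA T rt x)) ⟨rt, mem_rtA⟩ v
      * Nat.card {h : ↥(sideB T rt x) → VH //
          (∀ u w : ↥(sideB T rt x), (T.induce (sideB T rt x)).Adj u w → HAdj (h u) (h w))
          ∧ HAdj v (h ⟨x, mem_xB⟩)} := by
  classical
  have hBc := sideB_eq_compl hT hadj
  have hBmem : ∀ w : VG, w ∉ sideA T rt x → w ∈ sideB T rt x := by
    intro w hw; rw [hBc]; exact hw
  unfold cnt
  rw [← Nat.card_prod]
  apply Nat.card_congr
  refine
    { toFun := fun f =>
        (⟨fun a => f.1 a.1, ⟨fun u w h => f.2.1 u.1 w.1 h, f.2.2⟩⟩,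
         ⟨fun b0 => f.1 b0.1, ⟨fun u w h => f.2.1 u.1 w.1 h, ?_⟩⟩)
      invFun := fun gh =>
        ⟨fun w => if hw : w ∈ sideA T rt x then gh.1.1 ⟨w, hw⟩
          else gh.2.1 ⟨w, hBmem w hw⟩, ?_, ?_⟩
      left_inv := ?_
      right_inv := ?_ }
  · -- toFun edge condition
    dsimp only
    have h := f.2.1 rt x hadj
    rw [f.2.2] at h
    exact h
  · -- hom condition of glued function
    intro u w h
    dsimp only
    by_cases hu : u ∈ sideA T rt x <;> by_cases hw : w ∈ sideA T rt x
    · rw [dif_pos hu, dif_pos hw]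
      exact gh.1.2.1 ⟨u, hu⟩ ⟨w, hw⟩ h
    · obtain ⟨h1, h2⟩ := cross_edge hT hadj h hu (hBmem w hw)
      rw [dif_pos hu, dif_neg hw]
      have e2 : (⟨w, hBmem w hw⟩ : ↥(sideB T rt x)) = ⟨x, mem_xB⟩ := Subtype.ext h2
      rw [e2]
      have e1 : gh.1.1 ⟨u, hu⟩ = v := by
        have : (⟨u, hu⟩ : ↥(sideA T rt x)) = ⟨rt, mem_rtA⟩ := Subtype.ext h1
        rw [this]
        exact gh.1.2.2
      rw [e1]
      exact gh.2.2.2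
    · obtain ⟨h1, h2⟩ := cross_edge hT hadj h.symm hw (hBmem u hu)
      rw [dif_neg hu, dif_pos hw]
      have e2 : (⟨u, hBmem u hu⟩ : ↥(sideB T rt x)) = ⟨x, mem_xB⟩ := Subtype.ext h2
      rw [e2]
      have e1 : gh.1.1 ⟨w, hw⟩ = v := by
        have : (⟨w, hw⟩ : ↥(sideA T rt x)) = ⟨rt, mem_rtA⟩ := Subtype.ext h1
        rw [this]
        exact gh.1.2.2
      rw [e1]
      exact hsymm gh.2.2.2
    · rw [dif_neg hu, dif_neg hw]
      exact gh.2.2.1 ⟨u, hBmem u hu⟩ ⟨w, hBmem w hw⟩ h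
  · -- root value
    dsimp only
    rw [dif_pos mem_rtA]
    exact gh.1.2.2
  · -- left inverse
    intro f
    apply Subtype.ext
    funext w
    dsimp only
    by_cases hw : w ∈ sideA T rt x
    · rw [dif_pos hw]
    · rw [dif_neg hw]
  · -- right inverse
    intro gh
    apply Prod.ext
    · apply Subtype.ext
      funext a
      dsimp only
      rw [dif_pos a.2]
    · apply Subtype.ext
      funext b0
      have hb : ¬ (b0.1 ∈ sideA T rt x) :=
        (Set.ext_iff.mp hBc b0.1).mp b0.2
      dsimp only
      rw [dif_neg hb]

lemma nbr_factor (cls : VH → Fin 2) (v0 v1 : VH) (hv0 : cls v0 = 0) (hv1 : cls v1 = 1)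
    (hauto : ∀ u v : VH, cls u = cls v →
      ∃ φ : VH ≃ VH, (∀ x y : VH, HAdj x y ↔ HAdj (φ x) (φ y)) ∧ φ u = v)
    {W : Type} [Fintype W] (GB : SimpleGraph W) (x0 : W) (v : VH) :
    Nat.card {h : W → VH // (∀ u w : W, GB.Adj u w → HAdj (h u) (h w)) ∧ HAdj v (h x0)}
    = mcl (HAdj := HAdj) cls 0 v * cnt HAdj GB x0 v0
      + mcl (HAdj := HAdj) cls 1 v * cnt HAdj GB x0 v1 := by
  classical
  rw [card_eq_sum_fibers
    (fun h : W → VH => (∀ u w : W, GB.Adj u w → HAdj (h u) (h w)) ∧ HAdj v (h x0))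
    (fun h => h x0)]
  have hfib : ∀ w : VH,
      Nat.card {h : W → VH // ((∀ u w' : W, GB.Adj u w' → HAdj (h u) (h w'))
        ∧ HAdj v (h x0)) ∧ h x0 = w}
      = if HAdj v w then cnt HAdj GB x0 w else 0 := by
    intro w
    by_cases hw : HAdj v w
    · rw [if_pos hw]
      unfold cnt
      apply Nat.card_congr
      apply Equiv.subtypeEquiv (Equiv.refl _)
      intro h
      simp only [Equiv.refl_apply]
      constructor
      · rintro ⟨⟨h1, _⟩, h3⟩; exact ⟨h1, h3⟩
      · rintro ⟨h1, h3⟩; exact ⟨⟨h1, by rw [h3]; exact hw⟩, h3⟩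
    · rw [if_neg hw]
      have : IsEmpty {h : W → VH // ((∀ u w' : W, GB.Adj u w' → HAdj (h u) (h w'))
          ∧ HAdj v (h x0)) ∧ h x0 = w} := by
        refine ⟨fun h => hw ?_⟩
        rw [← h.2.2]
        exact h.2.1.2
      exact Nat.card_of_isEmpty
  rw [Finset.sum_congr rfl (fun w _ => hfib w)]
  exact sum_class_cond cls (fun w => HAdj v w) (fun w => cnt HAdj GB x0 w) _ _
    (fun w _ hw0 => cnt_congr cls hauto GB x0 (by rw [hw0, hv0]))
    (fun w _ hw1 => cnt_congr cls hauto GB x0 (by rw [hw1, hv1]))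

end Split


section Main

variable {VH : Type} [Fintype VH]

structure Pack (HAdj : VH → VH → Prop) (cls : VH → Fin 2) (v0 v1 : VH)
    (a b p q r s : ℕ) : Prop where
  hsymm : Symmetric HAdj
  hv0 : cls v0 = 0
  hv1 : cls v1 = 1
  hauto : ∀ u v : VH, cls u = cls v →
    ∃ φ : VH ≃ VH, (∀ x y : VH, HAdj x y ↔ HAdj (φ x) (φ y)) ∧ φ u = v
  ha : Nat.card {v : VH // cls v = 0} = a
  hb : Nat.card {v : VH // cls v = 1} = b
  hm00 : ∀ v, cls v = 0 → mcl (HAdj := HAdj) cls 0 v = p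
  hm01 : ∀ v, cls v = 0 → mcl (HAdj := HAdj) cls 1 v = q
  hm10 : ∀ v, cls v = 1 → mcl (HAdj := HAdj) cls 0 v = r
  hm11 : ∀ v, cls v = 1 → mcl (HAdj := HAdj) cls 1 v = s
  hqs : q ≤ s
  hd : p + q < r + s
  haq : a * q = b * r
  ha1 : 1 ≤ a
  hb1 : 1 ≤ b

variable {HAdj : VH → VH → Prop} {cls : VH → Fin 2} {v0 v1 : VH} {a b p q r s : ℕ}

lemma ab1_succ (k : ℕ) :
    (ab p q r s (k+1)).1 = p * (ab p q r s k).1 + q * (ab p q r s k).2 := rfl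

lemma ab2_succ (k : ℕ) :
    (ab p q r s (k+1)).2 = r * (ab p q r s k).1 + s * (ab p q r s k).2 := rfl

theorem MainW (P : Pack HAdj cls v0 v1 a b p q r s) : ∀ n : ℕ,
    ∀ (VG : Type) [Fintype VG] (T : SimpleGraph VG) (rt : VG),
    Nat.card VG = n → T.IsTree →
    cnt HAdj T rt v0 ≤ cnt HAdj T rt v1 ∧
    ∀ z0 z1 : ℕ, z0 ≤ z1 →
      a * z0 * (ab p q r s (n-1)).1 + b * z1 * (ab p q r s (n-1)).2
      ≤ a * z0 * cnt HAdj T rt v0 + b * z1 * cnt HAdj T rt v1 := by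
  intro n
  induction n using Nat.strong_induction_on with
  | _ n IH =>
    intro VG instVG T rt hn hT
    haveI : Nonempty VG := ⟨rt⟩
    have hpos : 0 < Nat.card VG := Nat.card_pos (α := VG)
    rcases Nat.lt_or_ge n 2 with hn2 | hn2
    · -- n = 1
      have hn1 : n = 1 := by omega
      have hsub : ∀ u w : VG, u = w := by
        intro u w
        have hcard : Fintype.card VG ≤ 1 := by
          rw [← Nat.card_eq_fintype_card, hn]; omega
        exact Fintype.card_le_one_iff.mp hcard u w
      rw [cnt_of_subsingleton hsub, cnt_of_subsingleton hsub]
      refine ⟨le_refl _, ?_⟩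
      intro z0 z1 hz
      subst hn1
      simp
    · -- n ≥ 2
      obtain ⟨x, hadj⟩ := exists_adj hT (by omega) rt
      haveI : Fintype ↥(sideA T rt x) := Fintype.ofFinite _
      haveI : Fintype ↥(sideB T rt x) := Fintype.ofFinite _
      set nA := Nat.card ↥(sideA T rt x) with hnA
      set nB := Nat.card ↥(sideB T rt x) with hnB
      have hsum : nA + nB = n := by rw [hnA, hnB, card_split hT hadj, hn]
      haveI : Nonempty ↥(sideA T rt x) := ⟨⟨rt, mem_rtA⟩⟩
      haveI : Nonempty ↥(sideB T rt x) := ⟨⟨x, mem_xB⟩⟩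
      have hApos : 0 < nA := Nat.card_pos (α := ↥(sideA T rt x))
      have hBpos : 0 < nB := Nat.card_pos (α := ↥(sideB T rt x))
      have HA := IH nA (by omega) ↥(sideA T rt x) (T.induce (sideA T rt x))
        ⟨rt, mem_rtA⟩ rfl (sideA_tree hT hadj)
      have HB := IH nB (by omega) ↥(sideB T rt x) (T.induce (sideB T rt x))
        ⟨x, mem_xB⟩ rfl (sideB_tree hT hadj)
      set NA0 := cnt HAdj (T.induce (sideA T rt x)) ⟨rt, mem_rtA⟩ v0 with hNA0
      set NA1 := cnt HAdj (T.induce (sideA T rt x)) ⟨rt, mem_rtA⟩ v1 with hNA1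
      set NB0 := cnt HAdj (T.induce (sideB T rt x)) ⟨x, mem_xB⟩ v0 with hNB0
      set NB1 := cnt HAdj (T.induce (sideB T rt x)) ⟨x, mem_xB⟩ v1 with hNB1
      have formula : ∀ v : VH, cnt HAdj T rt v
          = cnt HAdj (T.induce (sideA T rt x)) ⟨rt, mem_rtA⟩ v
            * (mcl (HAdj := HAdj) cls 0 v * NB0 + mcl (HAdj := HAdj) cls 1 v * NB1) := by
        intro v
        rw [cnt_split P.hsymm hT hadj v,
          nbr_factor cls v0 v1 P.hv0 P.hv1 P.hauto (T.induce (sideB T rt x)) ⟨x, mem_xB⟩ v]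
      have f0 : cnt HAdj T rt v0 = NA0 * (p * NB0 + q * NB1) := by
        rw [formula v0, P.hm00 v0 P.hv0, P.hm01 v0 P.hv0]
      have f1 : cnt HAdj T rt v1 = NA1 * (r * NB0 + s * NB1) := by
        rw [formula v1, P.hm10 v1 P.hv1, P.hm11 v1 P.hv1]
      have hX01 : p * NB0 + q * NB1 ≤ r * NB0 + s * NB1 := bstep P.hqs P.hd HB.1
      constructor
      · rw [f0, f1]
        exact Nat.mul_le_mul HA.1 hX01
      · intro z0 z1 hz
        rw [f0, f1]
        have hi : nB - 1 + 1 = nB := by omega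
        have hij : (nA - 1) + (nB - 1 + 1) = n - 1 := by omega
        have F1 := HB.2 (p+q) (r+s) (le_of_lt P.hd)
        have F2 := HB.2 q s P.hqs
        have hyy : z0 * (ab p q r s (nA-1)).1 ≤ z1 * (ab p q r s (nA-1)).2 :=
          Nat.mul_le_mul hz (AleB P.hqs P.hd (nA-1))
        have step1 := HA.2 (z0 * (p * NB0 + q * NB1)) (z1 * (r * NB0 + s * NB1))
          (Nat.mul_le_mul hz hX01)
        calc a * z0 * (ab p q r s (n-1)).1 + b * z1 * (ab p q r s (n-1)).2
            = a * z0 * (ab p q r s ((nA-1) + (nB-1+1))).1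
              + b * z1 * (ab p q r s ((nA-1) + (nB-1+1))).2 := by rw [hij]
          _ ≤ a * z0 * ((ab p q r s (nA-1)).1 * (ab p q r s (nB-1+1)).1)
              + b * z1 * ((ab p q r s (nA-1)).2 * (ab p q r s (nB-1+1)).2) :=
              merge P.hqs P.hd P.haq (nA-1) (nB-1+1) z0 z1 hz
          _ = a * (z0 * (ab p q r s (nA-1)).1)
                * (p * (ab p q r s (nB-1)).1 + q * (ab p q r s (nB-1)).2)
              + b * (z1 * (ab p q r s (nA-1)).2)
                * (r * (ab p q r s (nB-1)).1 + s * (ab p q r s (nB-1)).2) := by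
              rw [ab1_succ, ab2_succ]; ring
          _ ≤ a * (z0 * (ab p q r s (nA-1)).1) * (p * NB0 + q * NB1)
              + b * (z1 * (ab p q r s (nA-1)).2) * (r * NB0 + s * NB1) :=
              childrep P.haq F1 F2 _ _ hyy
          _ = a * (z0 * (p * NB0 + q * NB1)) * (ab p q r s (nA-1)).1
              + b * (z1 * (r * NB0 + s * NB1)) * (ab p q r s (nA-1)).2 := by ring
          _ ≤ a * (z0 * (p * NB0 + q * NB1)) * NA0
              + b * (z1 * (r * NB0 + s * NB1)) * NA1 := step1
          _ = a * z0 * (NA0 * (p * NB0 + q * NB1))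
              + b * z1 * (NA1 * (r * NB0 + s * NB1)) := by ring

end Main

section Path

open SimpleGraph

variable {VH : Type} [Fintype VH]

lemma pg_adj_succ {n : ℕ} (u w : Fin (n+1)) :
    (pathGraph (n+2)).Adj u.succ w.succ ↔ (pathGraph (n+1)).Adj u w := by
  simp only [pathGraph_adj, Fin.val_succ]
  omega

lemma pg_adj_one {n : ℕ} : (pathGraph (n+2)).Adj 0 1 := by
  rw [pathGraph_adj]
  left
  simp

lemma hom_path_succ {HAdj : VH → VH → Prop} (hsymm : Symmetric HAdj) {n : ℕ}
    (f : Fin (n+2) → VH) :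
    (∀ u w : Fin (n+2), (pathGraph (n+2)).Adj u w → HAdj (f u) (f w)) ↔
    (HAdj (f 0) (f 1)
      ∧ ∀ u w : Fin (n+1), (pathGraph (n+1)).Adj u w → HAdj (f u.succ) (f w.succ)) := by
  constructor
  · intro h
    exact ⟨h 0 1 pg_adj_one, fun u w hw => h _ _ ((pg_adj_succ u w).mpr hw)⟩
  · rintro ⟨h1, h2⟩ u w hw
    have hw' := pathGraph_adj.mp hw
    rcases Nat.eq_zero_or_pos u.val with hu | hu
    · have hw1 : w.val = 1 := by omega
      have hu0 : u = 0 := Fin.ext (by simpa using hu)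
      have hw2 : w = 1 := Fin.ext (by simpa using hw1)
      rw [hu0, hw2]
      exact h1
    · rcases Nat.eq_zero_or_pos w.val with hw0 | hw0
      · have hu1 : u.val = 1 := by omega
        have hu0 : u = 1 := Fin.ext (by simpa using hu1)
        have hw2 : w = 0 := Fin.ext (by simpa using hw0)
        rw [hu0, hw2]
        exact hsymm h1
      · have hun : u.val - 1 < n + 1 := by omega
        have hwn : w.val - 1 < n + 1 := by omega
        have hu' : u = (⟨u.val - 1, hun⟩ : Fin (n+1)).succ := Fin.ext (by
          simp only [Fin.val_succ]; omega)
        have hw'' : w = (⟨w.val - 1, hwn⟩ : Fin (n+1)).succ := Fin.ext (by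
          simp only [Fin.val_succ]; omega)
        rw [hu', hw'']
        apply h2
        rw [pathGraph_adj]
        simp only []
        omega

lemma cnt_path_reduce {HAdj : VH → VH → Prop} (hsymm : Symmetric HAdj) {n : ℕ} (v : VH) :
    cnt HAdj (pathGraph (n+2)) (0 : Fin (n+2)) v
    = Nat.card {g : Fin (n+1) → VH //
        (∀ u w : Fin (n+1), (pathGraph (n+1)).Adj u w → HAdj (g u) (g w))
        ∧ HAdj v (g 0)} := by
  unfold cnt
  apply Nat.card_congr
  refine
    { toFun := fun f => ⟨fun i => f.1 i.succ, ?_, ?_⟩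
      invFun := fun g => ⟨fun i => if h : i.val = 0 then v
        else g.1 ⟨i.val - 1, by omega⟩, ?_, ?_⟩
      left_inv := ?_
      right_inv := ?_ }
  · intro u w hw
    exact f.2.1 _ _ ((pg_adj_succ u w).mpr hw)
  · -- HAdj v (f 1)
    dsimp only
    have h := f.2.1 0 1 pg_adj_one
    rw [f.2.2] at h
    have e : (0 : Fin (n+1)).succ = (1 : Fin (n+2)) := by
      apply Fin.ext; simp
    rw [e]
    exact h
  · -- hom of glued function
    dsimp only
    rw [hom_path_succ hsymm]
    constructor
    · rw [dif_pos (by simp : (0 : Fin (n+2)).val = 0)]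
      rw [dif_neg (by simp : ¬ ((1 : Fin (n+2)).val = 0))]
      have e : (⟨(1 : Fin (n+2)).val - 1, by omega⟩ : Fin (n+1)) = 0 := by
        apply Fin.ext; simp
      rw [e]
      exact g.2.2
    · intro u w hw
      have key : ∀ u' : Fin (n+1),
          (if h : (u'.succ : Fin (n+2)).val = 0 then v
            else g.1 ⟨(u'.succ : Fin (n+2)).val - 1, by omega⟩) = g.1 u' := by
        intro u'
        rw [dif_neg (by simp [Fin.val_succ])]
        have e' : ((⟨(u'.succ : Fin (n+2)).val - 1, by omega⟩ : Fin (n+1))) = u' := by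
          apply Fin.ext
          simp only [Fin.val_succ, Nat.add_sub_cancel]
        rw [e']
      rw [key u, key w]
      exact g.2.1 u w hw
  · -- root value
    dsimp only
    rw [dif_pos (by simp : (0 : Fin (n+2)).val = 0)]
  · -- left inverse
    intro f
    apply Subtype.ext
    funext i
    dsimp only
    by_cases hi : i.val = 0
    · rw [dif_pos hi]
      have e : i = 0 := Fin.ext (by simpa using hi)
      rw [e]
      exact f.2.2.symm
    · rw [dif_neg hi]
      have e : (⟨i.val - 1, by omega⟩ : Fin (n+1)).succ = i := by
        apply Fin.ext
        simp only [Fin.val_succ]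
        omega
      rw [e]
  · -- right inverse
    intro g
    apply Subtype.ext
    funext i
    dsimp only
    rw [dif_neg (by simp [Fin.val_succ])]
    have e' : ((⟨(i.succ : Fin (n+2)).val - 1, by omega⟩ : Fin (n+1))) = i := by
      apply Fin.ext
      simp only [Fin.val_succ, Nat.add_sub_cancel]
    rw [e']

variable {HAdj : VH → VH → Prop} {cls : VH → Fin 2} {v0 v1 : VH} {a b p q r s : ℕ}

lemma cnt_path (P : Pack HAdj cls v0 v1 a b p q r s) : ∀ n : ℕ, ∀ v : VH,
    cnt HAdj (pathGraph (n+1)) (0 : Fin (n+1)) v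
    = if cls v = 0 then (ab p q r s n).1 else (ab p q r s n).2 := by
  intro n
  induction n with
  | zero =>
    intro v
    have hsub : ∀ u w : Fin 1, u = w := fun u w => Subsingleton.elim u w
    rw [cnt_of_subsingleton hsub]
    simp
  | succ n ih =>
    intro v
    rw [cnt_path_reduce P.hsymm v]
    rw [nbr_factor cls v0 v1 P.hv0 P.hv1 P.hauto (pathGraph (n+1)) (0 : Fin (n+1)) v]
    rw [ih v0, ih v1, if_pos P.hv0, if_neg (by rw [P.hv1]; exact one_ne_zero)]
    by_cases hv : cls v = 0
    · rw [if_pos hv, P.hm00 v hv, P.hm01 v hv, ab1_succ]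
    · have hv1' : cls v = 1 := by
        rcases fin2cases (cls v) with h | h
        · exact absurd h hv
        · exact h
      rw [if_neg hv, P.hm10 v hv1', P.hm11 v hv1', ab2_succ]

lemma homCount_path (P : Pack HAdj cls v0 v1 a b p q r s) (n : ℕ) :
    homCount (pathGraph (n+1)) HAdj = a * (ab p q r s n).1 + b * (ab p q r s n).2 := by
  rw [homCount_eq_cnt cls (pathGraph (n+1)) (0 : Fin (n+1)) v0 v1 P.hv0 P.hv1 P.hauto]
  rw [cnt_path P n v0, cnt_path P n v1, if_pos P.hv0,
    if_neg (by rw [P.hv1]; exact one_ne_zero), P.ha, P.hb]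

end Path

section PEsec

open SimpleGraph

variable {VG : Type} [Fintype VG]

/-- `T` is a path with endpoint `rt` (encoded via an explicit equivalence). -/
def PE (n : ℕ) (T : SimpleGraph VG) (rt : VG) : Prop :=
  ∃ e : Fin n ≃ VG, (∀ i j : Fin n, (pathGraph n).Adj i j ↔ T.Adj (e i) (e j))
    ∧ ∀ h0 : 0 < n, e ⟨0, h0⟩ = rt

lemma PE_iso {n : ℕ} {T : SimpleGraph VG} {rt : VG} (h : PE n T rt) :
    Nonempty (T ≃g pathGraph n) := by
  obtain ⟨e, he, -⟩ := h
  refine ⟨{ toEquiv := e.symm, map_rel_iff' := ?_ }⟩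
  intro u w
  show (pathGraph n).Adj (e.symm u) (e.symm w) ↔ T.Adj u w
  rw [he (e.symm u) (e.symm w), e.apply_symm_apply, e.apply_symm_apply]

lemma PE_one {T : SimpleGraph VG} (h1 : Nat.card VG = 1) (rt : VG) : PE 1 T rt := by
  have hsub : ∀ u w : VG, u = w := by
    rw [Nat.card_eq_fintype_card] at h1
    exact Fintype.card_le_one_iff.mp (by omega)
  refine ⟨{ toFun := fun _ => rt
            invFun := fun _ => 0
            left_inv := fun i => Subsingleton.elim _ _
            right_inv := fun w => hsub rt w }, ?_, ?_⟩
  · intro i j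
    constructor
    · intro hadj
      exact (((pathGraph 1).ne_of_adj hadj) (Subsingleton.elim i j)).elim
    · intro hadj
      exact absurd hadj (T.loopless.irrefl rt)
  · intro h0; rfl

variable {T : SimpleGraph VG} {rt x : VG}

lemma sideA_singleton (huniq : ∀ y, T.Adj rt y → y = x) :
    ∀ w ∈ sideA T rt x, w = rt := by
  intro w hw
  obtain ⟨pw⟩ := hw
  cases pw with
  | nil => rfl
  | cons h pwt =>
    exfalso
    have h' := SimpleGraph.deleteEdges_adj.mp h
    have := huniq _ h'.1
    apply h'.2
    rw [this]
    rfl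

lemma nA_one (hT : T.IsTree) (hadj : T.Adj rt x) (huniq : ∀ y, T.Adj rt y → y = x) :
    Nat.card ↥(sideA T rt x) = 1 := by
  classical
  haveI : Fintype ↥(sideA T rt x) := Fintype.ofFinite _
  haveI : Nonempty ↥(sideA T rt x) := ⟨⟨rt, mem_rtA⟩⟩
  have hsub : ∀ u w : ↥(sideA T rt x), u = w := fun u w =>
    Subtype.ext ((sideA_singleton huniq _ u.2).trans (sideA_singleton huniq _ w.2).symm)
  have h1 : Fintype.card ↥(sideA T rt x) ≤ 1 := Fintype.card_le_one_iff.mpr hsub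
  have h2 : 0 < Nat.card ↥(sideA T rt x) := Nat.card_pos
  rw [Nat.card_eq_fintype_card]
  rw [Nat.card_eq_fintype_card] at h2
  omega

set_option maxHeartbeats 1000000 in
lemma PE_glue (hT : T.IsTree) (hadj : T.Adj rt x) (huniq : ∀ y, T.Adj rt y → y = x)
    {m : ℕ} (hPE : PE (m+1) (T.induce (sideB T rt x)) ⟨x, mem_xB⟩) :
    PE (m+2) T rt := by
  classical
  have hBmem : ∀ w : VG, w ≠ rt → w ∈ sideB T rt x := by
    intro w hw
    rcases side_cover (rt := rt) (x := x) hT w with h | h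
    · exact absurd (sideA_singleton huniq w h) hw
    · exact h
  have hrtB : rt ∉ sideB T rt x := by
    intro h
    exact (Set.ext_iff.mp (sideB_eq_compl hT hadj) rt).mp h mem_rtA
  obtain ⟨e', he', hx'⟩ := hPE
  have hx0 : e' ⟨0, by omega⟩ = ⟨x, mem_xB⟩ := hx' (by omega)
  refine ⟨{ toFun := fun i => if h : i.val = 0 then rt else (e' ⟨i.val - 1, by omega⟩).1
            invFun := fun w => if h : w = rt then ⟨0, by omega⟩
              else ⟨(e'.symm ⟨w, hBmem w h⟩).val + 1, by omega⟩
            left_inv := ?_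
            right_inv := ?_ }, ?_, ?_⟩
  · -- left inverse
    intro i
    dsimp only
    by_cases hi : i.val = 0
    · rw [dif_pos hi, dif_pos rfl]
      exact Fin.ext (by simp [hi])
    · rw [dif_neg hi]
      have hne : (e' ⟨i.val - 1, by omega⟩).1 ≠ rt := by
        intro h
        have hmm := (e' ⟨i.val - 1, by omega⟩).2
        rw [h] at hmm
        exact hrtB hmm
      rw [dif_neg hne]
      apply Fin.ext
      have : (⟨(e' ⟨i.val - 1, by omega⟩).1, hBmem _ hne⟩ : ↥(sideB T rt x))
          = e' ⟨i.val - 1, by omega⟩ := Subtype.ext rfl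
      rw [Fin.val_mk]
      rw [this, Equiv.symm_apply_apply]
      simp only []
      omega
  · -- right inverse
    intro w
    dsimp only
    by_cases hw : w = rt
    · rw [dif_pos hw, dif_pos rfl]
      exact hw.symm
    · rw [dif_neg hw, dif_neg (by simp)]
      have : (⟨(e'.symm ⟨w, hBmem w hw⟩).val + 1 - 1, by omega⟩ : Fin (m+1))
          = e'.symm ⟨w, hBmem w hw⟩ := Fin.ext (by simp)
      rw [this, Equiv.apply_symm_apply]
  · -- adjacency
    intro i j
    simp only [Equiv.coe_fn_mk]
    by_cases hi : i.val = 0 <;> by_cases hj : j.val = 0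
    · rw [dif_pos hi, dif_pos hj]
      have hij : i = j := Fin.ext (by omega)
      constructor
      · intro h; exact ((pathGraph (m+2)).ne_of_adj h hij).elim
      · intro h; exact absurd h (T.loopless.irrefl rt)
    · rw [dif_pos hi, dif_neg hj]
      rw [pathGraph_adj]
      constructor
      · intro h
        have hj1 : j.val = 1 := by omega
        have : (⟨j.val - 1, by omega⟩ : Fin (m+1)) = ⟨0, by omega⟩ :=
          Fin.ext (show j.val - 1 = 0 by omega)
        rw [this, hx0]
        exact hadj
      · intro h
        have := huniq _ h
        have he2 : e' ⟨j.val - 1, by omega⟩ = ⟨x, mem_xB⟩ := Subtype.ext this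
        rw [← hx0] at he2
        have := e'.injective he2
        have hj1 : j.val - 1 = 0 := congrArg Fin.val this
        omega
    · rw [dif_neg hi, dif_pos hj]
      rw [pathGraph_adj]
      constructor
      · intro h
        have hi1 : i.val = 1 := by omega
        have : (⟨i.val - 1, by omega⟩ : Fin (m+1)) = ⟨0, by omega⟩ :=
          Fin.ext (show i.val - 1 = 0 by omega)
        rw [this, hx0]
        exact hadj.symm
      · intro h
        have := huniq _ h.symm
        have he2 : e' ⟨i.val - 1, by omega⟩ = ⟨x, mem_xB⟩ := Subtype.ext this
        rw [← hx0] at he2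
        have := e'.injective he2
        have hi1 : i.val - 1 = 0 := congrArg Fin.val this
        omega
    · rw [dif_neg hi, dif_neg hj]
      have key : (pathGraph (m+2)).Adj i j ↔
          (pathGraph (m+1)).Adj ⟨i.val - 1, by omega⟩ ⟨j.val - 1, by omega⟩ := by
        rw [pathGraph_adj, pathGraph_adj]
        simp only []
        omega
      rw [key, he']
      constructor
      · intro h
        exact h
      · intro h
        exact h
  · intro h0
    simp

lemma exists_leaf (hT : T.IsTree) (h2 : 2 ≤ Nat.card VG) :
    ∃ rt x : VG, T.Adj rt x ∧ ∀ y, T.Adj rt y → y = x := by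
  classical
  have hedge := hT.card_edgeFinset
  have hsum := SimpleGraph.sum_degrees_eq_twice_card_edges T
  rw [Nat.card_eq_fintype_card] at h2
  have hex : ∃ rt : VG, T.degree rt ≤ 1 := by
    by_contra h
    push_neg at h
    have hge : 2 * Fintype.card VG ≤ ∑ v : VG, T.degree v := by
      calc 2 * Fintype.card VG = ∑ _v : VG, 2 := by
            rw [Finset.sum_const, Finset.card_univ, smul_eq_mul, mul_comm]
        _ ≤ ∑ v : VG, T.degree v := Finset.sum_le_sum (fun v _ => h v)
    omega
  obtain ⟨rt, hrt⟩ := hex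
  obtain ⟨x, hadj⟩ := exists_adj hT (by rw [Nat.card_eq_fintype_card]; omega) rt
  refine ⟨rt, x, hadj, ?_⟩
  intro y hy
  by_contra hne
  have hx : x ∈ T.neighborFinset rt := by
    rw [SimpleGraph.mem_neighborFinset]; exact hadj
  have hy' : y ∈ T.neighborFinset rt := by
    rw [SimpleGraph.mem_neighborFinset]; exact hy
  have h2' : 1 < (T.neighborFinset rt).card :=
    Finset.one_lt_card.mpr ⟨x, hx, y, hy', fun hxy => hne (hxy.symm)⟩
  rw [SimpleGraph.card_neighborFinset_eq_degree] at h2'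
  omega

end PEsec

section StrictSec

open SimpleGraph

variable {VH : Type} [Fintype VH]
variable {HAdj : VH → VH → Prop} {cls : VH → Fin 2} {v0 v1 : VH} {a b p q r s : ℕ}

theorem StrictMain (P : Pack HAdj cls v0 v1 a b p q r s) (hr : 1 ≤ r) (hq : 1 ≤ q) :
    ∀ n : ℕ, ∀ (VG : Type) [Fintype VG] (T : SimpleGraph VG) (rt : VG),
    Nat.card VG = n → T.IsTree → ¬ PE n T rt →
    ∀ z0 z1 : ℕ, 1 ≤ z0 → z0 < z1 →
      a * z0 * (ab p q r s (n-1)).1 + b * z1 * (ab p q r s (n-1)).2 + 1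
      ≤ a * z0 * cnt HAdj T rt v0 + b * z1 * cnt HAdj T rt v1 := by
  intro n
  induction n using Nat.strong_induction_on with
  | _ n IH =>
    intro VG instVG T rt hn hT hNPE z0 z1 hz0 hz
    haveI : Nonempty VG := ⟨rt⟩
    have hpos : 0 < Nat.card VG := Nat.card_pos
    rcases Nat.lt_or_ge n 2 with hn2 | hn2
    · have hn1 : n = 1 := by omega
      subst hn1
      exact absurd (PE_one hn rt) hNPE
    · obtain ⟨x, hadj⟩ := exists_adj hT (by omega) rt
      haveI instA : Fintype ↥(sideA T rt x) := Fintype.ofFinite _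
      haveI instB : Fintype ↥(sideB T rt x) := Fintype.ofFinite _
      haveI : Nonempty ↥(sideA T rt x) := ⟨⟨rt, mem_rtA⟩⟩
      haveI : Nonempty ↥(sideB T rt x) := ⟨⟨x, mem_xB⟩⟩
      set nA := Nat.card ↥(sideA T rt x) with hnA
      set nB := Nat.card ↥(sideB T rt x) with hnB
      have hsum : nA + nB = n := by rw [hnA, hnB, card_split hT hadj, hn]
      have hApos : 0 < nA := Nat.card_pos
      have hBpos : 0 < nB := Nat.card_pos
      have HB := MainW P nB ↥(sideB T rt x) (T.induce (sideB T rt x))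
        ⟨x, mem_xB⟩ rfl (sideB_tree hT hadj)
      set NA0 := cnt HAdj (T.induce (sideA T rt x)) ⟨rt, mem_rtA⟩ v0 with hNA0
      set NA1 := cnt HAdj (T.induce (sideA T rt x)) ⟨rt, mem_rtA⟩ v1 with hNA1
      set NB0 := cnt HAdj (T.induce (sideB T rt x)) ⟨x, mem_xB⟩ v0 with hNB0
      set NB1 := cnt HAdj (T.induce (sideB T rt x)) ⟨x, mem_xB⟩ v1 with hNB1
      have formula : ∀ v : VH, cnt HAdj T rt v
          = cnt HAdj (T.induce (sideA T rt x)) ⟨rt, mem_rtA⟩ v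
            * (mcl (HAdj := HAdj) cls 0 v * NB0 + mcl (HAdj := HAdj) cls 1 v * NB1) := by
        intro v
        rw [cnt_split P.hsymm hT hadj v,
          nbr_factor cls v0 v1 P.hv0 P.hv1 P.hauto (T.induce (sideB T rt x)) ⟨x, mem_xB⟩ v]
      have f0 : cnt HAdj T rt v0 = NA0 * (p * NB0 + q * NB1) := by
        rw [formula v0, P.hm00 v0 P.hv0, P.hm01 v0 P.hv0]
      have f1 : cnt HAdj T rt v1 = NA1 * (r * NB0 + s * NB1) := by
        rw [formula v1, P.hm10 v1 P.hv1, P.hm11 v1 P.hv1]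
      by_cases huniq : ∀ y, T.Adj rt y → y = x
      · -- degree-one case
        have hnA1 : nA = 1 := nA_one hT hadj huniq
        have hNB : n - 1 = nB := by omega
        have hsub : ∀ u w : ↥(sideA T rt x), u = w := fun u w =>
          Subtype.ext ((sideA_singleton huniq _ u.2).trans
            (sideA_singleton huniq _ w.2).symm)
        have f0' : cnt HAdj T rt v0 = p * NB0 + q * NB1 := by
          rw [f0, hNA0, cnt_of_subsingleton hsub, one_mul]
        have f1' : cnt HAdj T rt v1 = r * NB0 + s * NB1 := by
          rw [f1, hNA1, cnt_of_subsingleton hsub, one_mul]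
        have hNPEB : ¬ PE (n-1) (T.induce (sideB T rt x)) ⟨x, mem_xB⟩ := by
          intro hPEB
          apply hNPE
          obtain ⟨m, hm⟩ : ∃ m, n = m + 2 := ⟨n - 2, by omega⟩
          subst hm
          exact PE_glue hT hadj huniq hPEB
        have F1s := IH nB (by omega) ↥(sideB T rt x) (T.induce (sideB T rt x))
          ⟨x, mem_xB⟩ rfl (sideB_tree hT hadj) (by rw [← hNB]; exact hNPEB)
          (p+q) (r+s) (by omega) P.hd
        have F2 := HB.2 q s P.hqs
        have main := childrep_strict P.haq F1s F2 z0 z1 hz0 (le_of_lt hz)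
        rw [f0', f1']
        have hrw : n - 1 = (nB - 1) + 1 := by omega
        rw [hrw, ab1_succ, ab2_succ]
        exact main
      · -- branching case
        push_neg at huniq
        obtain ⟨y, hy, hyx⟩ := huniq
        have hyA : y ∈ sideA T rt x := by
          have hdel : (Tdel T rt x).Adj rt y := by
            rw [Tdel, SimpleGraph.deleteEdges_adj]
            refine ⟨hy, ?_⟩
            simp only [Set.mem_singleton_iff]
            intro he
            rcases Sym2.eq_iff.mp he with ⟨h1, h2⟩ | ⟨h1, h2⟩
            · exact hyx h2
            · rw [h1] at hadj; exact T.loopless.irrefl x hadj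
          exact hdel.reachable
        have hyrt : y ≠ rt := fun h => T.loopless.irrefl rt (h ▸ hy)
        have hnA2 : 2 ≤ nA := by
          have h1lt : 1 < Fintype.card ↥(sideA T rt x) :=
            Fintype.one_lt_card_iff_nontrivial.mpr
              ⟨⟨⟨rt, mem_rtA⟩, ⟨y, hyA⟩, fun hc => hyrt (congrArg Subtype.val hc).symm⟩⟩
          rw [hnA, Nat.card_eq_fintype_card]
          omega
        have HA := MainW P nA ↥(sideA T rt x) (T.induce (sideA T rt x))
          ⟨rt, mem_rtA⟩ rfl (sideA_tree hT hadj)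
        have hX01 : p * NB0 + q * NB1 ≤ r * NB0 + s * NB1 := bstep P.hqs P.hd HB.1
        rw [f0, f1]
        have hij : (nA - 1) + (nB - 1 + 1) = n - 1 := by omega
        have F1 := HB.2 (p+q) (r+s) (le_of_lt P.hd)
        have F2 := HB.2 q s P.hqs
        have hyy : z0 * (ab p q r s (nA-1)).1 ≤ z1 * (ab p q r s (nA-1)).2 :=
          Nat.mul_le_mul (le_of_lt hz) (AleB P.hqs P.hd (nA-1))
        have step1 := HA.2 (z0 * (p * NB0 + q * NB1)) (z1 * (r * NB0 + s * NB1))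
          (Nat.mul_le_mul (le_of_lt hz) hX01)
        calc a * z0 * (ab p q r s (n-1)).1 + b * z1 * (ab p q r s (n-1)).2 + 1
            = a * z0 * (ab p q r s ((nA-1) + (nB-1+1))).1
              + b * z1 * (ab p q r s ((nA-1) + (nB-1+1))).2 + 1 := by rw [hij]
          _ ≤ a * z0 * ((ab p q r s (nA-1)).1 * (ab p q r s (nB-1+1)).1)
              + b * z1 * ((ab p q r s (nA-1)).2 * (ab p q r s (nB-1+1)).2) :=
              merge_strict P.hqs P.hd P.hb1 P.haq hr (nA-1) (nB-1+1) z0 z1 hz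
                (by omega) (by omega)
          _ = a * (z0 * (ab p q r s (nA-1)).1)
                * (p * (ab p q r s (nB-1)).1 + q * (ab p q r s (nB-1)).2)
              + b * (z1 * (ab p q r s (nA-1)).2)
                * (r * (ab p q r s (nB-1)).1 + s * (ab p q r s (nB-1)).2) := by
              rw [ab1_succ, ab2_succ]; ring
          _ ≤ a * (z0 * (ab p q r s (nA-1)).1) * (p * NB0 + q * NB1)
              + b * (z1 * (ab p q r s (nA-1)).2) * (r * NB0 + s * NB1) :=
              childrep P.haq F1 F2 _ _ hyy
          _ = a * (z0 * (p * NB0 + q * NB1)) * (ab p q r s (nA-1)).1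
              + b * (z1 * (r * NB0 + s * NB1)) * (ab p q r s (nA-1)).2 := by ring
          _ ≤ a * (z0 * (p * NB0 + q * NB1)) * NA0
              + b * (z1 * (r * NB0 + s * NB1)) * NA1 := step1
          _ = a * z0 * (NA0 * (p * NB0 + q * NB1))
              + b * z1 * (NA1 * (r * NB0 + s * NB1)) := by ring

end StrictSec

end TAC

open TAC in
set_option maxHeartbeats 2000000 in
/-- **Corollary (two automorphic similarity classes).** Let `H` be a non-regular target
graph with exactly two automorphic similarity classes `H^1` (indexed `0`) and `H^2`
(indexed `1`), ordered so that the common degree of the vertices of `H^1` is smaller than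
that of the vertices of `H^2` (loops counting once). If `m_{1,2} ≤ m_{2,2}`, then `H` is
Hoffman-London; if moreover some vertex of `H` has a neighbor in `H^1` and a neighbor in
`H^2`, then `H` is strongly Hoffman-London. -/
theorem two_auto_classes
    {VH : Type} [Fintype VH]
    (HAdj : VH → VH → Prop) (hsymm : Symmetric HAdj)
    (cls : VH → Fin 2) (hsurj : Function.Surjective cls)
    (hcls : ∀ u v : VH, cls u = cls v ↔
      ∃ φ : VH ≃ VH, (∀ x y : VH, HAdj x y ↔ HAdj (φ x) (φ y)) ∧ φ u = v)
    (hnotreg : ¬ ∀ u v : VH,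
      Nat.card {w : VH // HAdj u w} = Nat.card {w : VH // HAdj v w})
    (hdeg : ∀ u v : VH, cls u = 0 → cls v = 1 →
      Nat.card {w : VH // HAdj u w} < Nat.card {w : VH // HAdj v w})
    (hm : ∀ u v : VH, cls u = 0 → cls v = 1 →
      Nat.card {w : VH // HAdj u w ∧ cls w = 1} ≤
        Nat.card {w : VH // HAdj v w ∧ cls w = 1}) :
    (∀ n : ℕ, 1 ≤ n → ∀ T : SimpleGraph (Fin n), T.IsTree →
      homCount (SimpleGraph.pathGraph n) HAdj ≤ homCount T HAdj) ∧
    ((∃ x u v : VH, HAdj x u ∧ HAdj x v ∧ cls u = 0 ∧ cls v = 1) →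
      ∀ n : ℕ, 1 ≤ n → ∀ T : SimpleGraph (Fin n), T.IsTree →
        ¬ Nonempty (T ≃g SimpleGraph.pathGraph n) →
        homCount (SimpleGraph.pathGraph n) HAdj < homCount T HAdj) := by
  classical
  obtain ⟨v0, hv0⟩ := hsurj 0
  obtain ⟨v1, hv1⟩ := hsurj 1
  have hauto : ∀ u v : VH, cls u = cls v →
      ∃ φ : VH ≃ VH, (∀ x y : VH, HAdj x y ↔ HAdj (φ x) (φ y)) ∧ φ u = v :=
    fun u v h => (hcls u v).mp h
  have hfix : ∀ (φ : VH ≃ VH), (∀ x y : VH, HAdj x y ↔ HAdj (φ x) (φ y)) →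
      ∀ w, cls (φ w) = cls w :=
    fun φ hφ w => ((hcls w (φ w)).mpr ⟨φ, hφ, rfl⟩).symm
  set a := Nat.card {v : VH // cls v = 0} with ha
  set b := Nat.card {v : VH // cls v = 1} with hb
  set p := mcl (HAdj := HAdj) cls 0 v0 with hp
  set q := mcl (HAdj := HAdj) cls 1 v0 with hq'
  set r := mcl (HAdj := HAdj) cls 0 v1 with hr'
  set s := mcl (HAdj := HAdj) cls 1 v1 with hs'
  have hm00 : ∀ v, cls v = 0 → mcl (HAdj := HAdj) cls 0 v = p :=
    fun v hv => mcl_congr cls hauto hfix 0 (by rw [hv, hv0])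
  have hm01 : ∀ v, cls v = 0 → mcl (HAdj := HAdj) cls 1 v = q :=
    fun v hv => mcl_congr cls hauto hfix 1 (by rw [hv, hv0])
  have hm10 : ∀ v, cls v = 1 → mcl (HAdj := HAdj) cls 0 v = r :=
    fun v hv => mcl_congr cls hauto hfix 0 (by rw [hv, hv1])
  have hm11 : ∀ v, cls v = 1 → mcl (HAdj := HAdj) cls 1 v = s :=
    fun v hv => mcl_congr cls hauto hfix 1 (by rw [hv, hv1])
  have ha1 : 1 ≤ a := by
    rw [ha]
    haveI : Nonempty {v : VH // cls v = 0} := ⟨⟨v0, hv0⟩⟩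
    exact Nat.card_pos
  have hb1 : 1 ≤ b := by
    rw [hb]
    haveI : Nonempty {v : VH // cls v = 1} := ⟨⟨v1, hv1⟩⟩
    exact Nat.card_pos
  have hdsplit : ∀ v : VH, Nat.card {w : VH // HAdj v w}
      = mcl (HAdj := HAdj) cls 0 v + mcl (HAdj := HAdj) cls 1 v := by
    intro v
    rw [card_split_pred (fun w => HAdj v w) (fun w => cls w = 0)]
    congr 1
    apply Nat.card_congr
    apply Equiv.subtypeEquiv (Equiv.refl VH)
    intro w
    simp only [Equiv.refl_apply]
    constructor
    · rintro ⟨h1, h2⟩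
      rcases fin2cases (cls w) with h | h
      · exact absurd h h2
      · exact ⟨h1, h⟩
    · rintro ⟨h1, h2⟩
      exact ⟨h1, by rw [h2]; exact one_ne_zero⟩
  have hd : p + q < r + s := by
    have h := hdeg v0 v1 hv0 hv1
    rw [hdsplit v0, hdsplit v1] at h
    exact h
  have hqs : q ≤ s := hm v0 v1 hv0 hv1
  have haq : a * q = b * r := by
    have hcount0 : Nat.card {uw : VH × VH //
        (cls uw.1 = 0 ∧ cls uw.2 = 1) ∧ HAdj uw.1 uw.2} = a * q := by
      rw [card_eq_sum_fibers
        (fun uw : VH × VH => (cls uw.1 = 0 ∧ cls uw.2 = 1) ∧ HAdj uw.1 uw.2)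
        (fun uw => uw.1)]
      have hfib : ∀ u : VH, Nat.card {uw : VH × VH //
          ((cls uw.1 = 0 ∧ cls uw.2 = 1) ∧ HAdj uw.1 uw.2) ∧ uw.1 = u}
          = if cls u = 0 then q else 0 := by
        intro u
        by_cases hu : cls u = 0
        · rw [if_pos hu, ← hm01 u hu]
          apply Nat.card_congr
          exact
            { toFun := fun z => ⟨z.1.2, by
                have h3 := z.2.1.2
                rw [z.2.2] at h3
                exact h3, z.2.1.1.2⟩
              invFun := fun w => ⟨(u, w.1), ⟨⟨hu, w.2.2⟩, w.2.1⟩, rfl⟩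
              left_inv := by
                rintro ⟨⟨u1, w1⟩, hz, hz2⟩
                apply Subtype.ext
                dsimp only at hz2 ⊢
                rw [hz2]
              right_inv := by
                rintro ⟨w1, hw1, hw2⟩
                rfl }
        · rw [if_neg hu]
          haveI : IsEmpty {uw : VH × VH //
              ((cls uw.1 = 0 ∧ cls uw.2 = 1) ∧ HAdj uw.1 uw.2) ∧ uw.1 = u} := by
            refine ⟨fun z => hu ?_⟩
            rw [← z.2.2]
            exact z.2.1.1.1
          exact Nat.card_of_isEmpty
      rw [Finset.sum_congr rfl (fun u _ => hfib u)]
      rw [sum_ind (fun u => cls u = 0) q, ← ha]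
    have hcount1 : Nat.card {uw : VH × VH //
        (cls uw.1 = 0 ∧ cls uw.2 = 1) ∧ HAdj uw.1 uw.2} = b * r := by
      rw [card_eq_sum_fibers
        (fun uw : VH × VH => (cls uw.1 = 0 ∧ cls uw.2 = 1) ∧ HAdj uw.1 uw.2)
        (fun uw => uw.2)]
      have hfib : ∀ w : VH, Nat.card {uw : VH × VH //
          ((cls uw.1 = 0 ∧ cls uw.2 = 1) ∧ HAdj uw.1 uw.2) ∧ uw.2 = w}
          = if cls w = 1 then r else 0 := by
        intro w
        by_cases hw : cls w = 1
        · rw [if_pos hw, ← hm10 w hw]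
          apply Nat.card_congr
          exact
            { toFun := fun z => ⟨z.1.1, by
                have h3 := z.2.1.2
                rw [z.2.2] at h3
                exact hsymm h3, z.2.1.1.1⟩
              invFun := fun u' => ⟨(u'.1, w), ⟨⟨u'.2.2, hw⟩, hsymm u'.2.1⟩, rfl⟩
              left_inv := by
                rintro ⟨⟨u1, w1⟩, hz, hz2⟩
                apply Subtype.ext
                dsimp only at hz2 ⊢
                rw [hz2]
              right_inv := by
                rintro ⟨w1, hw1, hw2⟩
                rfl }
        · rw [if_neg hw]
          haveI : IsEmpty {uw : VH × VH //
              ((cls uw.1 = 0 ∧ cls uw.2 = 1) ∧ HAdj uw.1 uw.2) ∧ uw.2 = w} := by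
            refine ⟨fun z => hw ?_⟩
            rw [← z.2.2]
            exact z.2.1.1.2
          exact Nat.card_of_isEmpty
      rw [Finset.sum_congr rfl (fun w _ => hfib w)]
      rw [sum_ind (fun w => cls w = 1) r, ← hb]
    rw [← hcount0, ← hcount1]
  have P : Pack HAdj cls v0 v1 a b p q r s :=
    ⟨hsymm, hv0, hv1, hauto, ha.symm, hb.symm, hm00, hm01, hm10, hm11,
      hqs, hd, haq, ha1, hb1⟩
  constructor
  · intro n hn T hT
    obtain ⟨m, rfl⟩ : ∃ m, n = m + 1 := ⟨n - 1, by omega⟩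
    rw [homCount_path P m]
    rw [homCount_eq_cnt cls T (0 : Fin (m+1)) v0 v1 hv0 hv1 hauto]
    have HM := MainW P (m+1) (Fin (m+1)) T (0 : Fin (m+1))
      (by simp [Nat.card_eq_fintype_card]) hT
    have hineq := HM.2 1 1 (le_refl 1)
    simp only [mul_one, one_mul, Nat.add_sub_cancel] at hineq
    rw [← ha, ← hb]
    exact hineq
  · intro hE n hn T hT hniso
    have hqr : 1 ≤ q ∧ 1 ≤ r := by
      obtain ⟨xx, u, v, hxu, hxv, hu0, hv1'⟩ := hE
      have aux : ∀ (j : Fin 2) (w : VH), HAdj xx w → cls w = j →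
          1 ≤ mcl (HAdj := HAdj) cls j xx := by
        intro j w h1 h2
        haveI : Nonempty {w : VH // HAdj xx w ∧ cls w = j} := ⟨⟨w, h1, h2⟩⟩
        exact Nat.card_pos
      rcases fin2cases (cls xx) with hx | hx
      · have hqq : 1 ≤ q := by
          rw [← hm01 xx hx]
          exact aux 1 v hxv hv1'
        have haq1 : 1 ≤ a * q := by
          calc 1 = 1 * 1 := by ring
            _ ≤ a * q := Nat.mul_le_mul ha1 hqq
        rw [haq] at haq1
        have hrr : 1 ≤ r := by
          rcases Nat.eq_zero_or_pos r with h | h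
          · rw [h, mul_zero] at haq1; omega
          · exact h
        exact ⟨hqq, hrr⟩
      · have hrr : 1 ≤ r := by
          rw [← hm10 xx hx]
          exact aux 0 u hxu hu0
        have hbr1 : 1 ≤ b * r := by
          calc 1 = 1 * 1 := by ring
            _ ≤ b * r := Nat.mul_le_mul hb1 hrr
        rw [← haq] at hbr1
        have hqq : 1 ≤ q := by
          rcases Nat.eq_zero_or_pos q with h | h
          · rw [h, mul_zero] at hbr1; omega
          · exact h
        exact ⟨hqq, hrr⟩
    obtain ⟨hq1, hr1⟩ := hqr
    rcases Nat.lt_or_ge n 2 with hn2 | hn2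
    · have hn1 : n = 1 := by omega
      subst hn1
      exact absurd (PE_iso (PE_one (by simp [Nat.card_eq_fintype_card]) (0 : Fin 1))) hniso
    · obtain ⟨m, rfl⟩ : ∃ m, n = m + 2 := ⟨n - 2, by omega⟩
      obtain ⟨rt, x, hadj, huniq⟩ := exists_leaf hT (by simp [Nat.card_eq_fintype_card])
      haveI instB : Fintype ↥(sideB T rt x) := Fintype.ofFinite _
      haveI : Nonempty ↥(sideB T rt x) := ⟨⟨x, mem_xB⟩⟩
      set NB0 := cnt HAdj (T.induce (sideB T rt x)) ⟨x, mem_xB⟩ v0 with hNB0d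
      set NB1 := cnt HAdj (T.induce (sideB T rt x)) ⟨x, mem_xB⟩ v1 with hNB1d
      have hsub : ∀ u' w' : ↥(sideA T rt x), u' = w' := fun u' w' =>
        Subtype.ext ((sideA_singleton huniq _ u'.2).trans
          (sideA_singleton huniq _ w'.2).symm)
      have formula : ∀ v : VH, cnt HAdj T rt v
          = cnt HAdj (T.induce (sideA T rt x)) ⟨rt, mem_rtA⟩ v
            * (mcl (HAdj := HAdj) cls 0 v * NB0 + mcl (HAdj := HAdj) cls 1 v * NB1) := by
        intro v
        rw [cnt_split hsymm hT hadj v,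
          nbr_factor cls v0 v1 hv0 hv1 hauto (T.induce (sideB T rt x)) ⟨x, mem_xB⟩ v]
      have f0' : cnt HAdj T rt v0 = p * NB0 + q * NB1 := by
        rw [formula v0, cnt_of_subsingleton hsub, one_mul, hm00 v0 hv0, hm01 v0 hv0]
      have f1' : cnt HAdj T rt v1 = r * NB0 + s * NB1 := by
        rw [formula v1, cnt_of_subsingleton hsub, one_mul, hm10 v1 hv1, hm11 v1 hv1]
      have hnB : Nat.card ↥(sideB T rt x) = m + 1 := by
        have h1 := card_split hT hadj
        have h2 := nA_one hT hadj huniq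
        rw [h2] at h1
        rw [Nat.card_eq_fintype_card (α := Fin (m+2)), Fintype.card_fin] at h1
        omega
      have hNPEB : ¬ PE (m+1) (T.induce (sideB T rt x)) ⟨x, mem_xB⟩ :=
        fun hPEB => hniso (PE_iso (PE_glue hT hadj huniq hPEB))
      have F := StrictMain P hr1 hq1 (m+1) ↥(sideB T rt x) (T.induce (sideB T rt x))
        ⟨x, mem_xB⟩ hnB (sideB_tree hT hadj) hNPEB (p+q) (r+s) (by omega) hd
      simp only [Nat.add_sub_cancel] at F
      have hpath : homCount (SimpleGraph.pathGraph (m+2)) HAdj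
          = a * (ab p q r s (m+1)).1 + b * (ab p q r s (m+1)).2 := homCount_path P (m+1)
      rw [hpath]
      rw [homCount_eq_cnt cls T rt v0 v1 hv0 hv1 hauto, f0', f1', ← ha, ← hb]
      have e1 : a * (p*NB0+q*NB1) + b * (r*NB0+s*NB1)
          = a*(p+q)*NB0 + b*(r+s)*NB1 := L1id haq NB0 NB1
      have e2 : a * (ab p q r s (m+1)).1 + b * (ab p q r s (m+1)).2
          = a*(p+q)*(ab p q r s m).1 + b*(r+s)*(ab p q r s m).2 := by
        rw [ab1_succ, ab2_succ]
        exact L1id haq _ _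
      rw [e1, e2]
      exact Nat.lt_of_succ_le F
end
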